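/- arXiv:1211.2864 — 4 statements merged into one kernel-verified Lean document; each statement's English description precedes it below -/
import Mathlib

section
/- For every integer a, the cardinality of S_a is equal to 0, to 2^s − 1, or to 2(2^s − 1). -/
noncomputable section

open scoped BigOperators

/-- `M = 2^{2s} + 2^s + 1`. -/
abbrev Mof (s : ℕ) : ℕ := 2 ^ (2 * s) + 2 ^ s + 1

/-- The relative trace from `F` (of order `2^{3s}`) to its subfield `E` of order `2^s`:
`Tr_{F/E}(x) = x + x^{2^s} + x^{2^{2s}}`, viewed as a map `F → F`. -/
def trFE {F : Type*} [Field F] (s : ℕ) (x : F) : F :=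
  x + x ^ (2 ^ s) + x ^ (2 ^ (2 * s))

/-- `ψ(x) = 1` if the absolute trace `Tr_{F/𝔽₂}(x) = 0`, and `-1` otherwise. -/
def psi (F : Type*) [Field F] [Algebra (ZMod 2) F] (x : F) : ℤ :=
  if Algebra.trace (ZMod 2) F x = 0 then 1 else -1

/-- `ψ(cS) = ∑_{x ∈ S} ψ(c·x)`. -/
def psiSum (F : Type*) [Field F] [Algebra (ZMod 2) F] (c : F) (S : Set F) : ℤ :=
  ∑ᶠ x ∈ S, psi F (c * x)

/-- `D = {u ∈ F^× : Tr_{F/E}(u⁻¹) = 0}`. -/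
def Dset (F : Type*) [Field F] (s : ℕ) : Set F :=
  {u | u ≠ 0 ∧ trFE s u⁻¹ = 0}

/-- `S_a = {u ∈ F^× : Tr_{F/E}(u^{2^s+1}) = 0 ∧ Tr_{F/E}(ω^a u) = 0}`. -/
def Sa {F : Type*} [Field F] (s : ℕ) (ω : F) (a : ℤ) : Set F :=
  {u | u ≠ 0 ∧ trFE s (u ^ (2 ^ s + 1)) = 0 ∧ trFE s (ω ^ a * u) = 0}

/-- `T₁ ⊆ ℤ/Mℤ`: classes `a` with `|S_a| = 2^s - 1`. -/
def T1 {F : Type*} [Field F] (s : ℕ) (ω : F) : Set (ZMod (Mof s)) :=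
  {x | (Sa s ω (x.val : ℤ)).ncard = 2 ^ s - 1}

/-- `T₂ ⊆ ℤ/Mℤ`: classes `a` with `|S_a| = 2(2^s - 1)`. -/
def T2 {F : Type*} [Field F] (s : ℕ) (ω : F) : Set (ZMod (Mof s)) :=
  {x | (Sa s ω (x.val : ℤ)).ncard = 2 * (2 ^ s - 1)}

/-- `T₃ ⊆ ℤ/Mℤ`: classes `a` with `|S_a| = 0`. -/
def T3 {F : Type*} [Field F] (s : ℕ) (ω : F) : Set (ZMod (Mof s)) :=
  {x | (Sa s ω (x.val : ℤ)).ncard = 0}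

/-- The cyclotomic class `C_i^{(M,K)} = {g^{i+Mt} : t ∈ ℤ}`. -/
def cyc {K : Type*} [Field K] (M : ℕ) (g : K) (i : ℤ) : Set K :=
  {x | ∃ t : ℤ, x = g ^ (i + (M : ℤ) * t)}

/-- `⋃_{i ∈ T} C_i^{(M,K)}` for a set `T ⊆ ℤ/Mℤ` of indices. -/
def Rclass {K : Type*} [Field K] (s : ℕ) (g : K) (T : Set (ZMod (Mof s))) : Set K :=
  ⋃ i ∈ T, cyc (Mof s) g ((i.val : ℤ))

/-- The family `R_0 = {0}`, `R_k = ⋃_{i ∈ T_k} C_i^{(M,K)}`, `k = 1, 2, 3`. -/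
def Rfam {F K : Type*} [Field F] [Field K] (s : ℕ) (ω : F) (g : K) : Fin 4 → Set K :=
  ![{0}, Rclass s g (T1 s ω), Rclass s g (T2 s ω), Rclass s g (T3 s ω)]

/-- Indicator `[P] = 1` if `P` holds, `0` otherwise. -/
def Ind (P : Prop) : ℤ := @ite ℤ P (Classical.propDecidable P) 1 0

open Polynomial

namespace S1aux

variable {F : Type*} [Field F] {s : ℕ}

lemma charTwo [Fintype F] (hF : Fintype.card F = 2 ^ (3*s)) :
    CharP F 2 := by
  have hp : (ringChar F).Prime := CharP.char_is_prime F _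
  obtain ⟨n, hn⟩ := FiniteField.card F (ringChar F)
  have h2 : ringChar F = 2 := by
    have hd : ringChar F ∣ 2 ^ (3*s) := by
      rw [← hF, hn.2]; exact dvd_pow_self _ (by positivity)
    exact (Nat.prime_dvd_prime_iff_eq hp Nat.prime_two).mp (hp.dvd_of_dvd_pow hd)
  rw [← h2]; exact ringChar.charP F

lemma trFE_eq (x : F) : trFE s x = x + x ^ (2^s) + (x ^ (2^s)) ^ (2^s) := by
  rw [trFE, ← pow_mul, two_mul, pow_add]

lemma pow_q3 [Fintype F] (hF : Fintype.card F = 2 ^ (3*s)) (x : F) :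
    ((x ^ (2^s)) ^ (2^s)) ^ (2^s) = x := by
  rw [← pow_mul, ← pow_mul]
  have h : 2^s * (2^s * 2^s) = Fintype.card F := by
    rw [hF, ← pow_add, ← pow_add]; congr 1; ring
  rw [h]; exact FiniteField.pow_card x

lemma tr_add (hadd : ∀ x y : F, (x+y)^(2^s) = x^(2^s) + y^(2^s)) (x y : F) :
    trFE s (x + y) = trFE s x + trFE s y := by
  rw [trFE_eq, trFE_eq, trFE_eq]; simp only [hadd]; ring

lemma tr_smul {l : F} (hl : l ^ (2^s) = l) (x : F) :
    trFE s (l * x) = l * trFE s x := by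
  rw [trFE_eq, trFE_eq]; simp only [mul_pow, hl]; ring

lemma tr_frob (hq3 : ∀ x : F, ((x ^ (2^s)) ^ (2^s)) ^ (2^s) = x) (x : F) :
    trFE s (x ^ (2^s)) = trFE s x := by
  rw [trFE_eq, trFE_eq, hq3]; ring

lemma tr_mem_E (hadd : ∀ x y : F, (x+y)^(2^s) = x^(2^s) + y^(2^s))
    (hq3 : ∀ x : F, ((x ^ (2^s)) ^ (2^s)) ^ (2^s) = x) (x : F) :
    (trFE s x) ^ (2^s) = trFE s x := by
  rw [trFE_eq]; simp only [hadd, hq3]; ring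

end S1aux
namespace S1aux

variable {F : Type*} [Field F] {s : ℕ}

lemma root_count (p : Polynomial F) (hp : p ≠ 0) :
    {x : F | p.eval x = 0}.ncard ≤ p.natDegree := by
  classical
  have hset : {x : F | p.eval x = 0} = ↑p.roots.toFinset := by
    ext x
    simp [Polynomial.mem_roots, hp, Polynomial.IsRoot]
  rw [hset, Set.ncard_coe_finset]
  exact le_trans (p.roots.toFinset_card_le) (Polynomial.card_roots' p)

lemma E_card_le (hs : 1 ≤ s) : ({x : F | x^(2^s) = x}).ncard ≤ 2^s := by
  classical
  have h1 : (1:ℕ) < 2^s := Nat.one_lt_two_pow_iff.mpr (by omega)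
  set p : Polynomial F := Polynomial.X^(2^s) - Polynomial.X with hp
  have hne : p ≠ 0 := by
    intro h
    have hc : p.coeff (2^s) = 1 := by
      simp only [hp, Polynomial.coeff_sub, Polynomial.coeff_X_pow, Polynomial.coeff_X,
        if_neg (by omega : ¬ (1:ℕ) = 2^s), sub_zero, if_true, eq_self_iff_true]
    rw [h] at hc
    simp at hc
  have hset : {x : F | x^(2^s) = x} = {x : F | p.eval x = 0} := by
    ext x; simp [hp, sub_eq_zero]
  have hdeg : p.natDegree ≤ 2^s := by
    refine le_trans (Polynomial.natDegree_sub_le _ _) ?_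
    simp [Polynomial.natDegree_X_pow, Polynomial.natDegree_X]; omega
  rw [hset]
  exact le_trans (root_count p hne) hdeg

lemma omega_ne_zero [Fintype F] (hF : Fintype.card F = 2 ^ (3*s)) (hs : 1 ≤ s)
    (ω : F) (hω : ∀ x : F, x ≠ 0 → ∃ n : ℕ, x = ω ^ n) : ω ≠ 0 := by
  classical
  intro h0
  have hall : ∀ x : F, x = 0 ∨ x = 1 := by
    intro x
    by_cases hx : x = 0
    · exact Or.inl hx
    · obtain ⟨n, hn⟩ := hω x hx
      cases n with
      | zero => right; simpa using hn
      | succ m => exact absurd (by rw [hn, h0, zero_pow (Nat.succ_ne_zero m)]) hx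
  have hsub : (Finset.univ : Finset F) ⊆ {0, 1} := by
    intro x _
    rcases hall x with h | h <;> simp [h]
  have hcard : Fintype.card F ≤ 2 := by
    refine le_trans (Finset.card_le_card hsub) ?_
    exact le_trans (Finset.card_insert_le _ _) (by simp)
  have h8 : (8:ℕ) ≤ 2^(3*s) := by
    calc (8:ℕ) = 2^3 := by norm_num
    _ ≤ 2^(3*s) := Nat.pow_le_pow_right (by norm_num) (by omega)
  omega

lemma E_card [Fintype F] (hF : Fintype.card F = 2 ^ (3*s)) (hs : 1 ≤ s)
    (ω : F) (hω : ∀ x : F, x ≠ 0 → ∃ n : ℕ, x = ω ^ n) :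
    ({x : F | x^(2^s) = x}).ncard = 2^s := by
  classical
  have hω0 : ω ≠ 0 := omega_ne_zero hF hs ω hω
  set ωu : Fˣ := Units.mk0 ω hω0 with hωu
  have hcycl : ∀ x : Fˣ, x ∈ Subgroup.zpowers ωu := by
    intro x
    obtain ⟨n, hn⟩ := hω x (Units.ne_zero x)
    refine ⟨(n:ℤ), ?_⟩
    ext
    push_cast
    simp [hωu, ← hn]
  have horder : orderOf ωu = 2^(3*s) - 1 := by
    rw [orderOf_eq_card_of_forall_mem_zpowers hcycl, Nat.card_eq_fintype_card,
      Fintype.card_units, hF]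
  have hq1 : (1:ℕ) ≤ 2^s := Nat.one_le_two_pow
  obtain ⟨r, hr⟩ : ∃ r, 2^s = r + 1 := ⟨2^s - 1, by omega⟩
  have hfact : 2^(3*s) - 1 = (2^s*2^s + 2^s + 1) * (2^s - 1) := by
    have h3 : 2^(3*s) = 2^s*(2^s*2^s) := by rw [← pow_add, ← pow_add]; congr 1; ring
    apply Nat.sub_eq_of_eq_add
    rw [h3, hr]
    have : r + 1 - 1 = r := rfl
    rw [this]; ring
  set η := ωu ^ (2^s*2^s + 2^s + 1) with hη
  have hMpos : 0 < 2^s*2^s + 2^s + 1 := by positivity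
  have hηord : orderOf η = 2^s - 1 := by
    rw [hη, orderOf_pow, horder, hfact,
      Nat.gcd_eq_right ⟨2^s - 1, rfl⟩, Nat.mul_div_cancel_left _ hMpos]
  set T : Set F := (fun (x:Fˣ) => (x:F)) '' ↑(Subgroup.zpowers η) with hT
  have hTcard : T.ncard = 2^s - 1 := by
    rw [hT, Set.ncard_image_of_injective _ Units.val_injective, ← Nat.card_coe_set_eq,
      SetLike.coe_sort_coe, Nat.card_zpowers, hηord]
  have hTsub : T ⊆ {x : F | x^(2^s) = x} := by
    rintro y ⟨x, hx, rfl⟩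
    obtain ⟨k, rfl⟩ := hx
    have hη1 : η ^ (2^s - 1) = 1 := by rw [← hηord]; exact pow_orderOf_eq_one η
    have hone : (η^k) ^ (2^s - 1) = 1 := by
      rw [← zpow_natCast (η^k), ← zpow_mul, mul_comm, zpow_mul, zpow_natCast, hη1, one_zpow]
    show ((η^k : Fˣ) : F) ^ (2^s) = ((η^k : Fˣ) : F)
    have h2 : 2^s = (2^s - 1) + 1 := by omega
    rw [h2, pow_succ, ← Units.val_pow_eq_pow_val, hone]
    simp
  have h0T : (0:F) ∉ T := by
    rintro ⟨x, -, hx⟩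
    exact Units.ne_zero x (by simpa using hx)
  have hins : insert (0:F) T ⊆ {x : F | x^(2^s) = x} := by
    refine Set.insert_subset ?_ hTsub
    simp [zero_pow ((by positivity : (0:ℕ) < 2^s).ne')]
  have hge : 2^s ≤ ({x : F | x^(2^s) = x}).ncard := by
    have := Set.ncard_le_ncard hins (Set.toFinite _)
    rw [Set.ncard_insert_of_notMem h0T (Set.toFinite _), hTcard] at this
    omega
  exact le_antisymm (E_card_le hs) hge

end S1aux
namespace S1aux

variable {F : Type*} [Field F] {s : ℕ}

lemma ker_card [Fintype F] (hF : Fintype.card F = 2 ^ (3*s)) (hs : 1 ≤ s)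
    (hEcard : ({x : F | x^(2^s) = x}).ncard = 2^s)
    {d : F} (hd : d ≠ 0) :
    ({x : F | trFE s (d*x) = 0}).ncard = 2^s * 2^s := by
  classical
  haveI := charTwo hF
  haveI : Fact (Nat.Prime 2) := ⟨Nat.prime_two⟩
  have hadd : ∀ x y : F, (x+y)^(2^s) = x^(2^s) + y^(2^s) := fun x y =>
    add_pow_char_pow x y 2 s
  have hq3 := pow_q3 hF
  have h2q : (2:ℕ) ≤ 2^s := by
    calc (2:ℕ) = 2^1 := by norm_num
    _ ≤ 2^s := Nat.pow_le_pow_right (by norm_num) hs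
  have hqq : (2:ℕ) ≤ 2^s*2^s := le_trans h2q (Nat.le_mul_of_pos_left _ (by omega))
  -- upper bound via polynomial
  set p : Polynomial F := Polynomial.C d * Polynomial.X
      + Polynomial.C (d^(2^s)) * Polynomial.X^(2^s)
      + Polynomial.C ((d^(2^s))^(2^s)) * Polynomial.X^(2^s*2^s) with hp
  have heval : ∀ x : F, p.eval x = trFE s (d*x) := by
    intro x
    simp only [hp, Polynomial.eval_add, Polynomial.eval_mul, Polynomial.eval_C,
      Polynomial.eval_X, Polynomial.eval_pow]
    rw [trFE_eq]
    simp only [mul_pow, pow_mul]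
  have hne : p ≠ 0 := by
    intro h
    have hc : p.coeff (2^s*2^s) = (d^(2^s))^(2^s) := by
      rw [hp, Polynomial.coeff_add, Polynomial.coeff_add, Polynomial.coeff_C_mul,
        Polynomial.coeff_C_mul, Polynomial.coeff_C_mul, Polynomial.coeff_X,
        Polynomial.coeff_X_pow, Polynomial.coeff_X_pow,
        if_neg (by omega : ¬ (1:ℕ) = 2^s*2^s),
        if_neg (by nlinarith : ¬ (2^s*2^s:ℕ) = 2^s), if_pos rfl]
      ring
    rw [h] at hc
    simp at hc
    exact hd (pow_eq_zero_iff (by omega : (2:ℕ)^s ≠ 0) |>.mp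
      (pow_eq_zero_iff (by omega : (2:ℕ)^s ≠ 0) |>.mp hc.symm))
  have hdeg : p.natDegree ≤ 2^s*2^s := by
    refine le_trans (Polynomial.natDegree_add_le _ _) (max_le ?_ ?_)
    · refine le_trans (Polynomial.natDegree_add_le _ _) (max_le ?_ ?_)
      · exact le_trans (Polynomial.natDegree_C_mul_le _ _) (by simp; omega)
      · exact le_trans (Polynomial.natDegree_C_mul_le _ _) (by simp [Polynomial.natDegree_X_pow]; nlinarith)
    · exact le_trans (Polynomial.natDegree_C_mul_le _ _) (by simp [Polynomial.natDegree_X_pow])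
  have hupper : ({x : F | trFE s (d*x) = 0}).ncard ≤ 2^s*2^s := by
    have hset : {x : F | trFE s (d*x) = 0} = {x : F | p.eval x = 0} := by
      ext x; simp [heval]
    rw [hset]
    exact le_trans (root_count p hne) hdeg
  -- lower bound via ker-range counting
  set ψ : F →+ F :=
    { toFun := fun x => trFE s (d*x)
      map_zero' := by simp [trFE, zero_pow ((by positivity : (0:ℕ) < 2^s).ne'),
        zero_pow ((by positivity : (0:ℕ) < 2^(2*s)).ne')]
      map_add' := fun x y => by
        show trFE s (d*(x+y)) = trFE s (d*x) + trFE s (d*y)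
        rw [mul_add, tr_add hadd] } with hψ
  have hcards : Nat.card F = Nat.card ψ.range * Nat.card ψ.ker := by
    rw [← Nat.card_congr (QuotientAddGroup.quotientKerEquivRange ψ).toEquiv]
    exact (AddSubgroup.card_eq_card_quotient_mul_card_addSubgroup ψ.ker)
  have hkerset : (↑ψ.ker : Set F) = {x : F | trFE s (d*x) = 0} := by
    ext x; simp [hψ, AddMonoidHom.mem_ker]
  have hK : Nat.card ψ.ker = ({x : F | trFE s (d*x) = 0}).ncard := by
    rw [← Nat.card_coe_set_eq, ← hkerset]
    rfl
  have hR : Nat.card ψ.range ≤ 2^s := by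
    have hsub : (↑ψ.range : Set F) ⊆ {x : F | x^(2^s) = x} := by
      rintro y ⟨x, rfl⟩
      exact tr_mem_E hadd hq3 (d*x)
    calc Nat.card ψ.range = (↑ψ.range : Set F).ncard := by
          rw [← Nat.card_coe_set_eq]; rfl
    _ ≤ ({x : F | x^(2^s) = x}).ncard := Set.ncard_le_ncard hsub (Set.toFinite _)
    _ = 2^s := hEcard
  have hFcard : Nat.card F = 2^s*(2^s*2^s) := by
    rw [Nat.card_eq_fintype_card, hF, ← pow_add, ← pow_add]
    congr 1; ring
  -- conclude
  set K := ({x : F | trFE s (d*x) = 0}).ncard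
  rw [hK] at hcards
  have hge : 2^s*2^s ≤ K := by
    have h1 : 2^s*(2^s*2^s) ≤ 2^s * K := by
      rw [← hFcard, hcards]
      exact Nat.mul_le_mul_right _ hR
    exact Nat.le_of_mul_le_mul_left h1 (by positivity)
  omega

end S1aux
namespace S1aux

variable {F : Type*} [Field F] {s : ℕ}

lemma span_eq [Fintype F]
    (hadd : ∀ x y : F, (x+y)^(2^s) = x^(2^s)+y^(2^s))
    (hxx : ∀ x : F, x + x = 0)
    (hEcard : ({x : F | x^(2^s) = x}).ncard = 2^s)
    {c u v : F}
    (hkercard : ({x : F | trFE s (c*x) = 0}).ncard = 2^s*2^s)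
    (hu0 : u ≠ 0) (hu : trFE s (c*u) = 0) (hv : trFE s (c*v) = 0)
    (hvu : ¬ ∃ l : F, l^(2^s) = l ∧ v = l * u) :
    ∀ w : F, trFE s (c*w) = 0 →
      ∃ l m : F, l^(2^s) = l ∧ m^(2^s) = m ∧ w = l*u + m*v := by
  classical
  have hneg : ∀ x : F, -x = x := fun x => neg_eq_of_add_eq_zero_left (hxx x)
  have hEsub : ∀ a b : F, a^(2^s) = a → b^(2^s) = b → (a-b)^(2^s) = a - b := by
    intro a b ha hb
    rw [sub_eq_add_neg, hneg, hadd, ha, hb, ← hneg b, ← sub_eq_add_neg]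
  have hEdiv : ∀ a b : F, a^(2^s) = a → b^(2^s) = b → (a/b)^(2^s) = a/b := by
    intro a b ha hb; rw [div_pow, ha, hb]
  set E : Set F := {x | x^(2^s) = x} with hE
  set P : Set F := (fun p : F × F => p.1*u + p.2*v) '' (E ×ˢ E) with hP
  have hPsub : P ⊆ {x : F | trFE s (c*x) = 0} := by
    rintro _ ⟨⟨l, m⟩, hlm, rfl⟩
    obtain ⟨hl, hm⟩ := hlm
    show trFE s (c*(l*u + m*v)) = 0
    have e1 : c*(l*u + m*v) = l*(c*u) + m*(c*v) := by ring
    rw [e1, tr_add hadd, tr_smul hl, tr_smul hm, hu, hv, mul_zero, mul_zero, add_zero]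
  have hinj : Set.InjOn (fun p : F × F => p.1*u + p.2*v) (E ×ˢ E) := by
    rintro ⟨l1, m1⟩ ⟨hl1, hm1⟩ ⟨l2, m2⟩ ⟨hl2, hm2⟩ heq
    simp only at heq hl1 hm1 hl2 hm2
    by_cases hm : m1 = m2
    · subst hm
      have h' : l1 * u = l2 * u := by linear_combination heq
      have hl : l1 = l2 := mul_right_cancel₀ hu0 h'
      simp [hl]
    · exfalso
      apply hvu
      have hmm : m2 - m1 ≠ 0 := sub_ne_zero.mpr (Ne.symm hm)
      refine ⟨(l1 - l2)/(m2 - m1), hEdiv _ _ (hEsub _ _ hl1 hl2) (hEsub _ _ hm2 hm1), ?_⟩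
      have key : (m2 - m1) * v = (l1 - l2) * u := by linear_combination -heq
      rw [div_mul_eq_mul_div, ← key, mul_div_cancel_left₀ _ hmm]
  have hPcard : P.ncard = 2^s*2^s := by
    rw [hP, Set.ncard_image_of_injOn hinj, ← Nat.card_coe_set_eq,
      Nat.card_congr (Equiv.Set.prod E E), Nat.card_prod,
      Nat.card_coe_set_eq, hEcard]
  have hPeq : P = {x : F | trFE s (c*x) = 0} := by
    apply Set.eq_of_subset_of_ncard_le hPsub
    rw [hPcard, hkercard]
  intro w hw
  have : w ∈ P := by rw [hPeq]; exact hw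
  obtain ⟨⟨l, m⟩, ⟨hl, hm⟩, hw'⟩ := this
  exact ⟨l, m, hl, hm, hw'.symm⟩

end S1aux
namespace S1aux

variable {F : Type*} [Field F] {s : ℕ}

lemma no_three_lines [Fintype F] (hF : Fintype.card F = 2 ^ (3*s)) (hs : 1 ≤ s)
    (ω : F) (hω : ∀ x : F, x ≠ 0 → ∃ n : ℕ, x = ω ^ n)
    {c u v w : F} (hc : c ≠ 0)
    (hu0 : u ≠ 0) (hQu : trFE s (u^(2^s+1)) = 0) (hHu : trFE s (c*u) = 0)
    (hv0 : v ≠ 0) (hQv : trFE s (v^(2^s+1)) = 0) (hHv : trFE s (c*v) = 0)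
    (hw0 : w ≠ 0) (hQw : trFE s (w^(2^s+1)) = 0) (hHw : trFE s (c*w) = 0)
    (hvu : ¬ ∃ l : F, l^(2^s) = l ∧ v = l * u)
    (hwu : ¬ ∃ l : F, l^(2^s) = l ∧ w = l * u)
    (hwv : ¬ ∃ l : F, l^(2^s) = l ∧ w = l * v) : False := by
  classical
  haveI := charTwo hF
  haveI : Fact (Nat.Prime 2) := ⟨Nat.prime_two⟩
  have hadd : ∀ x y : F, (x+y)^(2^s) = x^(2^s)+y^(2^s) := fun x y =>
    add_pow_char_pow x y 2 s
  have hq3 := pow_q3 hF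
  have hxx : ∀ x : F, x + x = 0 := by
    intro x
    have h2 : (2:F) = 0 := by exact_mod_cast CharP.cast_eq_zero F 2
    rw [← two_mul, h2, zero_mul]
  have hneg : ∀ x : F, -x = x := fun x => neg_eq_of_add_eq_zero_left (hxx x)
  have hsub : ∀ x y : F, (x - y)^(2^s) = x^(2^s) - y^(2^s) := by
    intro x y
    rw [sub_eq_add_neg, sub_eq_add_neg, hneg y, hneg (y^(2^s)), hadd]
  have hEcard := E_card hF hs ω hω
  have hkercard := ker_card hF hs hEcard hc
  have hspan := span_eq hadd hxx hEcard hkercard hu0 hHu hHv hvu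
  -- quadratic form expansion
  have hQexp : ∀ l m : F, l^(2^s) = l → m^(2^s) = m →
      trFE s ((l*u + m*v)^(2^s+1))
        = l*m*trFE s (u*v^(2^s) + u^(2^s)*v) := by
    intro l m hl hm
    have h1 : (l*u + m*v)^(2^s+1) = (l*u+m*v)^(2^s) * (l*u+m*v) := pow_succ _ _
    rw [h1, hadd, mul_pow, mul_pow, hl, hm]
    have h2 : (l*u^(2^s) + m*v^(2^s)) * (l*u + m*v)
        = (l*l)*(u^(2^s)*u) + ((m*m)*(v^(2^s)*v) + (l*m)*(u*v^(2^s) + u^(2^s)*v)) := by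
      ring
    have hll : (l*l)^(2^s) = l*l := by rw [mul_pow, hl]
    have hmm : (m*m)^(2^s) = m*m := by rw [mul_pow, hm]
    have hlm : (l*m)^(2^s) = l*m := by rw [mul_pow, hl, hm]
    rw [h2, tr_add hadd, tr_add hadd, tr_smul hll, tr_smul hmm, tr_smul hlm]
    have hu1 : u^(2^s)*u = u^(2^s+1) := (pow_succ u (2^s)).symm
    have hv1 : v^(2^s)*v = v^(2^s+1) := (pow_succ v (2^s)).symm
    rw [hu1, hv1, hQu, hQv, mul_zero, mul_zero, zero_add, zero_add]
  -- B(u,v) = 0 thanks to w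
  obtain ⟨l, m, hl, hm, hw⟩ := hspan w hHw
  have hl0 : l ≠ 0 := by
    rintro rfl
    exact hwv ⟨m, hm, by rw [hw]; ring⟩
  have hm0 : m ≠ 0 := by
    rintro rfl
    exact hwu ⟨l, hl, by rw [hw]; ring⟩
  have hB : trFE s (u*v^(2^s) + u^(2^s)*v) = 0 := by
    have h3 := hQexp l m hl hm
    rw [← hw, hQw] at h3
    rcases mul_eq_zero.mp h3.symm with h | h
    · exact absurd h (mul_ne_zero hl0 hm0)
    · exact h
  by_cases hc1 : trFE s (c*1) = 0
  · -- 1 ∈ H : contradiction with Q(1) = 1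
    obtain ⟨l1, m1, hl1, hm1, h1⟩ := hspan 1 hc1
    have hQ1 : trFE s ((1:F)^(2^s+1)) = 0 := by
      rw [h1, hQexp l1 m1 hl1 hm1, hB, mul_zero]
    rw [one_pow] at hQ1
    have htr1 : trFE s (1:F) = 1 := by
      rw [trFE_eq]
      simp only [one_pow]
      rw [hxx 1, zero_add]
    rw [htr1] at hQ1
    exact one_ne_zero hQ1
  · -- main case
    have hkerf : ∀ y : F, y^(2^s) + (y^(2^s))^(2^s) = 0 → y^(2^s) = y := by
      intro y hy
      have h1 : (y^(2^s))^(2^s) = y^(2^s) := by linear_combination hy - hxx (y^(2^s))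
      have h2 : y = y^(2^s) := by
        conv_lhs => rw [← hq3 y]
        rw [h1, h1]
      exact h2.symm
    have hnEH : ∀ x : F, trFE s (c*x) = 0 → x ≠ 0 → ¬ x^(2^s) = x := by
      intro x hx hx0 hE
      apply hc1
      have e : c*x = x*(c*1) := by ring
      rw [e, tr_smul hE] at hx
      rcases mul_eq_zero.mp hx with h | h
      · exact absurd h hx0
      · exact h
    set fu : F := u^(2^s) + (u^(2^s))^(2^s) with hfu
    set fv : F := v^(2^s) + (v^(2^s))^(2^s) with hfv
    have hfu0 : fu ≠ 0 := fun h => hnEH u hHu hu0 (hkerf u h)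
    have hfv0 : fv ≠ 0 := fun h => hnEH v hHv hv0 (hkerf v h)
    set e : F := fu / fv with he_def
    have he0 : e ≠ 0 := div_ne_zero hfu0 hfv0
    have hfu_eq : fu = e * fv := (div_mul_cancel₀ fu hfv0).symm
    -- e ∉ E
    have he : ¬ e^(2^s) = e := by
      intro hE
      have hfuev : (u + e*v)^(2^s) + ((u+e*v)^(2^s))^(2^s) = 0 := by
        have h4 : (u + e*v)^(2^s) + ((u+e*v)^(2^s))^(2^s)
            = fu + e*fv := by
          rw [hadd, mul_pow, hE, hadd, mul_pow, hE, hfu, hfv]; ring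
        rw [h4, ← hfu_eq, hxx]
      have hHuev : trFE s (c*(u+e*v)) = 0 := by
        have e5 : c*(u+e*v) = c*u + e*(c*v) := by ring
        rw [e5, tr_add hadd, tr_smul hE, hHu, hHv, mul_zero, add_zero]
      by_cases h0 : u + e*v = 0
      · apply hvu
        refine ⟨e⁻¹, by rw [inv_pow, hE], ?_⟩
        have : u = e*v := by linear_combination h0 - hxx (e*v)
        rw [this]
        field_simp
      · exact hnEH _ hHuev h0 (hkerf _ hfuev)
    -- H is contained in the B-kernels of fu, fv
    have htr_tw : ∀ x y : F, trFE s (x * (y^(2^s))^(2^s)) = trFE s (y * x^(2^s)) := by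
      intro x y
      have h6 : (x * (y^(2^s))^(2^s))^(2^s) = y * x^(2^s) := by
        rw [mul_pow, hq3, mul_comm]
      rw [← h6, tr_frob hq3]
    have hBH : ∀ x : F, trFE s (c*x) = 0 →
        trFE s (fu*x) = 0 ∧ trFE s (fv*x) = 0 := by
      intro x hx
      obtain ⟨a, b, ha, hb, hxab⟩ := hspan x hx
      have hfuu : trFE s (fu*u) = 0 := by
        have e7 : fu*u = u^(2^s)*u + u*(u^(2^s))^(2^s) := by rw [hfu]; ring
        rw [e7, tr_add hadd, htr_tw u u, mul_comm (u^(2^s)) u, hxx]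
      have hfvv : trFE s (fv*v) = 0 := by
        have e7 : fv*v = v^(2^s)*v + v*(v^(2^s))^(2^s) := by rw [hfv]; ring
        rw [e7, tr_add hadd, htr_tw v v, mul_comm (v^(2^s)) v, hxx]
      have hfuv : trFE s (fu*v) = 0 := by
        have e7 : fu*v = u^(2^s)*v + v*(u^(2^s))^(2^s) := by rw [hfu]; ring
        rw [e7, tr_add hadd, htr_tw v u, ← tr_add hadd,
          (by ring : u^(2^s)*v + u*v^(2^s) = u*v^(2^s) + u^(2^s)*v), hB]
      have hfvu : trFE s (fv*u) = 0 := by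
        have e7 : fv*u = v^(2^s)*u + u*(v^(2^s))^(2^s) := by rw [hfv]; ring
        rw [e7, tr_add hadd, htr_tw u v, ← tr_add hadd,
          (by ring : v^(2^s)*u + v*u^(2^s) = u*v^(2^s) + u^(2^s)*v), hB]
      constructor
      · have e9 : fu*x = a*(fu*u) + b*(fu*v) := by rw [hxab]; ring
        rw [e9, tr_add hadd, tr_smul ha, tr_smul hb, hfuu, hfuv, mul_zero, mul_zero, add_zero]
      · have e9 : fv*x = a*(fv*u) + b*(fv*v) := by rw [hxab]; ring
        rw [e9, tr_add hadd, tr_smul ha, tr_smul hb, hfvu, hfvv, mul_zero, mul_zero, add_zero]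
    have hKueq : {x : F | trFE s (c*x) = 0} = {x : F | trFE s (fu*x) = 0} := by
      have hss : {x : F | trFE s (c*x) = 0} ⊆ {x : F | trFE s (fu*x) = 0} :=
        fun x hx => (hBH x hx).1
      apply Set.eq_of_subset_of_ncard_le hss
      rw [ker_card hF hs hEcard hfu0, hkercard]
    have hKveq : {x : F | trFE s (c*x) = 0} = {x : F | trFE s (fv*x) = 0} := by
      have hss : {x : F | trFE s (c*x) = 0} ⊆ {x : F | trFE s (fv*x) = 0} :=
        fun x hx => (hBH x hx).2
      apply Set.eq_of_subset_of_ncard_le hss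
      rw [ker_card hF hs hEcard hfv0, hkercard]
    -- multiplication by e preserves H
    have heH : ∀ x : F, trFE s (c*x) = 0 → trFE s (c*(e*x)) = 0 := by
      intro x hx
      have h10 : trFE s (fu*x) = 0 := by
        have : x ∈ {x : F | trFE s (c*x) = 0} := hx
        rw [hKueq] at this
        exact this
      have h11 : trFE s (fv*(e*x)) = 0 := by
        have e12 : fv*(e*x) = fu*x := by rw [hfu_eq]; ring
        rw [e12]; exact h10
      have : e*x ∈ {x : F | trFE s (fv*x) = 0} := h11
      rw [← hKveq] at this
      exact this
    -- matrix of multiplication by e on H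
    obtain ⟨α, β, hα, hβ, heu⟩ := hspan (e*u) (heH u hHu)
    obtain ⟨γ, δ, hγ, hδ, hev⟩ := hspan (e*v) (heH v hHv)
    set A : F := α + δ with hA_def
    set D : F := α*δ - β*γ with hD_def
    have hA : A^(2^s) = A := by rw [hA_def, hadd, hα, hδ]
    have hD : D^(2^s) = D := by rw [hD_def, hsub, mul_pow, mul_pow, hα, hβ, hγ, hδ]
    have hquad : e*e = A*e - D := by
      have h13 : (e*e)*u = (A*e - D)*u := by
        calc (e*e)*u = e*(e*u) := by ring
        _ = e*(α*u + β*v) := by rw [heu]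
        _ = α*(e*u) + β*(e*v) := by ring
        _ = α*(α*u+β*v) + β*(γ*u+δ*v) := by rw [heu, hev]
        _ = (α+δ)*(α*u+β*v) - (α*δ-β*γ)*u := by ring
        _ = A*(e*u) - D*u := by rw [heu, hA_def, hD_def]
        _ = (A*e - D)*u := by ring
      exact mul_right_cancel₀ hu0 h13
    apply he
    have h5 : e^(2^s) * e^(2^s) = A * e^(2^s) - D := by
      have h14 := congrArg (· ^ (2^s)) hquad
      rw [mul_pow, hsub, mul_pow, hA, hD] at h14
      exact h14
    have h6 : (e^(2^s) - e) * (e^(2^s) + e - A) = 0 := by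
      linear_combination h5 - hquad
    rcases mul_eq_zero.mp h6 with h | h
    · exact sub_eq_zero.mp h
    · have h8 : e^(2^s) = A - e := by linear_combination h
      have h9 : (e^(2^s))^(2^s) = e := by
        rw [h8, hsub, hA, h8]; ring
      conv_rhs => rw [← hq3 e]
      rw [h9]

end S1aux
theorem statement1 (s : ℕ) (hs : 1 ≤ s) (F : Type*) [Field F] [Fintype F]
    (hF : Fintype.card F = 2 ^ (3 * s)) (ω : F)
    (hω : ∀ x : F, x ≠ 0 → ∃ n : ℕ, x = ω ^ n) :
    ∀ a : ℤ,
      (Sa s ω a).ncard = 0 ∨ (Sa s ω a).ncard = 2 ^ s - 1 ∨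
        (Sa s ω a).ncard = 2 * (2 ^ s - 1) := by
  classical
  intro a
  have hω0 : ω ≠ 0 := S1aux.omega_ne_zero hF hs ω hω
  have hc : ω ^ a ≠ 0 := zpow_ne_zero a hω0
  haveI := S1aux.charTwo hF
  haveI : Fact (Nat.Prime 2) := ⟨Nat.prime_two⟩
  have hadd : ∀ x y : F, (x+y)^(2^s) = x^(2^s)+y^(2^s) := fun x y =>
    add_pow_char_pow x y 2 s
  have hEcard := S1aux.E_card hF hs ω hω
  have hq1 : (1:ℕ) ≤ 2^s := Nat.one_le_two_pow
  -- closure of Sa under multiplication by nonzero elements of E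
  have hclosure : ∀ x, x ∈ Sa s ω a → ∀ l : F, l^(2^s) = l → l ≠ 0 →
      l*x ∈ Sa s ω a := by
    intro x hx l hl hl0
    obtain ⟨hx0, hQx, hHx⟩ := hx
    refine ⟨mul_ne_zero hl0 hx0, ?_, ?_⟩
    · have h1 : (l*x)^(2^s+1) = (l*l)*x^(2^s+1) := by
        rw [pow_succ, pow_succ, mul_pow, hl]; ring
      have hll : (l*l)^(2^s) = l*l := by rw [mul_pow, hl]
      rw [h1, S1aux.tr_smul hll, hQx, mul_zero]
    · have h2 : ω^a*(l*x) = l*(ω^a*x) := by ring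
      rw [h2, S1aux.tr_smul hl, hHx, mul_zero]
  -- cardinality of a punctured line
  have hline : ∀ x : F, x ≠ 0 →
      ({y : F | ∃ l : F, l^(2^s) = l ∧ l ≠ 0 ∧ y = l*x}).ncard = 2^s - 1 := by
    intro x hx0
    have him : {y : F | ∃ l : F, l^(2^s) = l ∧ l ≠ 0 ∧ y = l*x}
        = (fun l => l*x) '' ({l : F | l^(2^s) = l} \ {0}) := by
      ext y; constructor
      · rintro ⟨l, hl, hl0, rfl⟩; exact ⟨l, ⟨hl, hl0⟩, rfl⟩
      · rintro ⟨l, ⟨hl, hl0⟩, rfl⟩; exact ⟨l, hl, hl0, rfl⟩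
    have h0E : (0:F) ∈ {l : F | l^(2^s) = l} := by
      simp [zero_pow ((by positivity : (0:ℕ) < 2^s).ne')]
    rw [him, Set.ncard_image_of_injective _ (fun p r h => mul_right_cancel₀ hx0 h),
      Set.ncard_diff_singleton_of_mem h0E, hEcard]
  by_cases hS0 : Sa s ω a = ∅
  · left; rw [hS0, Set.ncard_empty]
  · obtain ⟨u, hu⟩ := Set.nonempty_iff_ne_empty.mpr hS0
    obtain ⟨hu0, hQu, hHu⟩ := hu
    have husa : u ∈ Sa s ω a := ⟨hu0, hQu, hHu⟩
    by_cases hone : ∀ x ∈ Sa s ω a, ∃ l : F, l^(2^s) = l ∧ x = l*u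
    · right; left
      have hSeq : Sa s ω a = {y : F | ∃ l : F, l^(2^s) = l ∧ l ≠ 0 ∧ y = l*u} := by
        ext x; constructor
        · intro hx
          obtain ⟨l, hl, hxl⟩ := hone x hx
          have hl0 : l ≠ 0 := by
            rintro rfl
            exact hx.1 (by rw [hxl, zero_mul])
          exact ⟨l, hl, hl0, hxl⟩
        · rintro ⟨l, hl, hl0, rfl⟩
          exact hclosure u husa l hl hl0
      rw [hSeq, hline u hu0]
    · push_neg at hone
      obtain ⟨v, hvsa, hvu'⟩ := hone
      obtain ⟨hv0, hQv, hHv⟩ := hvsa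
      have hvsa' : v ∈ Sa s ω a := ⟨hv0, hQv, hHv⟩
      have hvu : ¬ ∃ l : F, l^(2^s) = l ∧ v = l * u := by
        rintro ⟨l, hl, hle⟩; exact hvu' l hl hle
      right; right
      have hSeq : Sa s ω a
          = {y : F | ∃ l : F, l^(2^s) = l ∧ l ≠ 0 ∧ y = l*u}
            ∪ {y : F | ∃ l : F, l^(2^s) = l ∧ l ≠ 0 ∧ y = l*v} := by
        ext x; constructor
        · intro hx
          obtain ⟨hx0, hQx, hHx⟩ := hx
          by_cases hxu : ∃ l : F, l^(2^s) = l ∧ x = l*u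
          · left
            obtain ⟨l, hl, hxl⟩ := hxu
            have hl0 : l ≠ 0 := by rintro rfl; exact hx0 (by rw [hxl, zero_mul])
            exact ⟨l, hl, hl0, hxl⟩
          · by_cases hxv : ∃ l : F, l^(2^s) = l ∧ x = l*v
            · right
              obtain ⟨l, hl, hxl⟩ := hxv
              have hl0 : l ≠ 0 := by rintro rfl; exact hx0 (by rw [hxl, zero_mul])
              exact ⟨l, hl, hl0, hxl⟩
            · exact absurd (S1aux.no_three_lines hF hs ω hω hc hu0 hQu hHu
                hv0 hQv hHv hx0 hQx hHx hvu hxu hxv) (fun h => h)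
        · rintro (⟨l, hl, hl0, rfl⟩ | ⟨l, hl, hl0, rfl⟩)
          · exact hclosure u husa l hl hl0
          · exact hclosure v hvsa' l hl hl0
      have hdisj : Disjoint {y : F | ∃ l : F, l^(2^s) = l ∧ l ≠ 0 ∧ y = l*u}
          {y : F | ∃ l : F, l^(2^s) = l ∧ l ≠ 0 ∧ y = l*v} := by
        rw [Set.disjoint_left]
        rintro y ⟨l, hl, hl0, rfl⟩ ⟨m, hm, hm0, hmv⟩
        apply hvu
        refine ⟨l/m, by rw [div_pow, hl, hm], ?_⟩
        rw [div_mul_eq_mul_div, eq_div_iff hm0]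
        linear_combination -hmv
      rw [hSeq, Set.ncard_union_eq hdisj (Set.toFinite _) (Set.toFinite _),
        hline u hu0, hline v hv0]
      omega
end
end

section
/- For every integer a, the class of a modulo M lies in T_1 if and only if Tr_{F/E}(ω^a) = 0; that is, T_1 = {i ∈ ℤ/Mℤ : Tr_{F/E}(ω^i) = 0}. -/
noncomputable section

open scoped BigOperators

namespace St4Aux
variable {F : Type*} [Field F]

lemma charF [Fintype F] {s : ℕ} (hF : Fintype.card F = 2 ^ (3*s)) : CharP F 2 := by
  have hc := ringChar.charP F
  obtain ⟨n, hp, hcard⟩ := FiniteField.card F (ringChar F)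
  have hdvd : ringChar F ∣ 2 ^ (3*s) := by
    rw [← hF, hcard]
    exact dvd_pow_self _ n.pos.ne'
  have h2 := (Nat.prime_dvd_prime_iff_eq hp Nat.prime_two).mp (hp.dvd_of_dvd_pow hdvd)
  rwa [h2] at hc

lemma pow3' [Fintype F] {s : ℕ} (hF : Fintype.card F = 2 ^ (3*s)) (x : F) :
    x ^ (2^(3*s)) = x := by
  rw [← hF]; exact FiniteField.pow_card x

lemma pow3 [Fintype F] {s : ℕ} (hF : Fintype.card F = 2 ^ (3*s)) (x : F) :
    x ^ (2^s * 2^s * 2^s) = x := by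
  have h3s : 2^(3*s) = 2^s * 2^s * 2^s := by
    rw [show 3*s = s+s+s by ring, pow_add, pow_add]
  rw [← h3s]; exact pow3' hF x

lemma tr_eq (s : ℕ) (x : F) : trFE s x = x + x^(2^s) + x^(2^s * 2^s) := by
  rw [trFE, two_mul, pow_add]

lemma tr_add [CharP F 2] (s : ℕ) (x y : F) : trFE s (x+y) = trFE s x + trFE s y := by
  haveI := Fact.mk Nat.prime_two
  simp only [trFE, add_pow_char_pow]
  ring

lemma tr_smul (s : ℕ) {e : F} (he : e ^ (2^s) = e) (x : F) :
    trFE s (e * x) = e * trFE s x := by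
  have he2 : e ^ (2^s * 2^s) = e := by rw [pow_mul, he, he]
  simp only [tr_eq, mul_pow, he, he2]
  ring

lemma tr_fix [Fintype F] {s : ℕ} (hF : Fintype.card F = 2 ^ (3*s)) (x : F) :
    (trFE s x) ^ (2^s) = trFE s x := by
  haveI := charF hF
  haveI := Fact.mk Nat.prime_two
  simp only [tr_eq, add_pow_char_pow (p := 2) (n := s), ← pow_mul]
  rw [show 2^s*2^s*(2^s) = 2^s*2^s*2^s by ring, pow3 hF]
  ring

lemma tr_q [Fintype F] {s : ℕ} (hF : Fintype.card F = 2 ^ (3*s)) (x : F) :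
    trFE s (x^(2^s)) = trFE s x := by
  simp only [tr_eq, ← pow_mul]
  rw [show 2^s*(2^s*2^s) = 2^s*2^s*2^s by ring, pow3 hF]
  ring

lemma tr_sq [CharP F 2] (s : ℕ) (x : F) : trFE s (x^2) = (trFE s x)^2 := by
  rw [tr_eq, tr_eq, CharTwo.add_sq, CharTwo.add_sq]
  ring

lemma roots_bound [DecidableEq F] {P : Polynomial F} (hP : P ≠ 0) {n : ℕ} (hd : P.natDegree ≤ n)
    {t : Finset F} (ht : ∀ x ∈ t, P.eval x = 0) : t.card ≤ n := by
  calc t.card ≤ P.roots.toFinset.card := by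
        apply Finset.card_le_card
        intro x hx
        rw [Multiset.mem_toFinset, Polynomial.mem_roots']
        exact ⟨hP, ht x hx⟩
    _ ≤ Multiset.card P.roots := Multiset.toFinset_card_le _
    _ ≤ P.natDegree := P.card_roots'
    _ ≤ n := hd



lemma Qzero [Fintype F] {s : ℕ} (hF : Fintype.card F = 2 ^ (3*s)) {u : F} (hu : u ≠ 0) :
    trFE s (u ^ (2^s+1)) = 0 ↔ trFE s u⁻¹ = 0 := by
  have key : trFE s (u ^ (2^s+1)) = u^(2^s*2^s+2^s+1) * trFE s u⁻¹ := by
    simp only [tr_eq]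
    have e1 : (u^(2^s+1))^(2^s*2^s) = u * u^(2^s*2^s) := by
      rw [← pow_mul, show (2^s+1)*(2^s*2^s) = 2^s*2^s*2^s+2^s*2^s by ring, pow_add, pow3 hF]
    rw [e1]
    simp only [inv_pow]
    field_simp
    ring
  rw [key, mul_eq_zero]
  simp [pow_ne_zero _ hu]

lemma dir2 [Fintype F] {s : ℕ} (hs : 1 ≤ s) (hF : Fintype.card F = 2 ^ (3*s))
    {c : F} (hc : c ≠ 0) (htc : trFE s c ≠ 0) :
    {u : F | u ≠ 0 ∧ trFE s (u ^ (2^s+1)) = 0 ∧ trFE s (c * u) = 0}.ncard ≠ 2^s - 1 := by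
  classical
  haveI := charF hF
  set A : Finset F :=
    Finset.univ.filter (fun u => u ≠ 0 ∧ trFE s (u ^ (2^s+1)) = 0 ∧ trFE s (c*u) = 0) with hA
  have hmem : ∀ u : F, u ∈ A ↔ (u ≠ 0 ∧ trFE s (u ^ (2^s+1)) = 0 ∧ trFE s (c*u) = 0) := by
    intro u; simp [hA]
  have hset : {u : F | u ≠ 0 ∧ trFE s (u ^ (2^s+1)) = 0 ∧ trFE s (c * u) = 0} = ↑A := by
    ext u; simp [hmem]
  rw [hset, Set.ncard_coe_finset]
  -- involution u ↦ (c*u)⁻¹ on A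
  have g_mem : ∀ u ∈ A, (c*u)⁻¹ ∈ A := by
    intro u hu
    rw [hmem] at hu ⊢
    obtain ⟨hu0, hQ0, hcu⟩ := hu
    have hcu0 : c * u ≠ 0 := mul_ne_zero hc hu0
    refine ⟨inv_ne_zero hcu0, ?_, ?_⟩
    · rw [Qzero hF (inv_ne_zero hcu0), inv_inv]
      exact hcu
    · have : c * (c*u)⁻¹ = u⁻¹ := by field_simp
      rw [this, ← Qzero hF hu0]
      exact hQ0
  have g_nofix : ∀ u ∈ A, (c*u)⁻¹ ≠ u := by
    intro u hu hfix
    rw [hmem] at hu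
    obtain ⟨hu0, hQ0, hcu⟩ := hu
    have hcu0 : c * u ≠ 0 := mul_ne_zero hc hu0
    have h1 : c * u = u⁻¹ := by
      apply inv_injective
      rw [hfix, inv_inv]
    have h2 : (c*u)^2 = c := by
      have : (c*u)*(c*u) = u⁻¹ * (c * u) := by rw [h1]
      rw [sq, this]
      field_simp
    apply htc
    rw [← h2, tr_sq, hcu]
    exact zero_pow two_ne_zero
  have hsum : ∑ _x ∈ A, (1 : ZMod 2) = 0 := by
    apply Finset.sum_involution (g := fun u _ => (c*u)⁻¹)
    · intro a _; decide
    · intro a ha h; exact g_nofix a ha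
    · intro a ha; exact g_mem a ha
    · intro a ha
      have ha0 : a ≠ 0 := ((hmem a).mp ha).1
      have h1 : c * (c*a)⁻¹ = a⁻¹ := by field_simp
      rw [h1, inv_inv]
  rw [Finset.sum_const, nsmul_eq_mul, mul_one] at hsum
  have hdvd : (2 : ℕ) ∣ A.card := by
    rwa [ZMod.natCast_eq_zero_iff] at hsum
  intro hcard
  rw [hcard] at hdvd
  have h2 : 2 ∣ 2^s := dvd_pow_self 2 (by omega)
  have h2' : 2 ≤ 2^s := Nat.le_of_dvd (by positivity) h2
  omega

open Polynomial in
lemma dir1 [Fintype F] {s : ℕ} (hs : 1 ≤ s) (hF : Fintype.card F = 2 ^ (3*s))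
    {c : F} (hc : c ≠ 0) (htc : trFE s c = 0) :
    {u : F | u ≠ 0 ∧ trFE s (u ^ (2^s+1)) = 0 ∧ trFE s (c * u) = 0}.ncard = 2^s - 1 := by
  classical
  haveI := charF hF
  haveI := Fact.mk Nat.prime_two
  have hq2 : 2 ≤ 2^s := by
    have : (2:ℕ)^1 ≤ 2^s := Nat.pow_le_pow_right (by norm_num) hs
    simpa using this
  -- the subfield E as a finset
  set E : Finset F := Finset.univ.filter (fun x : F => x^(2^s) = x) with hE
  have hmemE : ∀ x : F, x ∈ E ↔ x^(2^s) = x := by intro x; simp [hE]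
  have hEle : E.card ≤ 2^s := by
    apply roots_bound (P := (X : F[X])^(2^s) - X) ?_ ?_
    · intro x hx
      rw [hmemE] at hx
      simp [hx]
    · intro h
      have h1 := congrArg (fun P => Polynomial.coeff P 1) h
      simp [Polynomial.coeff_X_pow, (show ¬ (1 = 2^s) by omega)] at h1
    · refine le_trans (Polynomial.natDegree_sub_le _ _) ?_
      simp [Polynomial.natDegree_X_pow, Polynomial.natDegree_X]
      omega
  -- lower bound for E via the image of x ↦ x^M
  have hmfix : ∀ x : F, (x^(2^s*2^s+2^s+1))^(2^s) = x^(2^s*2^s+2^s+1) := by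
    intro x
    rw [← pow_mul, show (2^s*2^s+2^s+1)*2^s = (2^s*2^s*2^s) + (2^s*2^s + 2^s) by ring,
      pow_add, pow3 hF]
    ring
  have hEge : 2^s ≤ E.card := by
    set m : Finset F := Finset.univ.image (fun x : F => x^(2^s*2^s+2^s+1)) with hm
    have hsubset : m ⊆ E := by
      intro x hx
      obtain ⟨y, _, rfl⟩ := Finset.mem_image.mp hx
      rw [hmemE]
      exact hmfix y
    have hfib := Finset.card_eq_sum_card_fiberwise
      (s := Finset.univ) (t := m) (f := fun x : F => x^(2^s*2^s+2^s+1))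
      (fun x _ => Finset.mem_image_of_mem _ (Finset.mem_univ x))
    have hbound : ∀ a ∈ m, (Finset.univ.filter (fun x : F => x^(2^s*2^s+2^s+1) = a)).card
        ≤ 2^s*2^s+2^s+1 := by
      intro a _
      apply roots_bound (P := (X : F[X])^(2^s*2^s+2^s+1) - C a) ?_ ?_
      · intro x hx
        rw [Finset.mem_filter] at hx
        simp [hx.2]
      · intro h
        have h1 := congrArg (fun P => Polynomial.coeff P (2^s*2^s+2^s+1)) h
        simp [Polynomial.coeff_X_pow, Polynomial.coeff_C,
          (show ¬ (2^s*2^s+2^s+1 = 0) by omega)] at h1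
      · refine le_trans (Polynomial.natDegree_sub_le _ _) ?_
        simp [Polynomial.natDegree_X_pow, Polynomial.natDegree_C]
    have hle : 2^s*2^s*2^s ≤ m.card * (2^s*2^s+2^s+1) := by
      calc 2^s*2^s*2^s = (Finset.univ : Finset F).card := by
            rw [Finset.card_univ, hF, show 3*s = s+s+s by ring, pow_add, pow_add]
        _ = ∑ a ∈ m, (Finset.univ.filter (fun x : F => x^(2^s*2^s+2^s+1) = a)).card := hfib
        _ ≤ ∑ _a ∈ m, (2^s*2^s+2^s+1) := Finset.sum_le_sum hbound
        _ = m.card * (2^s*2^s+2^s+1) := by rw [Finset.sum_const, smul_eq_mul]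
    have hmge : 2^s ≤ m.card := by
      by_contra hlt
      push_neg at hlt
      have h1 : m.card * (2^s*2^s+2^s+1) ≤ (2^s - 1) * (2^s*2^s+2^s+1) :=
        Nat.mul_le_mul_right _ (by omega)
      have hid : (2^s - 1) * (2^s*2^s+2^s+1) + 1 = 2^s*2^s*2^s := by
        obtain ⟨t, ht⟩ : ∃ t, 2^s = t+1 := ⟨2^s-1, by omega⟩
        rw [ht]
        simp only [Nat.add_sub_cancel]
        ring
      omega
    exact le_trans hmge (Finset.card_le_card hsubset)
  have hEcard : E.card = 2^s := le_antisymm hEle hEge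
  -- K : the hyperplane Tr(cu) = 0
  set K : Finset F := Finset.univ.filter (fun u : F => trFE s (c*u) = 0) with hK
  have hmemK : ∀ u : F, u ∈ K ↔ trFE s (c*u) = 0 := by intro u; simp [hK]
  have hKle : K.card ≤ 2^s*2^s := by
    have himg : (K.image (fun u => c*u)).card = K.card :=
      Finset.card_image_of_injective _ (mul_right_injective₀ hc)
    rw [← himg]
    apply roots_bound (P := (X : F[X])^(2^s*2^s) + X^(2^s) + X) ?_ ?_
    · intro y hy
      obtain ⟨u, huK, rfl⟩ := Finset.mem_image.mp hy
      rw [hmemK, tr_eq] at huK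
      simp only [Polynomial.eval_add, Polynomial.eval_pow, Polynomial.eval_X]
      linear_combination huK
    · intro h
      have h1 := congrArg (fun P => Polynomial.coeff P 1) h
      simp [Polynomial.coeff_X_pow, (show ¬ (1 = 2^s) by omega),
        (show ¬ (1 = 2^s*2^s) by nlinarith)] at h1
    · refine le_trans (Polynomial.natDegree_add_le _ _) ?_
      apply max_le ?_ (by simp [Polynomial.natDegree_X]; nlinarith)
      refine le_trans (Polynomial.natDegree_add_le _ _) ?_
      apply max_le (by simp [Polynomial.natDegree_X_pow])
      simp [Polynomial.natDegree_X_pow]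
      nlinarith
  have hKge : 2^s*2^s ≤ K.card := by
    have hfib := Finset.card_eq_sum_card_fiberwise
      (s := Finset.univ) (t := E) (f := fun u : F => trFE s (c*u))
      (fun u _ => (hmemE _).mpr (tr_fix hF _))
    have hbound : ∀ a ∈ E, (Finset.univ.filter (fun u : F => trFE s (c*u) = a)).card ≤ K.card := by
      intro a _
      rcases Finset.eq_empty_or_nonempty
        (Finset.univ.filter (fun u : F => trFE s (c*u) = a)) with h | ⟨u₀, hu₀⟩
      · simp [h]
      · rw [Finset.mem_filter] at hu₀
        apply Finset.card_le_card_of_injOn (fun u => u + u₀)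
        · intro u hu
          rw [Finset.mem_coe, Finset.mem_filter] at hu
          rw [Finset.mem_coe, hmemK, mul_add, tr_add, hu.2, hu₀.2, CharTwo.add_self_eq_zero]
        · intro a _ b _ h
          exact add_left_injective _ h
    have hle : 2^s * (2^s*2^s) ≤ 2^s * K.card := by
      calc 2^s * (2^s*2^s) = (Finset.univ : Finset F).card := by
            rw [Finset.card_univ, hF, show 3*s = s+s+s by ring, pow_add, pow_add]
            ring
        _ = ∑ a ∈ E, (Finset.univ.filter (fun u : F => trFE s (c*u) = a)).card := hfib
        _ ≤ ∑ _a ∈ E, K.card := Finset.sum_le_sum hbound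
        _ = E.card * K.card := by rw [Finset.sum_const, smul_eq_mul]
        _ = 2^s * K.card := by rw [hEcard]
    exact Nat.le_of_mul_le_mul_left hle (by positivity)
  -- pick w ∈ K \ E
  obtain ⟨w, hwK', hwE'⟩ : ∃ w ∈ K, w ∉ E := by
    by_contra h
    push_neg at h
    have := Finset.card_le_card h
    have h1 : 2^s < 2^s*2^s := by nlinarith
    omega
  have hwE : ¬ w^(2^s) = w := by rwa [hmemE] at hwE'
  have hwK : trFE s (c*w) = 0 := (hmemK w).mp hwK'
  -- E ⊆ K since Tr(c) = 0
  have hEK : ∀ x : F, x^(2^s) = x → trFE s (c*x) = 0 := by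
    intro x hx
    rw [mul_comm, tr_smul s hx c, htc, mul_zero]
  -- the span of 1 and w covers K
  have hinj : Set.InjOn (fun p : F × F => p.1 + p.2 * w) ↑(E ×ˢ E) := by
    rintro ⟨x, y⟩ hxy ⟨x', y'⟩ hxy' h
    simp only [Finset.coe_product, Set.mem_prod, Finset.mem_coe, hmemE] at hxy hxy'
    simp only at h
    by_cases hyy : y = y'
    · subst hyy
      have : x = x' := add_right_cancel h
      simp [this]
    · exfalso
      apply hwE
      have hy : y + y' ≠ 0 := by
        intro h0
        rw [← CharTwo.sub_eq_add, sub_eq_zero] at h0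
        exact hyy h0
      have h0 : (x+x') + (y+y')*w = 0 := by
        rw [show (x+x') + (y+y')*w = (x + y*w) + (x' + y'*w) by ring, h,
          CharTwo.add_self_eq_zero]
      have hxx : x + x' = (y+y')*w := by
        rw [CharTwo.add_eq_iff_eq_add] at h0
        rw [h0, zero_add]
      have hw : w = (x + x') * (y + y')⁻¹ := by
        field_simp
        linear_combination (-1 : F) * hxx
      rw [hw, mul_pow, inv_pow, add_pow_char_pow (p := 2) (n := s), hxy.1, hxy'.1,
        add_pow_char_pow (p := 2) (n := s), hxy.2, hxy'.2]
  have hSpK : (E ×ˢ E).image (fun p : F × F => p.1 + p.2 * w) ⊆ K := by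
    intro u hu
    obtain ⟨⟨x, y⟩, hxy, rfl⟩ := Finset.mem_image.mp hu
    rw [Finset.mem_product, hmemE, hmemE] at hxy
    rw [hmemK]
    simp only
    rw [mul_add, tr_add, hEK x hxy.1, show c*(y*w) = y*(c*w) by ring,
      tr_smul s hxy.2, hwK, mul_zero, add_zero]
  have hKSp : K = (E ×ˢ E).image (fun p : F × F => p.1 + p.2 * w) := by
    refine (Finset.eq_of_subset_of_card_le hSpK ?_).symm
    rw [Finset.card_image_of_injOn hinj, Finset.card_product, hEcard]
    exact hKle
  -- the square root r of Q(w)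
  set r : F := (trFE s (w^(2^s+1)))^(2^(3*s-1)) with hr
  have hr2 : r^2 = trFE s (w^(2^s+1)) := by
    rw [hr, ← pow_mul, show 2^(3*s-1)*2 = 2^(3*s) by
      rw [← pow_succ]; congr 1; omega]
    exact pow3' hF _
  have hrE : r^(2^s) = r := by
    rw [hr, ← pow_mul, mul_comm, pow_mul, tr_fix hF]
  -- the key quadratic computation
  have hkey : ∀ x y : F, x^(2^s) = x → y^(2^s) = y →
      trFE s ((x + y*w)^(2^s+1)) = (x + y*r)^2 := by
    intro x y hx hy
    have e1 : (x + y*w)^(2^s+1) = x*x + (x*y)*(w^(2^s) + w) + (y*y)*(w^(2^s)*w) := by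
      rw [pow_add, pow_one, add_pow_char_pow (p := 2) (n := s), mul_pow, hx, hy]
      ring
    have hxx : (x*x)^(2^s) = x*x := by rw [mul_pow, hx]
    have hxy2 : (x*y)^(2^s) = x*y := by rw [mul_pow, hx, hy]
    have hyy : (y*y)^(2^s) = y*y := by rw [mul_pow, hy]
    rw [e1, tr_add, tr_add]
    have h1 : trFE s (x*x) = x*x := by
      have h1' := tr_smul s hxx (1 : F)
      rw [mul_one] at h1'
      have htr1 : trFE s (1 : F) = 1 := by
        rw [tr_eq, one_pow, one_pow, CharTwo.add_self_eq_zero, zero_add]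
      rw [h1', htr1, mul_one]
    have h2 : trFE s ((x*y) * (w^(2^s) + w)) = 0 := by
      rw [tr_smul s hxy2, tr_add, tr_q hF, CharTwo.add_self_eq_zero, mul_zero]
    have h3 : trFE s ((y*y) * (w^(2^s)*w)) = (y*r)^2 := by
      rw [tr_smul s hyy, show w^(2^s)*w = w^(2^s+1) by rw [pow_add, pow_one], ← hr2]
      ring
    rw [h1, h2, h3, add_zero, CharTwo.add_sq]
    ring
  -- r + w ≠ 0
  have hrw : r + w ≠ 0 := by
    intro h0
    apply hwE
    have : r = w := by
      have h1 : r + (r + w) = w := by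
        rw [← add_assoc, CharTwo.add_self_eq_zero, zero_add]
      rw [h0, add_zero] at h1
      exact h1
    rw [← this]
    exact hrE
  -- final bijection
  set T : Finset F := (E.erase 0).image (fun y => y * (r + w)) with hT
  have hTcard : T.card = 2^s - 1 := by
    rw [hT, Finset.card_image_of_injOn (fun a _ b _ h => mul_right_cancel₀ hrw h),
      Finset.card_erase_of_mem ((hmemE 0).mpr (by rw [zero_pow (by positivity)])),
      hEcard]
  have hset : {u : F | u ≠ 0 ∧ trFE s (u^(2^s+1)) = 0 ∧ trFE s (c*u) = 0} = ↑T := by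
    ext u
    simp only [Set.mem_setOf_eq, Finset.mem_coe]
    constructor
    · rintro ⟨hu0, hQ0, hcu⟩
      have huK : u ∈ K := (hmemK u).mpr hcu
      rw [hKSp] at huK
      obtain ⟨⟨x, y⟩, hxy, rfl⟩ := Finset.mem_image.mp huK
      rw [Finset.mem_product, hmemE, hmemE] at hxy
      simp only at hu0 hQ0 hcu ⊢
      have hk := hkey x y hxy.1 hxy.2
      have hxyr : x + y*r = 0 := by
        have h2 : (x + y*r)^2 = 0 := by rw [← hk]; exact hQ0
        exact (pow_eq_zero_iff (two_ne_zero)).mp h2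
      have hxr : x = y*r := by
        have h' := congrArg (fun z => z + y*r) hxyr
        simpa [add_assoc, CharTwo.add_self_eq_zero] using h'
      have hy0 : y ≠ 0 := by
        intro hy0
        apply hu0
        rw [hxr, hy0]
        ring
      rw [hT]
      apply Finset.mem_image.mpr
      refine ⟨y, Finset.mem_erase.mpr ⟨hy0, (hmemE y).mpr hxy.2⟩, ?_⟩
      rw [hxr]
      ring
    · intro hu
      rw [hT] at hu
      obtain ⟨y, hy, rfl⟩ := Finset.mem_image.mp hu
      rw [Finset.mem_erase, hmemE] at hy
      obtain ⟨hy0, hyE⟩ := hy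
      have hyr : (y*r)^(2^s) = y*r := by rw [mul_pow, hyE, hrE]
      refine ⟨mul_ne_zero hy0 hrw, ?_, ?_⟩
      · have hk := hkey (y*r) y hyr hyE
        rw [show y*(r+w) = y*r + y*w by ring, hk, CharTwo.add_self_eq_zero]
        exact zero_pow two_ne_zero
      · have hmemSp : y*(r+w) ∈ (E ×ˢ E).image (fun p : F × F => p.1 + p.2 * w) := by
          apply Finset.mem_image.mpr
          refine ⟨(y*r, y), Finset.mem_product.mpr ⟨(hmemE _).mpr hyr, (hmemE _).mpr hyE⟩, ?_⟩
          simp only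
          ring
        exact (hmemK _).mp (hSpK hmemSp)
  rw [hset, Set.ncard_coe_finset, hTcard]

lemma main_count [Fintype F] {s : ℕ} (hs : 1 ≤ s) (hF : Fintype.card F = 2 ^ (3*s))
    {c : F} (hc : c ≠ 0) :
    ({u : F | u ≠ 0 ∧ trFE s (u ^ (2^s+1)) = 0 ∧ trFE s (c * u) = 0}.ncard = 2^s - 1)
      ↔ trFE s c = 0 := by
  constructor
  · intro h
    by_contra htc
    exact dir2 hs hF hc htc h
  · intro htc
    exact dir1 hs hF hc htc

end St4Aux

theorem statement4 (s : ℕ) (hs : 1 ≤ s) (F : Type*) [Field F] [Fintype F]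
    (hF : Fintype.card F = 2 ^ (3 * s)) (ω : F)
    (hω : ∀ x : F, x ≠ 0 → ∃ n : ℕ, x = ω ^ n) :
    ∀ a : ℤ, ((a : ZMod (Mof s)) ∈ T1 s ω ↔ trFE s (ω ^ a) = 0) := by
  classical
  intro a
  haveI := St4Aux.charF hF
  have hω0 : ω ≠ 0 := by
    intro h0
    have hsub : (Finset.univ : Finset F) ⊆ {0, 1} := by
      intro x _
      rcases eq_or_ne x 0 with rfl | hx
      · simp
      · obtain ⟨n, hn⟩ := hω x hx
        rcases Nat.eq_zero_or_pos n with rfl | hpos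
        · simp [hn]
        · rw [h0, zero_pow hpos.ne'] at hn
          exact absurd hn hx
    have h2 := Finset.card_le_card hsub
    rw [Finset.card_univ, hF] at h2
    have h3 : ({0,1} : Finset F).card ≤ 2 := (Finset.card_insert_le _ _).trans (by simp)
    have h8 : 8 ≤ 2^(3*s) := by
      calc (8:ℕ) = 2^3 := by norm_num
        _ ≤ 2^(3*s) := Nat.pow_le_pow_right (by norm_num) (by omega)
    omega
  haveI : NeZero (Mof s) := ⟨by positivity⟩
  set b : ℕ := ((a : ZMod (Mof s)).val) with hb
  have hmod : (Mof s : ℤ) ∣ (b : ℤ) - a := by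
    have hcast : ((b : ℤ) : ZMod (Mof s)) = (a : ZMod (Mof s)) := by
      rw [hb]
      push_cast
      rw [ZMod.natCast_val, ZMod.cast_id]
    have h := ((ZMod.intCast_eq_intCast_iff _ _ _).mp hcast).dvd
    exact dvd_sub_comm.mp h
  obtain ⟨k, hk⟩ := hmod
  have ha : a = (b : ℤ) + (Mof s : ℤ) * (-k) := by linarith [hk]
  -- ω^M is fixed by the q-power map
  have hMq : (ω ^ (Mof s))^(2^s) = ω ^ (Mof s) := by
    have h1 : (Mof s) = 2^s*2^s+2^s+1 := by
      rw [Mof, two_mul, pow_add]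
    rw [h1]
    rw [← pow_mul, show (2^s*2^s+2^s+1)*2^s = (2^s*2^s*2^s) + (2^s*2^s + 2^s) by ring,
      pow_add, St4Aux.pow3 hF]
    ring
  set e : F := (ω ^ (Mof s)) ^ (-k) with he
  have hM0 : (ω : F) ^ (Mof s) ≠ 0 := pow_ne_zero _ hω0
  have he0 : e ≠ 0 := zpow_ne_zero _ hM0
  have heq : e ^ (2^s) = e := by
    rw [he, ← zpow_natCast ((ω ^ (Mof s)) ^ (-k)) (2^s), ← zpow_mul, mul_comm,
      zpow_mul, zpow_natCast, hMq]
  have hfin : ω^(a : ℤ) = e * ω^((b:ℕ) : ℤ) := by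
    rw [ha, zpow_add₀ hω0, he, zpow_mul]
    simp only [zpow_natCast]
    exact mul_comm _ _
  have htr : trFE s (ω^(a:ℤ)) = e * trFE s (ω^b) := by
    rw [hfin, zpow_natCast, St4Aux.tr_smul s heq]
  have hmain := St4Aux.main_count hs hF (pow_ne_zero b hω0)
  constructor
  · intro hT
    rw [T1, Set.mem_setOf_eq] at hT
    have hSa : (Sa s ω (b : ℤ)) =
        {u : F | u ≠ 0 ∧ trFE s (u ^ (2^s+1)) = 0 ∧ trFE s ((ω^b) * u) = 0} := by
      rw [Sa]
      simp only [zpow_natCast]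
    rw [← hb] at hT
    rw [hSa] at hT
    have := hmain.mp hT
    rw [htr, this, mul_zero]
  · intro h0
    rw [htr] at h0
    have h1 : trFE s (ω^b) = 0 := by
      rcases mul_eq_zero.mp h0 with h | h
      · exact absurd h he0
      · exact h
    rw [T1, Set.mem_setOf_eq, ← hb]
    have hSa : (Sa s ω (b : ℤ)) =
        {u : F | u ≠ 0 ∧ trFE s (u ^ (2^s+1)) = 0 ∧ trFE s ((ω^b) * u) = 0} := by
      rw [Sa]
      simp only [zpow_natCast]
    rw [hSa]
    exact hmain.mpr h1
end
end

section
/- For every a ∈ ℤ/Mℤ, the number of pairs (i, j) ∈ T_1 × T_1 with i + j = a equals 1 if a ∈ T_1, equals 2 if a ∈ T_2, and equals 0 if a ∈ T_3; that is, T_1² = T_1 + 2·T_2 in the group ring ℤ[ℤ/Mℤ]. -/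
noncomputable section

open scoped BigOperators

namespace St6

def Eline {F : Type*} [Field F] (s : ℕ) (β : F) : Set F :=
  {x | ∃ lam : F, lam ^ (2^s) = lam ∧ lam ≠ 0 ∧ x = lam * β}

def Bset {F : Type*} [Field F] (s : ℕ) (c : F) : Set F :=
  {u | u ≠ 0 ∧ trFE s u = 0 ∧ trFE s (c * u⁻¹) = 0}

theorem q_ge {s : ℕ} (hs : 1 ≤ s) : 2 ≤ 2^s := by
  calc (2:ℕ) = 2^1 := by norm_num
  _ ≤ 2^s := Nat.pow_le_pow_right (by norm_num) hs

section mm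
variable {s : ℕ}
theorem M_mul : Mof s * (2^s - 1) = 2^(3*s) - 1 := by
  obtain ⟨r, hr⟩ : ∃ r, 2^s = r + 1 := ⟨2^s - 1, by have := Nat.one_le_two_pow (n := s); omega⟩
  have h2 : 2^(2*s) = (r+1)^2 := by rw [two_mul, pow_add, hr]; ring
  have h3 : 2^(3*s) = (r+1)^3 := by
    have : 3*s = s + s + s := by ring
    rw [this, pow_add, pow_add, hr]; ring
  rw [Mof, h2, h3, hr, Nat.add_sub_cancel]
  have key : ((r+1)^2 + (r+1) + 1) * r + 1 = (r+1)^3 := by ring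
  omega

end mm

section chunkBase
variable {F : Type*} [Field F] [Fintype F]

theorem char2 {s : ℕ} (hF : Fintype.card F = 2 ^ (3*s)) (hs : 1 ≤ s) : CharP F 2 := by
  obtain ⟨p, hc⟩ := CharP.exists F
  haveI := hc
  obtain ⟨n, hp, hcard⟩ := FiniteField.card F p
  have hp2 : p = 2 := by
    have hd : p ∣ 2 ^ (3*s) := by
      rw [← hF, hcard]; exact dvd_pow_self p (by positivity)
    have h2 := Nat.Prime.dvd_of_dvd_pow hp hd
    rcases (Nat.prime_two.eq_one_or_self_of_dvd p h2) with h | h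
    · exact absurd h hp.ne_one
    · exact h
  subst hp2; exact hc

omit [Fintype F] in
theorem trFE_eq {s : ℕ} (x : F) : trFE s x = x + x ^ (2^s) + (x ^ (2^s)) ^ (2^s) := by
  rw [trFE, ← pow_mul, ← pow_add, two_mul]

section s
variable {s : ℕ} (hF : Fintype.card F = 2 ^ (3*s)) (hs : 1 ≤ s)
include hF hs

theorem cube_eq (x : F) : x ^ (2^s * 2^s * 2^s) = x := by
  have h : 2 ^ s * 2^s * 2^s = 2 ^ (3*s) := by
    rw [← pow_add, ← pow_add]; ring_nf
  rw [h, ← hF, FiniteField.pow_card]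

theorem frob_add (x y : F) : (x + y) ^ (2^s) = x ^ (2^s) + y ^ (2^s) := by
  haveI := char2 hF hs
  haveI : Fact (Nat.Prime 2) := ⟨Nat.prime_two⟩
  exact add_pow_char_pow x y 2 s

theorem two_zero : (2 : F) = 0 := by
  haveI := char2 hF hs
  exact CharTwo.two_eq_zero

theorem tau_add (x y : F) : trFE s (x + y) = trFE s x + trFE s y := by
  simp only [trFE_eq, frob_add hF hs]
  ring

theorem tau_frob (x : F) : trFE s (x ^ (2^s)) = trFE s x := by
  simp only [trFE_eq, ← pow_mul]
  rw [cube_eq hF hs x]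
  ring

theorem frob_tau (x : F) : (trFE s x) ^ (2^s) = trFE s (x ^ (2^s)) := by
  rw [trFE_eq, frob_add hF hs, frob_add hF hs, trFE_eq]

theorem tau_mem (x : F) : (trFE s x) ^ (2^s) = trFE s x := by
  rw [frob_tau hF hs, tau_frob hF hs]

-- scaling by subfield elements
omit [Fintype F] hF hs in
theorem tau_smul {lam : F} (hl : lam ^ (2^s) = lam) (x : F) :
    trFE s (lam * x) = lam * trFE s x := by
  simp only [trFE_eq, mul_pow, hl]
  ring

theorem tau_sq (x : F) : trFE s (x^2) = (trFE s x)^2 := by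
  haveI := char2 hF hs
  simp only [trFE_eq, CharTwo.add_sq, ← pow_mul]
  ring

end s
end chunkBase

section chunkOrd
variable {F : Type*} [Field F] [Fintype F]
variable {s : ℕ} (hF : Fintype.card F = 2 ^ (3*s)) (hs : 1 ≤ s)
variable {ω : F} (hω : ∀ x : F, x ≠ 0 → ∃ n : ℕ, x = ω ^ n)
include hF hs hω

theorem omega_ne : ω ≠ 0 := by
  intro h
  have hsur : Function.Surjective (fun b : Bool => if b then (1:F) else 0) := by
    intro x
    by_cases hx : x = 0
    · exact ⟨false, by simp [hx]⟩
    · obtain ⟨n, hn⟩ := hω x hx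
      cases n with
      | zero => exact ⟨true, by simp [hn]⟩
      | succ m => rw [h] at hn; simp at hn; exact absurd hn hx
  have := Fintype.card_le_of_surjective _ hsur
  rw [hF] at this
  simp at this
  have : (8:ℕ) ≤ 2 ^ (3*s) := by
    calc (8:ℕ) = 2^3 := by norm_num
    _ ≤ 2 ^ (3*s) := Nat.pow_le_pow_right (by norm_num) (by omega)
  omega

theorem ord_omega : orderOf ω = 2 ^ (3*s) - 1 := by
  have h0 := omega_ne hF hs hω
  set u : Fˣ := Units.mk0 ω h0 with hu
  have hcoe : (u : F) = ω := rfl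
  have hall : ∀ x : Fˣ, x ∈ Subgroup.zpowers u := by
    intro x
    obtain ⟨n, hn⟩ := hω (x : F) (Units.ne_zero x)
    refine ⟨(n:ℤ), ?_⟩
    apply Units.ext
    show ((u ^ (n:ℤ) : Fˣ) : F) = x
    rw [zpow_natCast, Units.val_pow_eq_pow_val, hcoe, ← hn]
  have := orderOf_eq_card_of_forall_mem_zpowers hall
  have hcard : Nat.card Fˣ = 2 ^ (3*s) - 1 := by
    classical
    rw [Nat.card_eq_fintype_card, Fintype.card_units, hF]
  rw [← orderOf_units, hcoe] at this
  rw [this, hcard]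

theorem pow_omega_inj {m n : ℕ} : ω ^ m = ω ^ n ↔ m ≡ n [MOD 2^(3*s) - 1] := by
  have h0 := omega_ne hF hs hω
  set u : Fˣ := Units.mk0 ω h0 with hu
  have hcoe : (u : F) = ω := rfl
  have : ω ^ m = ω ^ n ↔ u ^ m = u ^ n := by
    constructor
    · intro h; apply Units.ext; push_cast; rw [hcoe]; exact h
    · intro h; have := congrArg (Units.val) h; push_cast at this; rwa [hcoe] at this
  rw [this, pow_eq_pow_iff_modEq]
  have hou : orderOf u = 2 ^ (3*s) - 1 := by
    have h1 := ord_omega hF hs hω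
    rw [← hcoe, orderOf_units] at h1
    exact h1
  rw [hou]

end chunkOrd

section chunkEco
variable {F : Type*} [Field F] [Fintype F]
variable {s : ℕ} (hF : Fintype.card F = 2 ^ (3*s)) (hs : 1 ≤ s)
variable {ω : F} (hω : ∀ x : F, x ≠ 0 → ∃ n : ℕ, x = ω ^ n)
include hF hs hω

theorem omegaM_mem (k : ℕ) : (ω ^ (Mof s * k)) ^ (2^s) = ω ^ (Mof s * k) := by
  rw [← pow_mul]
  rw [pow_omega_inj hF hs hω]
  have h1 : Mof s * k * 2^s - Mof s * k = (2^(3*s)-1) * k := by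
    rw [← M_mul]
    obtain ⟨r, hr⟩ : ∃ r, 2^s = r + 1 := ⟨2^s - 1, by have := Nat.one_le_two_pow (n := s); omega⟩
    rw [hr]
    have e1 : Mof s * k * (r+1) = Mof s * k * r + Mof s * k := by ring
    have e2 : Mof s * (r + 1 - 1) * k = Mof s * k * r := by simp; ring
    omega
  have hle : Mof s * k ≤ Mof s * k * 2^s := Nat.le_mul_of_pos_right _ (by positivity)
  rw [Nat.ModEq.comm, Nat.modEq_iff_dvd' hle, h1]
  exact Dvd.intro k rfl

theorem mem_Eunits {x : F} (hx0 : x ≠ 0) (hx : x ^ (2^s) = x) :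
    ∃ k < 2^s - 1, x = ω ^ (Mof s * k) := by
  obtain ⟨n, hn⟩ := hω x hx0
  have hq1 : x ^ (2^s - 1) = 1 := by
    have h1 : x ^ (2^s - 1) * x = x ^ (2^s) := by
      rw [← pow_succ]
      congr 1
      have := Nat.one_le_two_pow (n := s); omega
    rw [hx] at h1
    field_simp at h1
    exact h1
  have h2 : ω ^ (n * (2^s - 1)) = ω ^ 0 := by
    rw [pow_mul, ← hn, hq1, pow_zero]
  rw [pow_omega_inj hF hs hω] at h2
  have h3 : (2^(3*s) - 1) ∣ n * (2^s - 1) := (Nat.modEq_zero_iff_dvd).mp h2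
  rw [← M_mul] at h3
  have hq : 0 < 2^s - 1 := by have := q_ge hs; omega
  have h4 : Mof s ∣ n := by
    have := (Nat.mul_dvd_mul_iff_right hq).mp h3
    exact this
  obtain ⟨m, hm⟩ := h4
  refine ⟨m % (2^s - 1), Nat.mod_lt _ hq, ?_⟩
  rw [hn, hm]
  rw [pow_omega_inj hF hs hω, ← M_mul]
  show Mof s * m % _ = _ % _
  rw [Nat.mul_mod_mul_left, Nat.mul_mod_mul_left]
  simp [Nat.mod_mod_of_dvd]

theorem ncard_Eline {β : F} (hβ : β ≠ 0) : (Eline s β).ncard = 2^s - 1 := by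
  haveI : NeZero (2^s - 1) := ⟨by have := q_ge hs; omega⟩
  have hval_inj : ∀ j k : ℕ, j < 2^s - 1 → k < 2^s - 1 →
      ω ^ (Mof s * j) = ω ^ (Mof s * k) → j = k := by
    intro j k hj hk h
    rw [pow_omega_inj hF hs hω, ← M_mul] at h
    have hj' : Mof s * j < Mof s * (2^s - 1) := by
      apply Nat.mul_lt_mul_left (by positivity) |>.mpr hj
    have hk' : Mof s * k < Mof s * (2^s - 1) := by
      apply Nat.mul_lt_mul_left (by positivity) |>.mpr hk
    have := h
    unfold Nat.ModEq at this
    rw [Nat.mod_eq_of_lt hj', Nat.mod_eq_of_lt hk'] at this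
    exact Nat.eq_of_mul_eq_mul_left (by positivity) this
  set f : ZMod (2^s - 1) → F := fun k => ω ^ (Mof s * k.val) * β with hf
  have hinj : Function.Injective f := by
    intro j k h
    simp only [hf] at h
    have h2 := mul_right_cancel₀ hβ h
    have := hval_inj j.val k.val (ZMod.val_lt j) (ZMod.val_lt k) h2
    exact ZMod.val_injective _ this
  have himg : Eline s β = f '' Set.univ := by
    ext x
    constructor
    · rintro ⟨lam, hmem, h0, rfl⟩
      obtain ⟨k, hk, hlam⟩ := mem_Eunits hF hs hω h0 hmem
      refine ⟨(k : ZMod (2^s - 1)), trivial, ?_⟩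
      simp only [hf]
      rw [ZMod.val_cast_of_lt hk, ← hlam]
    · rintro ⟨k, -, rfl⟩
      exact ⟨ω ^ (Mof s * k.val), omegaM_mem hF hs hω _,
        pow_ne_zero _ (omega_ne hF hs hω), rfl⟩
  rw [himg, Set.ncard_image_of_injective _ hinj, Set.ncard_univ, Nat.card_zmod]

end chunkEco

section chunkGalg
variable {F : Type*} [Field F] [Fintype F]
variable {s : ℕ} (hF : Fintype.card F = 2 ^ (3*s)) (hs : 1 ≤ s)

/-- the quadratic form `g(u) = c u^q u^{q²} + c^q u u^{q²} + c^{q²} u u^q`. -/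
def gfun (s : ℕ) (c u : F) : F :=
  c * (u^(2^s) * (u^(2^s))^(2^s)) + c^(2^s) * (u * (u^(2^s))^(2^s))
    + (c^(2^s))^(2^s) * (u * u^(2^s))

include hF hs

theorem g_identity {c u : F} (hu : u ≠ 0) :
    u * u^(2^s) * (u^(2^s))^(2^s) * trFE s (c * u⁻¹) = gfun s c u := by
  have h1 : u^(2^s) ≠ 0 := pow_ne_zero _ hu
  have h2 : (u^(2^s))^(2^s) ≠ 0 := pow_ne_zero _ h1
  rw [trFE_eq, gfun, mul_pow, mul_pow, inv_pow, inv_pow]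
  field_simp

theorem hu2_of_tau {u : F} (htau : trFE s u = 0) :
    (u^(2^s))^(2^s) = u + u^(2^s) := by
  haveI := char2 hF hs
  have h2 : (2:F) = 0 := CharTwo.two_eq_zero
  rw [trFE_eq] at htau
  linear_combination htau - (u + u^(2^s)) * h2

theorem g_on_V {c u : F} (htau : trFE s u = 0) :
    gfun s c u = trFE s c * (u * u^(2^s))
      + (c * (u^(2^s) * u^(2^s)) + c^(2^s) * (u * u)) := by
  haveI := char2 hF hs
  have h2 : (2:F) = 0 := CharTwo.two_eq_zero
  have hu2 := hu2_of_tau hF hs htau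
  have htc : trFE s c = c + c^(2^s) + (c^(2^s))^(2^s) := trFE_eq c
  have hc2 : (c^(2^s))^(2^s) = trFE s c + c + c^(2^s) := by
    linear_combination (-1 : F) * htc - (c + c^(2^s)) * h2
  rw [gfun, hu2, hc2]
  linear_combination ((c + c^(2^s)) * (u * u^(2^s))) * h2

theorem g_add {c x y : F} (hx : trFE s x = 0) (hy : trFE s y = 0) :
    gfun s c (x + y) = gfun s c x + gfun s c y
      + trFE s c * (x * y^(2^s) + x^(2^s) * y) := by
  haveI := char2 hF hs
  have h2 : (2:F) = 0 := CharTwo.two_eq_zero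
  have hxy : trFE s (x + y) = 0 := by rw [tau_add hF hs, hx, hy, add_zero]
  rw [g_on_V hF hs hxy, g_on_V hF hs hx, g_on_V hF hs hy, frob_add hF hs]
  linear_combination (c * (x^(2^s) * y^(2^s)) + c^(2^s) * (x*y)) * h2

theorem g_smul {c lam u : F} (hl : lam ^ (2^s) = lam) :
    gfun s c (lam * u) = lam^2 * gfun s c u := by
  have hll : ((lam*u)^(2^s))^(2^s) = lam * (u^(2^s))^(2^s) := by
    rw [mul_pow, hl, mul_pow, hl]
  rw [gfun, hll, mul_pow, hl, gfun]
  ring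

theorem g_mem (c u : F) : (gfun s c u) ^ (2^s) = gfun s c u := by
  have e1 : ((u^(2^s))^(2^s))^(2^s) = u := by
    rw [← pow_mul, ← pow_mul, ← mul_assoc, cube_eq hF hs]
  have e2 : ((c^(2^s))^(2^s))^(2^s) = c := by
    rw [← pow_mul, ← pow_mul, ← mul_assoc, cube_eq hF hs]
  simp only [gfun]
  rw [frob_add hF hs, frob_add hF hs, mul_pow, mul_pow, mul_pow, mul_pow,
    mul_pow, e1, e2]
  ring

theorem sq_zero_iff {c x y α : F} (hα : α^2 = c) :
    c * (x * x) + c^(2^s) * (y * y) = 0 ↔ α * x = α^(2^s) * y := by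
  haveI := char2 hF hs
  have hαq : (α^(2^s))^2 = c^(2^s) := by rw [← pow_mul, mul_comm, pow_mul, hα]
  have key : c * (x * x) + c^(2^s) * (y * y) = (α * x + α^(2^s) * y)^2 := by
    rw [CharTwo.add_sq, mul_pow, mul_pow, hα, hαq]
    ring
  rw [key]
  constructor
  · intro h
    have h0 : α * x + α^(2^s) * y = 0 := by
      exact pow_eq_zero_iff (by norm_num) |>.mp h
    rw [CharTwo.add_eq_iff_eq_add, zero_add] at h0
    exact h0
  · intro h
    have : α * x + α^(2^s) * y = 0 := by
      rw [h, ← two_mul, CharTwo.two_eq_zero, zero_mul]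
    rw [this]
    ring

end chunkGalg

section chunkCases
variable {F : Type*} [Field F] [Fintype F]
variable {s : ℕ} (hF : Fintype.card F = 2 ^ (3*s)) (hs : 1 ≤ s)
variable {ω : F} (hω : ∀ x : F, x ≠ 0 → ∃ n : ℕ, x = ω ^ n)
include hF hs

/-- membership criterion for `Bset` via `gfun`. -/
theorem mem_Bset_iff {c u : F} :
    u ∈ Bset s c ↔ u ≠ 0 ∧ trFE s u = 0 ∧ gfun s c u = 0 := by
  constructor
  · rintro ⟨h0, h1, h2⟩
    refine ⟨h0, h1, ?_⟩
    rw [← g_identity hF hs h0, h2, mul_zero]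
  · rintro ⟨h0, h1, h2⟩
    refine ⟨h0, h1, ?_⟩
    have hne : u * u^(2^s) * (u^(2^s))^(2^s) ≠ 0 := by
      apply mul_ne_zero (mul_ne_zero h0 (pow_ne_zero _ h0)) (pow_ne_zero _ (pow_ne_zero _ h0))
    have := g_identity hF hs (c := c) h0
    rw [h2] at this
    exact (mul_eq_zero.mp this).resolve_left hne

/-- Case 1: if `Tr(c) = 0` then `Bset c` is a coset `α·E^×`, of size `2^s - 1`. -/
theorem Bset_case1 {ω : F} (hω : ∀ x : F, x ≠ 0 → ∃ n : ℕ, x = ω ^ n)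
    {c : F} (hc : c ≠ 0) (htc : trFE s c = 0) :
    (Bset s c).ncard = 2^s - 1 := by
  obtain ⟨α, hα⟩ : ∃ α : F, α^2 = c := by
    refine ⟨c ^ (2^(3*s - 1)), ?_⟩
    rw [← pow_mul, ← pow_succ]
    have h1 : 3*s - 1 + 1 = 3*s := by omega
    rw [h1, ← hF, FiniteField.pow_card]
  have hα0 : α ≠ 0 := by rintro rfl; rw [← hα] at hc; simp at hc
  have hτα : trFE s α = 0 := by
    have h1 : trFE s (α^2) = (trFE s α)^2 := tau_sq hF hs α
    rw [hα, htc] at h1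
    exact pow_eq_zero_iff (by norm_num) |>.mp h1.symm
  have hset : Bset s c = Eline s α := by
    ext u
    rw [mem_Bset_iff hF hs]
    constructor
    · rintro ⟨h0, h1, h2⟩
      rw [g_on_V hF hs h1, htc, zero_mul, zero_add] at h2
      have h3 : α * u^(2^s) = α^(2^s) * u := (sq_zero_iff hF hs hα).mp h2
      refine ⟨u * α⁻¹, ?_, mul_ne_zero h0 (inv_ne_zero hα0), by field_simp⟩
      rw [mul_pow, inv_pow]
      have hαq0 : α^(2^s) ≠ 0 := pow_ne_zero _ hα0
      field_simp
      linear_combination h3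
    · rintro ⟨lam, hlam, hlam0, rfl⟩
      refine ⟨mul_ne_zero hlam0 hα0, ?_, ?_⟩
      · rw [tau_smul hlam, hτα, mul_zero]
      · rw [g_smul hF hs hlam]
        have hgα : gfun s c α = 0 := by
          rw [g_on_V hF hs hτα, htc, zero_mul, zero_add]
          rw [(sq_zero_iff hF hs hα : _ ↔ α * α^(2^s) = α^(2^s) * α)]
          ring
        rw [hgα, mul_zero]
  rw [hset]
  exact ncard_Eline hF hs hω hα0

theorem card_E_le : {lam : F | lam ^ (2^s) = lam}.ncard ≤ 2^s := by
  classical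
  set P : Polynomial F := Polynomial.X^(2^s) - Polynomial.X with hP
  have hq := q_ge hs
  have hdeg : P.natDegree = 2^s := by
    rw [hP]
    compute_degree!
    · rw [if_neg (show ¬ 1 = 2^s by omega)]; norm_num
    · omega
  have hP0 : P ≠ 0 := by
    intro h
    rw [h] at hdeg
    simp at hdeg
    omega
  have hsub : {lam : F | lam ^ (2^s) = lam} ⊆ (P.roots.toFinset : Set F) := by
    intro x hx
    simp only [Set.mem_setOf_eq] at hx
    simp only [Finset.coe_sort_coe, Multiset.mem_toFinset, Finset.mem_coe]
    rw [Polynomial.mem_roots hP0]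
    simp [hP, Polynomial.IsRoot, hx]
  calc {lam : F | lam ^ (2^s) = lam}.ncard ≤ (P.roots.toFinset : Set F).ncard :=
        Set.ncard_le_ncard hsub (Set.toFinite _)
  _ = P.roots.toFinset.card := Set.ncard_coe_finset _
  _ ≤ Multiset.card P.roots := Multiset.toFinset_card_le _
  _ ≤ P.natDegree := Polynomial.card_roots' P
  _ = 2^s := hdeg

theorem fiber_le (z : F) [DecidablePred (fun y : F => y + y^(2^s) = z)] :
    (Finset.univ.filter (fun y : F => y + y^(2^s) = z)).card ≤ 2^s := by
  classical
  set P : Polynomial F := Polynomial.X^(2^s) + Polynomial.X - Polynomial.C z with hP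
  have hq := q_ge hs
  have hdeg : P.natDegree = 2^s := by
    rw [hP]
    compute_degree!
    · rw [if_neg (show ¬ 1 = 2^s by omega)]; norm_num
    · omega
  have hP0 : P ≠ 0 := by
    intro h
    rw [h] at hdeg
    simp at hdeg
    omega
  have hsub : (Finset.univ.filter (fun y : F => y + y^(2^s) = z)) ⊆ P.roots.toFinset := by
    intro x hx
    simp only [Finset.mem_filter] at hx
    rw [Multiset.mem_toFinset, Polynomial.mem_roots hP0]
    simp only [hP, Polynomial.IsRoot, Polynomial.eval_sub, Polynomial.eval_add,
      Polynomial.eval_pow, Polynomial.eval_X, Polynomial.eval_C]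
    linear_combination hx.2
  calc _ ≤ P.roots.toFinset.card := Finset.card_le_card hsub
  _ ≤ Multiset.card P.roots := Multiset.toFinset_card_le _
  _ ≤ P.natDegree := Polynomial.card_roots' P
  _ = 2^s := hdeg

/-- pigeonhole: some `v` with `Tr v = 0` avoids the full line `E·u₀`. -/
theorem exists_v (u₀ : F) :
    ∃ v : F, trFE s v = 0 ∧ ¬ (∃ lam : F, lam ^ (2^s) = lam ∧ v = lam * u₀) := by
  classical
  have htv : ∀ y : F, trFE s (y + y^(2^s)) = 0 := by
    intro y
    rw [tau_add hF hs, tau_frob hF hs]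
    have h2 : (2:F) = 0 := by
      haveI := char2 hF hs
      exact CharTwo.two_eq_zero
    linear_combination trFE s y * h2
  by_contra hcon
  push_neg at hcon
  have hmem : ∀ y : F, ∃ lam : F, lam ^ (2^s) = lam ∧ y + y^(2^s) = lam * u₀ := by
    intro y
    exact hcon (y + y^(2^s)) (htv y)
  set SE : Finset F := (Set.toFinite {lam : F | lam ^ (2^s) = lam}).toFinset with hSE
  set T : Finset F := SE.image (· * u₀) with hT
  have hcover : (Finset.univ : Finset F) ⊆ T.biUnion
      (fun z => Finset.univ.filter (fun y : F => y + y^(2^s) = z)) := by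
    intro y _
    obtain ⟨lam, hl, hly⟩ := hmem y
    rw [Finset.mem_biUnion]
    refine ⟨lam * u₀, ?_, by simp [hly]⟩
    rw [hT, Finset.mem_image]
    exact ⟨lam, by simp [hSE, hl], rfl⟩
  have hle : Fintype.card F ≤ 2^s * 2^s := by
    calc Fintype.card F = (Finset.univ : Finset F).card := rfl
    _ ≤ (T.biUnion (fun z => Finset.univ.filter (fun y : F => y + y^(2^s) = z))).card :=
        Finset.card_le_card hcover
    _ ≤ ∑ z ∈ T, (Finset.univ.filter (fun y : F => y + y^(2^s) = z)).card :=
        Finset.card_biUnion_le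
    _ ≤ ∑ _z ∈ T, 2^s := Finset.sum_le_sum (fun z _ => fiber_le hF hs z)
    _ = T.card * 2^s := by rw [Finset.sum_const, smul_eq_mul]
    _ ≤ SE.card * 2^s := by
        apply Nat.mul_le_mul_right
        exact Finset.card_image_le
    _ ≤ 2^s * 2^s := by
        apply Nat.mul_le_mul_right
        rw [hSE, ← Set.ncard_eq_toFinset_card _ (Set.toFinite _)]
        exact card_E_le hF hs
  rw [hF] at hle
  have h3 : 2^(3*s) = 2^s * 2^s * 2^s := by
    rw [show 3*s = s + s + s from by ring, pow_add, pow_add]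
  have hq := q_ge hs
  rw [h3] at hle
  have hpos : 0 < 2^s * 2^s := by positivity
  nlinarith


theorem bform_mem {x y : F} (hx : trFE s x = 0) (hy : trFE s y = 0) :
    (x * y^(2^s) + x^(2^s) * y)^(2^s) = x * y^(2^s) + x^(2^s) * y := by
  haveI := char2 hF hs
  have h2 : (2:F) = 0 := CharTwo.two_eq_zero
  rw [frob_add hF hs, mul_pow, mul_pow, hu2_of_tau hF hs hx, hu2_of_tau hF hs hy]
  linear_combination (x^(2^s) * y^(2^s)) * h2

theorem Bset_case2 {ω : F} (hω : ∀ x : F, x ≠ 0 → ∃ n : ℕ, x = ω ^ n)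
    {c : F} (htc : trFE s c ≠ 0) :
    (Bset s c).ncard ≠ 2^s - 1 := by
  haveI := char2 hF hs
  have h2 : (2:F) = 0 := CharTwo.two_eq_zero
  have hq := q_ge hs
  rcases Set.eq_empty_or_nonempty (Bset s c) with he | ⟨u₀, hu₀⟩
  · rw [he, Set.ncard_empty]; omega
  obtain ⟨h00, h01, hg0⟩ := (mem_Bset_iff hF hs).mp hu₀
  obtain ⟨v, hτv, hvnot⟩ := exists_v hF hs u₀
  have hv0 : v ≠ 0 := by
    rintro rfl
    exact hvnot ⟨0, by rw [zero_pow (by positivity)], by rw [zero_mul]⟩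
  set b := u₀ * v^(2^s) + u₀^(2^s) * v with hbdef
  have hb0 : b ≠ 0 := by
    intro h
    apply hvnot
    refine ⟨v * u₀⁻¹, ?_, by field_simp⟩
    have h3 : u₀ * v^(2^s) = u₀^(2^s) * v := by
      rw [hbdef] at h
      rw [CharTwo.add_eq_iff_eq_add, zero_add] at h
      exact h
    rw [mul_pow, inv_pow]
    have hq0 : u₀^(2^s) ≠ 0 := pow_ne_zero _ h00
    field_simp
    linear_combination h3
  have hbE : b^(2^s) = b := bform_mem hF hs h01 hτv
  have htcb : trFE s c * b ≠ 0 := mul_ne_zero htc hb0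
  set t := gfun s c v * (trFE s c * b)⁻¹ with htdef
  have htE : t^(2^s) = t := by
    rw [htdef, mul_pow, inv_pow, mul_pow, g_mem hF hs, tau_mem hF hs, hbE]
  set w := t * u₀ + v with hwdef
  have hτtu : trFE s (t * u₀) = 0 := by rw [tau_smul htE, h01, mul_zero]
  have hτw : trFE s w = 0 := by
    rw [hwdef, tau_add hF hs, hτtu, hτv, add_zero]
  have hwnot : ¬ ∃ lam : F, lam ^ (2^s) = lam ∧ w = lam * u₀ := by
    rintro ⟨lam, hl, hwl⟩
    apply hvnot
    refine ⟨lam + t, by rw [frob_add hF hs, hl, htE], ?_⟩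
    have : v = w + t * u₀ := by
      rw [hwdef]; linear_combination (-(t * u₀)) * h2
    rw [this, hwl]; ring
  have hw0 : w ≠ 0 := by
    intro h
    apply hvnot
    refine ⟨t, htE, ?_⟩
    have : v = w + t * u₀ := by rw [hwdef]; linear_combination (-(t * u₀)) * h2
    rw [this, h, zero_add]
  have hgv_eq : trFE s c * (t * u₀ * v^(2^s) + (t * u₀)^(2^s) * v) = gfun s c v := by
    rw [mul_pow, htE, htdef]
    field_simp
    ring
  have hgw : gfun s c w = 0 := by
    rw [hwdef, g_add hF hs hτtu hτv, g_smul hF hs htE, hg0, mul_zero, zero_add,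
      hgv_eq]
    linear_combination (gfun s c v) * h2
  have hwB : w ∈ Bset s c := (mem_Bset_iff hF hs).mpr ⟨hw0, hτw, hgw⟩
  have hsub : Eline s u₀ ∪ Eline s w ⊆ Bset s c := by
    rintro x (⟨lam, hl, hl0, rfl⟩ | ⟨lam, hl, hl0, rfl⟩)
    · exact (mem_Bset_iff hF hs).mpr ⟨mul_ne_zero hl0 h00,
        by rw [tau_smul hl, h01, mul_zero],
        by rw [g_smul hF hs hl, hg0, mul_zero]⟩
    · exact (mem_Bset_iff hF hs).mpr ⟨mul_ne_zero hl0 hw0,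
        by rw [tau_smul hl, hτw, mul_zero],
        by rw [g_smul hF hs hl, hgw, mul_zero]⟩
  have hdisj : Disjoint (Eline s u₀) (Eline s w) := by
    rw [Set.disjoint_left]
    rintro x ⟨lam, hl, hl0, rfl⟩ ⟨mu, hm, hm0, hx⟩
    apply hwnot
    refine ⟨lam * mu⁻¹, by rw [mul_pow, inv_pow, hl, hm], ?_⟩
    field_simp
    linear_combination (-1 : F) * hx
  have hcard : 2 * (2^s - 1) ≤ (Bset s c).ncard := by
    have h1 : (Eline s u₀ ∪ Eline s w).ncard = (2^s - 1) + (2^s - 1) := by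
      rw [Set.ncard_union_eq hdisj (Set.toFinite _) (Set.toFinite _),
        ncard_Eline hF hs hω h00, ncard_Eline hF hs hω hw0]
    calc 2 * (2^s - 1) = (2^s - 1) + (2^s - 1) := by ring
    _ = (Eline s u₀ ∪ Eline s w).ncard := h1.symm
    _ ≤ (Bset s c).ncard := Set.ncard_le_ncard hsub (Set.toFinite _)
  omega

end chunkCases

section chunkFin
variable {F : Type*} [Field F] [Fintype F]
variable {s : ℕ} (hF : Fintype.card F = 2 ^ (3*s)) (hs : 1 ≤ s)
variable {ω : F} (hω : ∀ x : F, x ≠ 0 → ∃ n : ℕ, x = ω ^ n)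
include hF hs

theorem tau_inv_iff {v : F} (hv : v ≠ 0) :
    trFE s (v ^ (2^s + 1)) = 0 ↔ trFE s v⁻¹ = 0 := by
  have hB : v^(2^s) ≠ 0 := pow_ne_zero _ hv
  have hC : (v^(2^s))^(2^s) ≠ 0 := pow_ne_zero _ hB
  have hcube : ((v^(2^s))^(2^s))^(2^s) = v := by
    rw [← pow_mul, ← pow_mul, ← mul_assoc, cube_eq hF hs]
  have key : trFE s (v ^ (2^s + 1))
      = (v * v^(2^s) * (v^(2^s))^(2^s)) * trFE s v⁻¹ := by
    have h1 : v^(2^s + 1) = v^(2^s) * v := by rw [pow_succ]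
    rw [trFE_eq (v^(2^s+1)), h1, mul_pow, mul_pow, trFE_eq v⁻¹, inv_pow, inv_pow,
      hcube]
    field_simp
    ring
  rw [key, mul_eq_zero]
  constructor
  · rintro (h | h)
    · exact absurd h (mul_ne_zero (mul_ne_zero hv hB) hC)
    · exact h
  · exact Or.inr

theorem Sa_eq (a : ZMod (Mof s)) :
    Sa s ω ((a.val : ℕ) : ℤ) = (·⁻¹) '' (Bset s (ω ^ a.val)) := by
  ext v
  simp only [Sa, Set.mem_setOf_eq, zpow_natCast, Set.mem_image]
  constructor
  · rintro ⟨h0, h1, h2⟩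
    refine ⟨v⁻¹, ⟨inv_ne_zero h0, ?_, ?_⟩, inv_inv v⟩
    · exact (tau_inv_iff hF hs h0).mp h1
    · rwa [inv_inv]
  · rintro ⟨u, ⟨h0, h1, h2⟩, rfl⟩
    refine ⟨inv_ne_zero h0, ?_, ?_⟩
    · rw [tau_inv_iff hF hs (inv_ne_zero h0), inv_inv]
      exact h1
    · exact h2

theorem ncard_Sa (a : ZMod (Mof s)) :
    (Sa s ω ((a.val : ℕ) : ℤ)).ncard = (Bset s (ω ^ a.val)).ncard := by
  rw [Sa_eq hF hs, Set.ncard_image_of_injective _ inv_injective]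

include hω in
theorem T1_iff (a : ZMod (Mof s)) : a ∈ T1 s ω ↔ trFE s (ω ^ a.val) = 0 := by
  have hc : ω ^ a.val ≠ 0 := pow_ne_zero _ (omega_ne hF hs hω)
  constructor
  · intro h
    by_contra htc
    exact Bset_case2 hF hs hω htc (by rw [← ncard_Sa hF hs]; exact h)
  · intro htc
    show (Sa s ω ((a.val : ℕ) : ℤ)).ncard = 2^s - 1
    rw [ncard_Sa hF hs]
    exact Bset_case1 hF hs hω hc htc

include hω in
theorem tau_first (i : ZMod (Mof s)) (k : ℕ) :
    trFE s (ω ^ (i.val + Mof s * k)) = 0 ↔ trFE s (ω ^ i.val) = 0 := by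
  have hlam : (ω ^ (Mof s * k)) ^ (2^s) = ω ^ (Mof s * k) := omegaM_mem hF hs hω k
  have hlam0 : ω ^ (Mof s * k) ≠ 0 := pow_ne_zero _ (omega_ne hF hs hω)
  rw [pow_add, mul_comm (ω ^ i.val), tau_smul hlam, mul_eq_zero]
  constructor
  · rintro (h | h)
    · exact absurd h hlam0
    · exact h
  · exact Or.inr

include hω in
theorem tau_second (a i : ZMod (Mof s)) (k : ℕ) :
    trFE s (ω ^ a.val * (ω ^ (i.val + Mof s * k))⁻¹) = 0
      ↔ trFE s (ω ^ ((a - i).val)) = 0 := by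
  haveI : NeZero (Mof s) := ⟨by positivity⟩
  set d := (a - i).val with hd
  have hmod : (d + i.val) % Mof s = a.val := by
    have h1 : ((a - i) + i) = a := by ring
    have h2 := ZMod.val_add (a - i) i
    rw [h1] at h2
    exact h2.symm
  obtain ⟨e, he⟩ : ∃ e : ℕ, d + i.val = a.val + Mof s * e := by
    refine ⟨(d + i.val) / Mof s, ?_⟩
    conv_lhs => rw [← Nat.mod_add_div (d + i.val) (Mof s), hmod]
  have hωe : ω ^ d * ω ^ i.val = ω ^ a.val * ω ^ (Mof s * e) := by
    rw [← pow_add, ← pow_add, he]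
  have hi0 : ω ^ i.val ≠ 0 := pow_ne_zero _ (omega_ne hF hs hω)
  have hMk0 : ω ^ (Mof s * k) ≠ 0 := pow_ne_zero _ (omega_ne hF hs hω)
  have hMe0 : ω ^ (Mof s * e) ≠ 0 := pow_ne_zero _ (omega_ne hF hs hω)
  have gen : ∀ A Iv X Y D : F, Iv ≠ 0 → X ≠ 0 → Y ≠ 0 → D * Iv = A * Y →
      A * (Iv * X)⁻¹ = (X⁻¹ * Y⁻¹) * D := by
    intro A Iv X Y D hIv hX hY hDY
    field_simp
    linear_combination (-1 : F) * hDY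
  set mu := ((ω ^ (Mof s * k))⁻¹ * (ω ^ (Mof s * e))⁻¹) with hmu
  have hmuE : mu ^ (2^s) = mu := by
    rw [hmu, mul_pow, inv_pow, inv_pow, omegaM_mem hF hs hω, omegaM_mem hF hs hω]
  have hmu0 : mu ≠ 0 := mul_ne_zero (inv_ne_zero hMk0) (inv_ne_zero hMe0)
  have hkey : ω ^ a.val * (ω ^ (i.val + Mof s * k))⁻¹ = mu * ω ^ d := by
    rw [pow_add, hmu]
    exact gen _ _ _ _ _ hi0 hMk0 hMe0 hωe
  rw [hkey, tau_smul hmuE, mul_eq_zero]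
  constructor
  · rintro (h | h)
    · exact absurd h hmu0
    · exact h
  · exact Or.inr

omit hF hs in
theorem ncard_prod {A B : Type*} (s : Set A) (t : Set B) :
    (s ×ˢ t).ncard = s.ncard * t.ncard := by
  rw [← Nat.card_coe_set_eq, Nat.card_congr (Equiv.Set.prod s t), Nat.card_prod,
    Nat.card_coe_set_eq, Nat.card_coe_set_eq]

include hω in
theorem main_count (a : ZMod (Mof s)) :
    (Bset s (ω ^ a.val)).ncard
      = ({i : ZMod (Mof s) | trFE s (ω ^ i.val) = 0
          ∧ trFE s (ω ^ ((a - i).val)) = 0}).ncard * (2^s - 1) := by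
  haveI : NeZero (2^s - 1) := ⟨by have := q_ge hs; omega⟩
  haveI : NeZero (Mof s) := ⟨by positivity⟩
  have hMpos : 0 < Mof s := Nat.pos_of_ne_zero (NeZero.ne _)
  set I : Set (ZMod (Mof s)) := {i : ZMod (Mof s) | trFE s (ω ^ i.val) = 0
          ∧ trFE s (ω ^ ((a - i).val)) = 0} with hI
  set Ψ : ZMod (Mof s) × ZMod (2^s - 1) → F :=
    fun p => ω ^ (p.1.val + Mof s * p.2.val) with hΨ
  have hbound : ∀ p : ZMod (Mof s) × ZMod (2^s - 1),
      p.1.val + Mof s * p.2.val < Mof s * (2^s - 1) := by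
    intro p
    have h1 := ZMod.val_lt p.1
    have h2 : p.2.val ≤ 2^s - 1 - 1 := by have := ZMod.val_lt p.2; omega
    have h3 : Mof s * p.2.val ≤ Mof s * (2^s - 1 - 1) := Nat.mul_le_mul_left _ h2
    have h4 : Mof s * (2^s - 1 - 1) + Mof s = Mof s * (2^s - 1) := by
      rw [← Nat.mul_succ]
      congr 1
      have := q_ge hs
      omega
    omega
  have hinj : Function.Injective Ψ := by
    intro p q h
    simp only [hΨ] at h
    rw [pow_omega_inj hF hs hω, ← M_mul] at h
    have heq : p.1.val + Mof s * p.2.val = q.1.val + Mof s * q.2.val := by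
      unfold Nat.ModEq at h
      rwa [Nat.mod_eq_of_lt (hbound p), Nat.mod_eq_of_lt (hbound q)] at h
    have e1 := Nat.add_mul_mod_self_left p.1.val (Mof s) p.2.val
    have e2 := Nat.add_mul_mod_self_left q.1.val (Mof s) q.2.val
    have h1 : p.1.val = q.1.val := by
      rw [Nat.mod_eq_of_lt (ZMod.val_lt p.1)] at e1
      rw [Nat.mod_eq_of_lt (ZMod.val_lt q.1)] at e2
      rw [← e1, ← e2, heq]
    have h2 : p.2.val = q.2.val := by
      have h3 : Mof s * p.2.val = Mof s * q.2.val := by omega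
      exact Nat.eq_of_mul_eq_mul_left hMpos h3
    exact Prod.ext (ZMod.val_injective _ h1) (ZMod.val_injective _ h2)
  have himg : Bset s (ω ^ a.val) = Ψ '' (I ×ˢ Set.univ) := by
    ext u
    constructor
    · rintro ⟨hu0, hτu, hτcu⟩
      obtain ⟨n, hn⟩ := hω u hu0
      set N := Mof s * (2^s - 1) with hN
      have hNpos : 0 < N := by
        have h5 := q_ge hs
        have h6 : (0:ℕ) < 2^s - 1 := by omega
        rw [hN]
        exact Nat.mul_pos hMpos h6
      have hNord : ω ^ N = 1 := by
        rw [hN, M_mul, ← ord_omega hF hs hω]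
        exact pow_orderOf_eq_one ω
      have hur : u = ω ^ (n % N) := by
        conv_lhs => rw [hn, ← Nat.mod_add_div n N]
        rw [pow_add, pow_mul, hNord, one_pow, mul_one]
      set r := n % N with hr
      set i0 := r % Mof s with hi0
      set k0 := r / Mof s with hk0
      have hrik : i0 + Mof s * k0 = r := Nat.mod_add_div r (Mof s)
      have hi0lt : i0 < Mof s := Nat.mod_lt _ hMpos
      have hk0lt : k0 < 2^s - 1 := by
        rw [hk0]
        rw [Nat.div_lt_iff_lt_mul hMpos]
        have : r < N := Nat.mod_lt _ hNpos
        rw [hN, mul_comm] at this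
        exact this
      have hvals : ((i0 : ZMod (Mof s))).val = i0 := ZMod.val_cast_of_lt hi0lt
      have hvals2 : ((k0 : ZMod (2^s - 1))).val = k0 := ZMod.val_cast_of_lt hk0lt
      have huexp : u = ω ^ (((i0 : ZMod (Mof s))).val
          + Mof s * ((k0 : ZMod (2^s - 1))).val) := by
        rw [hvals, hvals2, hrik, ← hur]
      refine ⟨((i0 : ZMod (Mof s)), (k0 : ZMod (2^s - 1))), ⟨⟨?_, ?_⟩, trivial⟩, ?_⟩
      · rw [← tau_first hF hs hω (i0 : ZMod (Mof s)) ((k0 : ZMod (2^s - 1))).val,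
          ← huexp]
        exact hτu
      · rw [← tau_second hF hs hω a (i0 : ZMod (Mof s)) ((k0 : ZMod (2^s - 1))).val,
          ← huexp]
        exact hτcu
      · simp only [hΨ]
        rw [← huexp]
    · rintro ⟨⟨i, k⟩, ⟨⟨hi1, hi2⟩, -⟩, rfl⟩
      refine ⟨pow_ne_zero _ (omega_ne hF hs hω), ?_, ?_⟩
      · exact (tau_first hF hs hω i k.val).mpr hi1
      · exact (tau_second hF hs hω a i k.val).mpr hi2
  rw [himg, Set.ncard_image_of_injective _ hinj, ncard_prod, Set.ncard_univ,
    Nat.card_zmod]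
include hω in
theorem pair_count (a : ZMod (Mof s)) :
    ({p : ZMod (Mof s) × ZMod (Mof s) |
        p.1 ∈ T1 s ω ∧ p.2 ∈ T1 s ω ∧ p.1 + p.2 = a}).ncard * (2^s - 1)
      = (Sa s ω ((a.val : ℕ) : ℤ)).ncard := by
  set I : Set (ZMod (Mof s)) := {i : ZMod (Mof s) | trFE s (ω ^ i.val) = 0
          ∧ trFE s (ω ^ ((a - i).val)) = 0} with hI
  have hP : {p : ZMod (Mof s) × ZMod (Mof s) |
      p.1 ∈ T1 s ω ∧ p.2 ∈ T1 s ω ∧ p.1 + p.2 = a}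
      = (fun i => (i, a - i)) '' I := by
    ext p
    simp only [Set.mem_setOf_eq, Set.mem_image]
    constructor
    · rintro ⟨h1, h2, h3⟩
      refine ⟨p.1, ⟨?_, ?_⟩, ?_⟩
      · exact (T1_iff hF hs hω p.1).mp h1
      · have h4 : a - p.1 = p.2 := by rw [← h3]; ring
        rw [h4]
        exact (T1_iff hF hs hω p.2).mp h2
      · have h4 : a - p.1 = p.2 := by rw [← h3]; ring
        rw [h4]
    · rintro ⟨i, ⟨h1, h2⟩, rfl⟩
      exact ⟨(T1_iff hF hs hω i).mpr h1, (T1_iff hF hs hω (a - i)).mpr h2, by ring⟩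
  have hinj : Function.Injective (fun i : ZMod (Mof s) => (i, a - i)) := by
    intro i j h
    exact (Prod.ext_iff.mp h).1
  rw [hP, Set.ncard_image_of_injective _ hinj, ncard_Sa hF hs,
    main_count hF hs hω a]
end chunkFin

end St6

theorem statement6 (s : ℕ) (hs : 1 ≤ s) (F : Type*) [Field F] [Fintype F]
    (hF : Fintype.card F = 2 ^ (3 * s)) (ω : F)
    (hω : ∀ x : F, x ≠ 0 → ∃ n : ℕ, x = ω ^ n) :
    ∀ a : ZMod (Mof s),
      (a ∈ T1 s ω →
        {p : ZMod (Mof s) × ZMod (Mof s) | p.1 ∈ T1 s ω ∧ p.2 ∈ T1 s ω ∧ p.1 + p.2 = a}.ncard = 1) ∧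
      (a ∈ T2 s ω →
        {p : ZMod (Mof s) × ZMod (Mof s) | p.1 ∈ T1 s ω ∧ p.2 ∈ T1 s ω ∧ p.1 + p.2 = a}.ncard = 2) ∧
      (a ∈ T3 s ω →
        {p : ZMod (Mof s) × ZMod (Mof s) | p.1 ∈ T1 s ω ∧ p.2 ∈ T1 s ω ∧ p.1 + p.2 = a}.ncard = 0) := by
  intro a
  have hq := St6.q_ge hs
  have hkey := St6.pair_count hF hs hω a
  have hqpos : 0 < 2^s - 1 := by omega
  refine ⟨?_, ?_, ?_⟩
  · intro h
    have h1 : (Sa s ω ((a.val : ℕ) : ℤ)).ncard = 2^s - 1 := h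
    rw [h1] at hkey
    have h2 : {p : ZMod (Mof s) × ZMod (Mof s) |
        p.1 ∈ T1 s ω ∧ p.2 ∈ T1 s ω ∧ p.1 + p.2 = a}.ncard * (2^s - 1)
        = 1 * (2^s - 1) := by rw [hkey, one_mul]
    exact Nat.eq_of_mul_eq_mul_right hqpos h2
  · intro h
    have h1 : (Sa s ω ((a.val : ℕ) : ℤ)).ncard = 2 * (2^s - 1) := h
    rw [h1] at hkey
    exact Nat.eq_of_mul_eq_mul_right hqpos hkey
  · intro h
    have h1 : (Sa s ω ((a.val : ℕ) : ℤ)).ncard = 0 := h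
    rw [h1] at hkey
    rcases Nat.mul_eq_zero.mp hkey with h2 | h2
    · exact h2
    · omega
end
end

section
/- For every a ∈ ℤ/Mℤ, #{(i, j) ∈ T_2 × T_2 : i − j = a} − #{(i, j) ∈ T_3 × T_2 : i − j = a} equals 2^{2s−1}·[a = 0] + 2^{s−1}·(1 − [a ∈ T_1]), where [P] is 1 if P holds and 0 otherwise; that is, (T_2 − T_3)·T_2^{(−1)} = 2^{2s−1} + 2^{s−1}(ℤ/Mℤ − T_1) in the group ring ℤ[ℤ/Mℤ]. -/
noncomputable section

open scoped BigOperators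

namespace St8
open Finset
attribute [local instance] Classical.propDecidable
set_option linter.unusedSectionVars false

lemma Ind_eq (P : Prop) {i : Decidable P} : Ind P = @ite ℤ P i 1 0 := by
  by_cases h : P
  · unfold Ind; rw [if_pos h, if_pos h]
  · unfold Ind; rw [if_neg h, if_neg h]

lemma Ind_pos {P : Prop} (h : P) : Ind P = 1 := by unfold Ind; rw [if_pos h]

lemma Ind_neg {P : Prop} (h : ¬P) : Ind P = 0 := by unfold Ind; rw [if_neg h]

lemma two_le_q {s : ℕ} (hs : 1 ≤ s) : 2 ≤ 2 ^ s := by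
  calc 2 = 2 ^ 1 := rfl
  _ ≤ 2 ^ s := Nat.pow_le_pow_right (by norm_num) hs

lemma q3_eq (s : ℕ) : 2 ^ (3 * s) = (2 ^ s) ^ 3 := by
  rw [← pow_mul, mul_comm]

lemma q2_eq (s : ℕ) : 2 ^ (2 * s) = (2 ^ s) ^ 2 := by
  rw [← pow_mul, mul_comm]

lemma M_eq (s : ℕ) : Mof s = (2 ^ s) ^ 2 + 2 ^ s + 1 := by
  rw [Mof, q2_eq]

lemma M_mul {s : ℕ} (hs : 1 ≤ s) : Mof s * (2 ^ s - 1) = 2 ^ (3 * s) - 1 := by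
  obtain ⟨k, hk⟩ : ∃ k, 2 ^ s = k + 1 := ⟨2 ^ s - 1, by have := two_le_q hs; omega⟩
  rw [M_eq, q3_eq, hk]
  simp only [Nat.add_sub_cancel]
  ring_nf
  omega

lemma M_odd {s : ℕ} (hs : 1 ≤ s) : Mof s % 2 = 1 := by
  have h1 : 2 ∣ 2 ^ s := dvd_pow_self 2 (by omega)
  have h2 : 2 ∣ 2 ^ (2 * s) := dvd_pow_self 2 (by omega)
  simp only [Mof]
  omega

variable {F : Type*} [Field F] [Fintype F]

lemma charF (s : ℕ) (hF : Fintype.card F = 2 ^ (3 * s)) (hs : 1 ≤ s) : CharP F 2 := by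
  haveI : CharP F (ringChar F) := ringChar.charP F
  have hp : (ringChar F).Prime := CharP.char_is_prime F _
  obtain ⟨n, -, hcard⟩ := FiniteField.card F (ringChar F)
  have hdvd : ringChar F ∣ 2 ^ (3 * s) := by
    rw [← hF, hcard]
    exact dvd_pow_self _ (by exact_mod_cast n.ne_zero)
  have h2 : ringChar F = 2 :=
    (Nat.prime_dvd_prime_iff_eq hp Nat.prime_two).mp (hp.dvd_of_dvd_pow hdvd)
  rw [← h2]; infer_instance

section core
variable (s : ℕ) [CharP F 2]

lemma fact2 : Fact (Nat.Prime 2) := ⟨Nat.prime_two⟩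

lemma fresh (n : ℕ) (x y : F) : (x + y) ^ (2 ^ n) = x ^ (2 ^ n) + y ^ (2 ^ n) := by
  haveI := fact2
  exact add_pow_char_pow x y 2 n

lemma trFE_add (x y : F) : trFE s (x + y) = trFE s x + trFE s y := by
  simp only [trFE, fresh]
  ring

lemma trFE_zero : trFE s (0 : F) = 0 := by
  have h1 : (2:ℕ) ^ s ≠ 0 := (Nat.two_pow_pos s).ne'
  have h2 : (2:ℕ) ^ (2 * s) ≠ 0 := (Nat.two_pow_pos _).ne'
  simp [trFE, zero_pow h1, zero_pow h2]

lemma pow_two_mul (l : F) (h : l ^ (2 ^ s) = l) : l ^ (2 ^ (2 * s)) = l := by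
  have : (2 : ℕ) ^ (2 * s) = 2 ^ s * 2 ^ s := by rw [two_mul, pow_add]
  rw [this, pow_mul, h, h]

lemma trFE_smul (l x : F) (hl : l ^ (2 ^ s) = l) : trFE s (l * x) = l * trFE s x := by
  simp only [trFE, mul_pow, hl, pow_two_mul s l hl]
  ring

lemma trFE_one : trFE s (1 : F) = 1 := by
  simp only [trFE, one_pow]
  rw [show (1 : F) + 1 + 1 = 2 + 1 by ring, show ((2 : F) = 0) from ?_, zero_add]
  exact_mod_cast (CharP.cast_eq_zero F 2)

lemma pow_q3 (hF : Fintype.card F = 2 ^ (3 * s)) (x : F) : x ^ (2 ^ (3 * s)) = x := by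
  rw [← hF]; exact FiniteField.pow_card x

lemma pow_q3_sub_one (hF : Fintype.card F = 2 ^ (3 * s)) (x : F) (hx : x ≠ 0) :
    x ^ (2 ^ (3 * s) - 1) = 1 := by
  have h1 : 1 ≤ 2 ^ (3 * s) := Nat.one_le_two_pow
  have := pow_q3 s hF x
  have h2 : x ^ (2 ^ (3 * s) - 1) * x = x := by
    rw [← pow_succ]
    rw [show 2 ^ (3 * s) - 1 + 1 = 2 ^ (3 * s) from by omega]
    exact this
  field_simp at h2
  exact h2

lemma pow3s_split : (2:ℕ) ^ (3 * s) = 2 ^ (2 * s) * 2 ^ s := by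
  rw [← pow_add]; ring_nf

lemma trFE_pow_mem (hF : Fintype.card F = 2 ^ (3 * s)) (x : F) :
    (trFE s x) ^ (2 ^ s) = trFE s x := by
  simp only [trFE, fresh]
  rw [← pow_mul, ← pow_mul, ← pow_add, ← pow_add,
    show s + s = 2 * s from by ring, show 2 * s + s = 3 * s from by ring, pow_q3 s hF]
  ring

lemma trFE_frob (hF : Fintype.card F = 2 ^ (3 * s)) (x : F) :
    trFE s (x ^ (2 ^ s)) = trFE s x := by
  simp only [trFE]
  rw [← pow_mul, ← pow_mul, ← pow_add, ← pow_add,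
    show s + s = 2 * s from by ring, show s + 2 * s = 3 * s from by ring, pow_q3 s hF]
  ring

lemma trFE_sq (x : F) : trFE s (x ^ 2) = (trFE s x) ^ 2 := by
  have h2 : ∀ a b : F, (a + b) ^ 2 = a ^ 2 + b ^ 2 := by
    intro a b
    haveI := fact2
    exact add_pow_char a b 2
  simp only [trFE, h2]
  rw [← pow_mul, ← pow_mul, ← pow_mul, ← pow_mul]
  ring_nf

open Polynomial

lemma card_le_deg (p : Polynomial F) (hp : p ≠ 0) :
    (univ.filter fun x : F => p.eval x = 0).card ≤ p.natDegree := by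
  classical
  have hsub : (univ.filter fun x : F => p.eval x = 0) ⊆ p.roots.toFinset := by
    intro x hx
    simp only [mem_filter] at hx
    rw [Multiset.mem_toFinset, Polynomial.mem_roots hp]
    exact hx.2
  calc (univ.filter fun x : F => p.eval x = 0).card ≤ p.roots.toFinset.card :=
        Finset.card_le_card hsub
    _ ≤ Multiset.card p.roots := Multiset.toFinset_card_le _
    _ ≤ p.natDegree := Polynomial.card_roots' p

lemma cardK_le (hs : 1 ≤ s) :
    (univ.filter fun x : F => trFE s x = 0).card ≤ (2 ^ s) ^ 2 := by
  classical
  set p : Polynomial F := X ^ (2 ^ (2 * s)) + (X ^ (2 ^ s) + X) with hp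
  have hq : 2 ≤ 2 ^ s := two_le_q hs
  have hlt : (1:ℕ) < 2 ^ s := hq
  have hlt2 : 2 ^ s < 2 ^ (2 * s) := by
    apply Nat.pow_lt_pow_right (by norm_num)
    omega
  have hdeg2 : (X ^ (2 ^ s) + X : Polynomial F).natDegree = 2 ^ s := by
    rw [Polynomial.natDegree_add_eq_left_of_natDegree_lt] <;>
      simp [Polynomial.natDegree_X_pow, Polynomial.natDegree_X]
    omega
  have hdeg : p.natDegree = 2 ^ (2 * s) := by
    rw [hp, Polynomial.natDegree_add_eq_left_of_natDegree_lt] <;>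
      simp [Polynomial.natDegree_X_pow, hdeg2]
    omega
  have hpne : p ≠ 0 := by
    intro h
    rw [h] at hdeg
    simp at hdeg
    have := Nat.two_pow_pos (2 * s)
    omega
  have key := card_le_deg p hpne
  rw [hdeg, q2_eq] at key
  have : (univ.filter fun x : F => trFE s x = 0) = (univ.filter fun x : F => p.eval x = 0) := by
    apply Finset.filter_congr
    intro x _
    simp only [hp, trFE, Polynomial.eval_add, Polynomial.eval_pow, Polynomial.eval_X]
    constructor <;> intro h <;> [linear_combination h; linear_combination h]
  rw [this]
  exact key

lemma cardE_le (hs : 1 ≤ s) :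
    (univ.filter fun x : F => x ^ (2 ^ s) = x).card ≤ 2 ^ s := by
  classical
  set p : Polynomial F := X ^ (2 ^ s) - X with hp
  have hq : 2 ≤ 2 ^ s := two_le_q hs
  have hdeg : p.natDegree = 2 ^ s := by
    rw [hp, Polynomial.natDegree_sub_eq_left_of_natDegree_lt] <;>
      simp [Polynomial.natDegree_X_pow, Polynomial.natDegree_X]
    omega
  have hpne : p ≠ 0 := by
    intro h
    rw [h] at hdeg
    simp at hdeg
    omega
  have key := card_le_deg p hpne
  rw [hdeg] at key
  have : (univ.filter fun x : F => x ^ (2 ^ s) = x) = (univ.filter fun x : F => p.eval x = 0) := by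
    apply Finset.filter_congr
    intro x _
    simp only [hp, Polynomial.eval_sub, Polynomial.eval_pow, Polynomial.eval_X, sub_eq_zero]
  rw [this]
  exact key

def trHom (s : ℕ) (F : Type*) [Field F] [Fintype F] [CharP F 2] : F →+ F where
  toFun := trFE s
  map_zero' := trFE_zero s
  map_add' := trFE_add s

lemma card_ker_range :
    Fintype.card F = (univ.filter fun x : F => trFE s x = 0).card
      * (univ.filter fun y : F => y ∈ (trHom s F).range).card := by
  classical
  have h1 : Nat.card F = Nat.card (F ⧸ (trHom s F).ker) * Nat.card ((trHom s F).ker) :=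
    AddSubgroup.card_eq_card_quotient_mul_card_addSubgroup _
  have h2 : Nat.card (F ⧸ (trHom s F).ker) = Nat.card ((trHom s F).range) :=
    Nat.card_congr (QuotientAddGroup.quotientKerEquivRange (trHom s F)).toEquiv
  rw [h2] at h1
  have h3 : Nat.card ((trHom s F).ker) = (univ.filter fun x : F => trFE s x = 0).card := by
    rw [Nat.card_eq_fintype_card]
    exact Fintype.card_of_subtype _ (fun x => by
      simp [AddMonoidHom.mem_ker, trHom])
  have h4 : Nat.card ((trHom s F).range) = (univ.filter fun y : F => y ∈ (trHom s F).range).card := by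
    rw [Nat.card_eq_fintype_card]
    exact Fintype.card_of_subtype _ (fun x => by simp)
  rw [h3, h4] at h1
  rw [← Nat.card_eq_fintype_card]
  rw [h1, mul_comm]

lemma cardK (hs : 1 ≤ s) (hF : Fintype.card F = 2 ^ (3 * s)) :
    (univ.filter fun x : F => trFE s x = 0).card = (2 ^ s) ^ 2 := by
  classical
  have hq : 2 ≤ 2 ^ s := two_le_q hs
  have hk := card_ker_range (F := F) s
  have hrangeE : (univ.filter fun y : F => y ∈ (trHom s F).range)
      ⊆ (univ.filter fun x : F => x ^ (2 ^ s) = x) := by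
    intro y hy
    simp only [mem_filter, AddMonoidHom.mem_range] at hy ⊢
    obtain ⟨x, hx⟩ := hy.2
    exact ⟨Finset.mem_univ y, by rw [← hx]; exact trFE_pow_mem s hF x⟩
  have hr_le : (univ.filter fun y : F => y ∈ (trHom s F).range).card ≤ 2 ^ s :=
    le_trans (Finset.card_le_card hrangeE) (cardE_le s hs)
  have hk_le := cardK_le (F := F) s hs
  set a := (univ.filter fun x : F => trFE s x = 0).card
  set b := (univ.filter fun y : F => y ∈ (trHom s F).range).card
  rw [hF, q3_eq] at hk
  nlinarith [hk, hr_le, hk_le, Nat.two_pow_pos s]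

lemma cardE (hs : 1 ≤ s) (hF : Fintype.card F = 2 ^ (3 * s)) :
    (univ.filter fun x : F => x ^ (2 ^ s) = x).card = 2 ^ s := by
  classical
  have hq : 2 ≤ 2 ^ s := two_le_q hs
  have hk := card_ker_range (F := F) s
  have hrangeE : (univ.filter fun y : F => y ∈ (trHom s F).range)
      ⊆ (univ.filter fun x : F => x ^ (2 ^ s) = x) := by
    intro y hy
    simp only [mem_filter, AddMonoidHom.mem_range] at hy ⊢
    obtain ⟨x, hx⟩ := hy.2
    exact ⟨Finset.mem_univ y, by rw [← hx]; exact trFE_pow_mem s hF x⟩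
  have hE_le := cardE_le (F := F) s hs
  have hk_eq := cardK (F := F) s hs hF
  rw [hk_eq, hF, q3_eq] at hk
  -- (2^s)^3 = (2^s)^2 * b  so b = 2^s
  have hb : (univ.filter fun y : F => y ∈ (trHom s F).range).card = 2 ^ s := by
    have h0 : (0:ℕ) < (2 ^ s) ^ 2 := by positivity
    have : (2 ^ s) ^ 2 * 2 ^ s = (2 ^ s) ^ 2 * (univ.filter fun y : F => y ∈ (trHom s F).range).card := by
      rw [← hk]; ring
    exact (Nat.eq_of_mul_eq_mul_left h0 this).symm
  have hsub := Finset.card_le_card hrangeE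
  omega

end core

def Esub (s : ℕ) (F : Type*) [Field F] [Fintype F] [CharP F 2] : Subfield F where
  carrier := {x | x ^ (2 ^ s) = x}
  mul_mem' := by intro a b ha hb; simp only [Set.mem_setOf_eq] at *; rw [mul_pow, ha, hb]
  one_mem' := by simp
  add_mem' := by intro a b ha hb; simp only [Set.mem_setOf_eq] at *; rw [fresh, ha, hb]
  zero_mem' := by simp [zero_pow (Nat.two_pow_pos s).ne']
  neg_mem' := by intro a ha; simp only [Set.mem_setOf_eq] at *; rw [CharTwo.neg_eq, ha]
  inv_mem' := by intro a ha; simp only [Set.mem_setOf_eq] at *; rw [inv_pow, ha]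

lemma mem_Esub {s : ℕ} [CharP F 2] {x : F} : x ∈ Esub s F ↔ x ^ (2 ^ s) = x := Iff.rfl

section core2
variable (s : ℕ) [CharP F 2]

lemma cardEsub (hs : 1 ≤ s) (hF : Fintype.card F = 2 ^ (3 * s)) :
    Fintype.card (Esub s F) = 2 ^ s := by
  rw [show Fintype.card (Esub s F) = Fintype.card {x : F // x ^ (2 ^ s) = x} from
    Fintype.card_congr (Equiv.refl _)]
  rw [Fintype.card_of_subtype (univ.filter fun x : F => x ^ (2 ^ s) = x) (fun x => by simp)]
  exact cardE s hs hF

lemma smul_Esub (e : Esub s F) (x : F) : e • x = (e : F) * x := rfl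

lemma finrank_EF (hs : 1 ≤ s) (hF : Fintype.card F = 2 ^ (3 * s)) :
    Module.finrank (Esub s F) F = 3 := by
  have h := Module.card_eq_pow_finrank (K := Esub s F) (V := F)
  rw [hF, q3_eq, cardEsub s hs hF] at h
  exact (Nat.pow_right_injective (two_le_q hs) h.symm)

def Ksub (s : ℕ) (F : Type*) [Field F] [Fintype F] [CharP F 2] (z : F) :
    Submodule (Esub s F) F where
  carrier := {x | trFE s (z * x) = 0}
  add_mem' := by
    intro a b ha hb
    simp only [Set.mem_setOf_eq] at *
    rw [mul_add, trFE_add, ha, hb, add_zero]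
  zero_mem' := by simp only [Set.mem_setOf_eq, mul_zero]; exact trFE_zero s
  smul_mem' := by
    intro c x hx
    simp only [Set.mem_setOf_eq] at *
    rw [smul_Esub, show z * ((c : F) * x) = (c : F) * (z * x) from by ring,
      trFE_smul s _ _ c.2, hx, mul_zero]

lemma mem_Ksub {s : ℕ} [CharP F 2] {z x : F} : x ∈ Ksub s F z ↔ trFE s (z * x) = 0 := Iff.rfl

lemma card_Ksub (hs : 1 ≤ s) (hF : Fintype.card F = 2 ^ (3 * s)) (z : F) (hz : z ≠ 0) :
    (univ.filter fun x : F => trFE s (z * x) = 0).card = (2 ^ s) ^ 2 := by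
  rw [← cardK s hs hF]
  apply Finset.card_nbij' (fun x => z * x) (fun y => z⁻¹ * y)
  · intro a ha
    simp only [Finset.mem_coe, mem_filter, mem_univ, true_and] at *
    exact ha
  · intro a ha
    simp only [Finset.mem_coe, mem_filter, mem_univ, true_and] at *
    rw [show z * (z⁻¹ * a) = a from by field_simp]
    exact ha
  · intro a _; field_simp
  · intro a _; field_simp

lemma card_Ksub_sub (hs : 1 ≤ s) (hF : Fintype.card F = 2 ^ (3 * s)) (z : F) (hz : z ≠ 0) :
    Fintype.card (Ksub s F z) = (2 ^ s) ^ 2 := by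
  rw [show Fintype.card (Ksub s F z) = Fintype.card {x : F // trFE s (z * x) = 0} from
    Fintype.card_congr (Equiv.refl _)]
  rw [Fintype.card_of_subtype (univ.filter fun x : F => trFE s (z * x) = 0) (fun x => by simp)]
  exact card_Ksub s hs hF z hz

lemma finrank_Ksub (hs : 1 ≤ s) (hF : Fintype.card F = 2 ^ (3 * s)) (z : F) (hz : z ≠ 0) :
    Module.finrank (Esub s F) (Ksub s F z) = 2 := by
  have h := Module.card_eq_pow_finrank (K := Esub s F) (V := Ksub s F z)
  rw [card_Ksub_sub s hs hF z hz, cardEsub s hs hF] at h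
  exact (Nat.pow_right_injective (two_le_q hs) h.symm)

lemma mem_Esub_of_stab (hs : 1 ≤ s) (hF : Fintype.card F = 2 ^ (3 * s)) (z : F)
    (hstab : ∀ x : F, trFE s x = 0 → trFE s (z * x) = 0) : z ∈ Esub s F := by
  classical
  set Q := 2 ^ s with hQdef
  have hq : 2 ≤ Q := two_le_q hs
  set R : Submodule (Esub s F) F :=
    { carrier := {w | ∀ x, trFE s x = 0 → trFE s (w * x) = 0}
      add_mem' := by
        intro a b ha hb x hx
        rw [add_mul, trFE_add, ha x hx, hb x hx, add_zero]
      zero_mem' := by intro x hx; rw [zero_mul]; exact trFE_zero s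
      smul_mem' := by
        intro c w hw x hx
        rw [smul_Esub, mul_assoc, trFE_smul s _ _ c.2, hw x hx, mul_zero] } with hR
  have hmemR : ∀ w : F, w ∈ R ↔ ∀ x, trFE s x = 0 → trFE s (w * x) = 0 := fun w => Iff.rfl
  have hmulR : ∀ w ∈ R, ∀ w' ∈ R, w * w' ∈ R := by
    intro w hw w' hw' x hx
    rw [mul_assoc]
    exact hw _ (hw' x hx)
  have honeR : (1 : F) ∈ R := by intro x hx; rw [one_mul]; exact hx
  have hpowR : ∀ w ∈ R, ∀ n : ℕ, w ^ (n + 1) ∈ R := by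
    intro w hw n
    induction n with
    | zero => rw [pow_one]; exact hw
    | succ m ih => rw [pow_succ]; exact hmulR _ ih _ hw
  have hinvR : ∀ w ∈ R, w ≠ 0 → w⁻¹ ∈ R := by
    intro w hw hw0
    have h8 : 8 ≤ 2 ^ (3 * s) := by
      calc (8:ℕ) = 2 ^ 3 := rfl
      _ ≤ 2 ^ (3 * s) := Nat.pow_le_pow_right (by norm_num) (by omega)
    have hinv : w⁻¹ = w ^ (2 ^ (3 * s) - 2) := by
      symm
      symm
      apply inv_eq_of_mul_eq_one_right
      rw [← pow_succ']
      rw [show 2 ^ (3 * s) - 2 + 1 = 2 ^ (3 * s) - 1 from by omega]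
      exact pow_q3_sub_one s hF w hw0
    rw [hinv, show 2 ^ (3 * s) - 2 = (2 ^ (3 * s) - 3) + 1 from by omega]
    exact hpowR w hw _
  -- the subgroup of units
  set G : Subgroup Fˣ :=
    { carrier := {u | (u : F) ∈ R}
      one_mem' := honeR
      mul_mem' := by intro a b ha hb; exact hmulR _ ha _ hb
      inv_mem' := by
        intro u hu
        simp only [Set.mem_setOf_eq, Units.val_inv_eq_inv_val]
        exact hinvR _ hu u.ne_zero } with hG
  have hcardU : Nat.card Fˣ = 2 ^ (3 * s) - 1 := by
    rw [Nat.card_eq_fintype_card, Fintype.card_units, hF]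
  have hGdvd : Nat.card G ∣ 2 ^ (3 * s) - 1 := by
    rw [← hcardU]; exact Subgroup.card_subgroup_dvd_card G
  set Rcard := (univ.filter fun x : F => x ∈ R).card with hRcard
  have hzeroR : (0 : F) ∈ R := R.zero_mem
  have hcardG : Nat.card G = Rcard - 1 := by
    rw [Nat.card_eq_fintype_card]
    rw [show Fintype.card G = Fintype.card {u : Fˣ // (u : F) ∈ R} from
      Fintype.card_congr (Equiv.refl _)]
    rw [Fintype.card_of_subtype (univ.filter fun u : Fˣ => (u : F) ∈ R) (fun x => by simp)]
    have hbij : (univ.filter fun u : Fˣ => (u : F) ∈ R).card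
        = ((univ.filter fun x : F => x ∈ R).erase 0).card := by
      refine Finset.card_nbij (fun u => (u : F)) ?_ ?_ ?_
      · intro u hu
        simp only [Finset.mem_coe, mem_filter, mem_univ, true_and] at hu
        exact Finset.mem_erase.mpr ⟨u.ne_zero, by simp [hu]⟩
      · intro a _ b _ hab
        exact Units.ext hab
      · intro y hy
        simp only [Finset.coe_erase, Set.mem_diff, Finset.mem_coe, mem_filter] at hy
        obtain ⟨⟨-, hyR⟩, hy0⟩ := hy
        have hy0' : y ≠ 0 := by simpa using hy0
        refine ⟨Units.mk0 y hy0', ?_, rfl⟩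
        simp only [Finset.coe_filter, Set.mem_setOf_eq, mem_univ, true_and]
        simpa using hyR
    rw [hbij, Finset.card_erase_of_mem (by simp [hzeroR])]
  have hRpow : Rcard = Q ^ (Module.finrank (Esub s F) R) := by
    have h := Module.card_eq_pow_finrank (K := Esub s F) (V := R)
    rw [cardEsub s hs hF] at h
    rw [hRcard, ← h]
    rw [show Fintype.card R = Fintype.card {x : F // x ∈ R} from
      Fintype.card_congr (Equiv.refl _)]
    rw [Fintype.card_of_subtype (univ.filter fun x : F => x ∈ R) (fun x => by simp)]
  have hd3 : Module.finrank (Esub s F) R ≤ 3 := by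
    have := Submodule.finrank_le R
    rwa [finrank_EF s hs hF] at this
  set d := Module.finrank (Esub s F) R with hd
  interval_cases d
  · -- d = 0 : impossible, R contains 0 and 1
    exfalso
    rw [pow_zero] at hRpow
    have hsub : ({0, 1} : Finset F) ⊆ univ.filter fun x : F => x ∈ R := by
      intro x hx
      simp only [Finset.mem_insert, Finset.mem_singleton] at hx
      rcases hx with rfl | rfl <;> simp [hzeroR, honeR]
    have h2 : ({0, 1} : Finset F).card = 2 := by
      rw [Finset.card_insert_of_notMem (by simp), Finset.card_singleton]
    have := Finset.card_le_card hsub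
    rw [h2] at this
    omega
  · -- d = 1 : R = E, so z ∈ E
    have hRQ : Rcard = Q := by rw [hRpow, pow_one]
    have hEsubR : (univ.filter fun x : F => x ^ (2 ^ s) = x) ⊆ (univ.filter fun x : F => x ∈ R) := by
      intro e he
      simp only [Finset.mem_coe, mem_filter, mem_univ, true_and] at *
      intro x hx
      rw [trFE_smul s _ _ he, hx, mul_zero]
    have hEcard : (univ.filter fun x : F => x ^ (2 ^ s) = x).card = Q := cardE s hs hF
    have heq := Finset.eq_of_subset_of_card_le hEsubR (by omega)
    have hzR : z ∈ univ.filter fun x : F => x ∈ R := by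
      simp only [Finset.mem_coe, mem_filter, mem_univ, true_and]
      exact hstab
    rw [← heq] at hzR
    simp only [mem_filter] at hzR
    exact hzR.2
  · -- d = 2 : impossible, Q^2 - 1 does not divide Q^3 - 1
    exfalso
    have hRQ : Rcard = Q ^ 2 := by rw [hRpow]
    have hdvd : Q ^ 2 - 1 ∣ Q ^ 3 - 1 := by
      have := hGdvd
      rw [hcardG, hRQ] at this
      rwa [q3_eq] at this
    have hdvd2 : Q ^ 2 - 1 ∣ Q * (Q ^ 2 - 1) := dvd_mul_left _ _
    have hkey : Q ^ 3 - 1 = Q * (Q ^ 2 - 1) + (Q - 1) := by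
      have h1 : Q * (Q ^ 2 - 1) = Q ^ 3 - Q := by
        rw [Nat.mul_sub]
        ring_nf
      have h2 : Q ≤ Q ^ 3 := Nat.le_self_pow (by norm_num) Q
      omega
    have hdvd3 : Q ^ 2 - 1 ∣ Q - 1 := by
      rw [hkey] at hdvd
      exact (Nat.dvd_add_right hdvd2).mp hdvd
    have hle := Nat.le_of_dvd (by omega) hdvd3
    have : Q < Q ^ 2 := by nlinarith
    omega
  · -- d = 3 : impossible, R = ⊤ but trace is not identically 0 on products
    exfalso
    have htop : R = ⊤ := Submodule.eq_top_of_finrank_eq (by rw [← hd, finrank_EF s hs hF])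
    have hx0 : ∃ x0 : F, trFE s x0 ≠ 0 := by
      by_contra hall
      push_neg at hall
      have : (univ.filter fun x : F => trFE s x = 0) = univ := by
        apply Finset.eq_univ_of_forall
        intro x; simp [hall x]
      have hcard := cardK s hs hF
      rw [this, Finset.card_univ, hF, q3_eq] at hcard
      have hlt : (2 ^ s) ^ 2 < (2 ^ s) ^ 3 := Nat.pow_lt_pow_right (two_le_q hs) (by norm_num)
      omega
    obtain ⟨x0, hx0⟩ := hx0
    have hk0 : ∃ k0 : F, trFE s k0 = 0 ∧ k0 ≠ 0 := by
      by_contra hno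
      push_neg at hno
      have hsub : (univ.filter fun x : F => trFE s x = 0) ⊆ {0} := by
        intro x hx
        simp only [Finset.mem_coe, mem_filter, mem_univ, true_and] at hx
        simp [hno x hx]
      have := Finset.card_le_card hsub
      rw [cardK s hs hF] at this
      simp only [Finset.card_singleton] at this
      have hge : 2 ^ 2 ≤ (2 ^ s) ^ 2 := Nat.pow_le_pow_left (two_le_q hs) 2
      omega
    obtain ⟨k0, hk0, hk00⟩ := hk0
    have hwR : x0 * k0⁻¹ ∈ R := htop ▸ Submodule.mem_top
    have := hwR k0 hk0
    rw [show x0 * k0⁻¹ * k0 = x0 from by field_simp] at this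
    exact hx0 this

set_option maxHeartbeats 1000000 in
set_option synthInstance.maxHeartbeats 200000 in
lemma card_inter (hs : 1 ≤ s) (hF : Fintype.card F = 2 ^ (3 * s)) (z : F) (hz : z ≠ 0)
    (hzE : z ∉ Esub s F) :
    (univ.filter fun x : F => trFE s x = 0 ∧ trFE s (z * x) = 0).card = 2 ^ s := by
  classical
  have hq : 2 ≤ 2 ^ s := two_le_q hs
  set K1 := Ksub s F 1 with hK1
  set Kz := Ksub s F z with hKz
  have hf1 : Module.finrank (Esub s F) K1 = 2 := finrank_Ksub s hs hF 1 one_ne_zero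
  have hfz : Module.finrank (Esub s F) Kz = 2 := finrank_Ksub s hs hF z hz
  have hKne : ¬ (Kz ≤ K1) := by
    intro hle
    have heq : Kz = K1 := Submodule.eq_of_le_of_finrank_eq hle (by rw [hf1, hfz])
    apply hzE
    apply mem_Esub_of_stab s hs hF z
    intro x hx
    have hx1 : x ∈ K1 := by rw [mem_Ksub, one_mul]; exact hx
    rw [← heq] at hx1
    exact hx1
  have hlt : K1 < K1 ⊔ Kz := by
    refine lt_of_le_of_ne le_sup_left (fun h => hKne ?_)
    exact le_sup_right.trans (le_of_eq h.symm)
  have hsup3 : Module.finrank (Esub s F) (K1 ⊔ Kz : Submodule (Esub s F) F) = 3 := by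
    have hle : Module.finrank (Esub s F) (K1 ⊔ Kz : Submodule (Esub s F) F) ≤ 3 := by
      have := Submodule.finrank_le (K1 ⊔ Kz : Submodule (Esub s F) F)
      rwa [finrank_EF s hs hF] at this
    have hgt := Submodule.finrank_lt_finrank_of_lt hlt
    rw [hf1] at hgt
    omega
  have hinf1 : Module.finrank (Esub s F) (K1 ⊓ Kz : Submodule (Esub s F) F) = 1 := by
    have := Submodule.finrank_sup_add_finrank_inf_eq K1 Kz
    rw [hf1, hfz, hsup3] at this
    omega
  have hcardinf : Fintype.card (K1 ⊓ Kz : Submodule (Esub s F) F) = 2 ^ s := by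
    have h := Module.card_eq_pow_finrank (K := Esub s F) (V := (K1 ⊓ Kz : Submodule (Esub s F) F))
    rw [cardEsub s hs hF, hinf1, pow_one] at h
    exact h
  rw [← hcardinf]
  rw [show Fintype.card (K1 ⊓ Kz : Submodule (Esub s F) F)
      = Fintype.card {x : F // x ∈ (K1 ⊓ Kz : Submodule (Esub s F) F)} from
    Fintype.card_congr (Equiv.refl _)]
  rw [Fintype.card_of_subtype (univ.filter fun x : F =>
      x ∈ (K1 ⊓ Kz : Submodule (Esub s F) F)) (fun x => by simp)]
  congr 1
  apply Finset.filter_congr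
  intro x _
  rw [Submodule.mem_inf, mem_Ksub, mem_Ksub, one_mul]

end core2

section gen
variable (s : ℕ) [CharP F 2] (ω : F)

lemma Mof_pos : 0 < Mof s := by simp only [Mof]; positivity

lemma Mof_dvd (hs : 1 ≤ s) : Mof s ∣ 2 ^ (3 * s) - 1 := ⟨2 ^ s - 1, (M_mul hs).symm⟩

lemma omega_ne (hs : 1 ≤ s) (hF : Fintype.card F = 2 ^ (3 * s))
    (hω : ∀ x : F, x ≠ 0 → ∃ n : ℕ, x = ω ^ n) : ω ≠ 0 := by
  intro h0
  have h8 : 8 ≤ 2 ^ (3 * s) := by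
    calc (8:ℕ) = 2 ^ 3 := rfl
    _ ≤ 2 ^ (3 * s) := Nat.pow_le_pow_right (by norm_num) (by omega)
  have hcard : 1 < Fintype.card Fˣ := by
    rw [Fintype.card_units, hF]; omega
  obtain ⟨u, hu⟩ := Fintype.exists_ne_of_one_lt_card hcard 1
  obtain ⟨n, hn⟩ := hω u u.ne_zero
  rcases Nat.eq_zero_or_pos n with rfl | hn0
  · rw [pow_zero] at hn
    exact hu (Units.ext (by simp [hn]))
  · rw [h0, zero_pow (by omega)] at hn
    exact u.ne_zero hn

lemma zpow_one_iff (hF : Fintype.card F = 2 ^ (3 * s))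
    (hω : ∀ x : F, x ≠ 0 → ∃ n : ℕ, x = ω ^ n) (hω0 : ω ≠ 0) (k : ℤ) :
    ω ^ k = 1 ↔ ((2 ^ (3 * s) - 1 : ℕ) : ℤ) ∣ k := by
  set ωu : Fˣ := Units.mk0 ω hω0 with hωu
  have hmem : ∀ u : Fˣ, u ∈ Subgroup.zpowers ωu := by
    intro u
    obtain ⟨n, hn⟩ := hω u u.ne_zero
    refine ⟨(n : ℤ), Units.ext ?_⟩
    show ((ωu ^ (n : ℤ) : Fˣ) : F) = (u : F)
    rw [zpow_natCast, Units.val_pow_eq_pow_val]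
    simp only [hωu, Units.val_mk0]
    exact hn.symm
  have hord : orderOf ωu = 2 ^ (3 * s) - 1 := by
    rw [orderOf_eq_card_of_forall_mem_zpowers hmem, Nat.card_eq_fintype_card,
      Fintype.card_units, hF]
  have h1 : ω ^ k = ((ωu ^ k : Fˣ) : F) := by
    rw [Units.val_zpow_eq_zpow_val]
    rfl
  rw [h1, Units.val_eq_one, ← orderOf_dvd_iff_zpow_eq_one, hord]

lemma zpow_dvd_of_eq (hF : Fintype.card F = 2 ^ (3 * s))
    (hω : ∀ x : F, x ≠ 0 → ∃ n : ℕ, x = ω ^ n) (hω0 : ω ≠ 0) (a b : ℤ)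
    (h : ω ^ a = ω ^ b) : ((2 ^ (3 * s) - 1 : ℕ) : ℤ) ∣ a - b := by
  rw [← zpow_one_iff s ω hF hω hω0]
  rw [zpow_sub₀ hω0, h, div_self (zpow_ne_zero _ hω0)]

lemma zpow_congr (hF : Fintype.card F = 2 ^ (3 * s))
    (hω : ∀ x : F, x ≠ 0 → ∃ n : ℕ, x = ω ^ n) (hω0 : ω ≠ 0) (a b : ℤ)
    (h : ((2 ^ (3 * s) - 1 : ℕ) : ℤ) ∣ a - b) : ω ^ a = ω ^ b := by
  obtain ⟨c, hc⟩ := h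
  have : a = b + ((2 ^ (3 * s) - 1 : ℕ) : ℤ) * c := by omega
  have h1 : ω ^ ((2 ^ (3 * s) - 1 : ℕ) : ℤ) = 1 :=
    (zpow_one_iff s ω hF hω hω0 _).mpr (dvd_refl _)
  rw [this, zpow_add₀ hω0, zpow_mul, h1, one_zpow, mul_one]

lemma trFE_omega_congr (hs : 1 ≤ s) (hF : Fintype.card F = 2 ^ (3 * s))
    (hω : ∀ x : F, x ≠ 0 → ∃ n : ℕ, x = ω ^ n) (hω0 : ω ≠ 0) (n m : ℤ) (x : F)
    (h : (Mof s : ℤ) ∣ n - m) :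
    trFE s (ω ^ n * x) = 0 ↔ trFE s (ω ^ m * x) = 0 := by
  obtain ⟨t, ht⟩ := h
  have hn : n = (Mof s : ℤ) * t + m := by omega
  set l := ω ^ ((Mof s : ℤ) * t) with hl
  have hl0 : l ≠ 0 := zpow_ne_zero _ hω0
  have hlE : l ^ (2 ^ s) = l := by
    rw [hl, ← zpow_natCast (ω ^ ((Mof s : ℤ) * t)) (2 ^ s), ← zpow_mul]
    apply zpow_congr s ω hF hω hω0
    rw [show (Mof s : ℤ) * t * (2 ^ s : ℕ) - (Mof s : ℤ) * t
        = ((Mof s : ℤ) * ((2 ^ s : ℕ) - 1)) * t from by push_cast; ring]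
    apply Dvd.dvd.mul_right
    have := M_mul hs
    have h2 : ((2 ^ (3 * s) - 1 : ℕ) : ℤ) = (Mof s : ℤ) * ((2 ^ s : ℕ) - 1 : ℤ) := by
      have h1 : (1:ℕ) ≤ 2 ^ s := Nat.one_le_two_pow
      push_cast [← this, Nat.cast_sub h1]
      ring
    rw [← h2]
  have key : ω ^ n * x = l * (ω ^ m * x) := by
    rw [hn, zpow_add₀ hω0, hl, mul_assoc]
  rw [key, trFE_smul s l _ hlE, mul_eq_zero]
  simp [hl0]

lemma count_classes (hs : 1 ≤ s) (hF : Fintype.card F = 2 ^ (3 * s))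
    (hω : ∀ x : F, x ≠ 0 → ∃ n : ℕ, x = ω ^ n) (hω0 : ω ≠ 0) (P : F → Prop)
    (hP : ∀ n m : ℤ, (Mof s : ℤ) ∣ n - m → (P (ω ^ n) ↔ P (ω ^ m))) :
    (univ.filter fun u : F => u ≠ 0 ∧ P u).card
      = (2 ^ s - 1) * (univ.filter fun c : ZMod (Mof s) => P (ω ^ ((c.val : ℤ)))).card := by
  classical
  have hq : 2 ≤ 2 ^ s := two_le_q hs
  have hMpos : 0 < Mof s := Mof_pos s
  have hMd : (Mof s : ℤ) ∣ ((2 ^ (3 * s) - 1 : ℕ) : ℤ) :=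
    Int.natCast_dvd_natCast.mpr (Mof_dvd s hs)
  -- the discrete log map
  set L : F → ZMod (Mof s) := fun u =>
    if h : u = 0 then 0 else (((hω u h).choose : ℕ) : ZMod (Mof s)) with hLdef
  have hL : ∀ (u : F) (hu : u ≠ 0) (n : ℕ), u = ω ^ n → L u = (n : ZMod (Mof s)) := by
    intro u hu n hn
    have h0 : u = ω ^ ((hω u hu).choose) := (hω u hu).choose_spec
    simp only [hLdef, dif_neg hu]
    have he : ω ^ (((hω u hu).choose : ℕ) : ℤ) = ω ^ ((n : ℕ) : ℤ) := by
      rw [zpow_natCast, zpow_natCast, ← h0, hn]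
    have hdvd := zpow_dvd_of_eq s ω hF hω hω0 _ _ he
    have hMdvd : (Mof s : ℤ) ∣ (((hω u hu).choose : ℕ) : ℤ) - (n : ℤ) :=
      dvd_trans hMd hdvd
    have := (ZMod.intCast_eq_intCast_iff (((hω u hu).choose : ℕ) : ℤ) (n : ℤ) (Mof s)).mpr
      ((Int.modEq_iff_dvd).mpr (dvd_sub_comm.mp hMdvd))
    push_cast at this
    exact this
  rw [Finset.card_eq_sum_card_fiberwise
    (f := L) (t := univ) (fun x _ => mem_univ (L x))]
  have hfiber : ∀ c : ZMod (Mof s),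
      ((univ.filter fun u : F => u ≠ 0 ∧ P u).filter fun u => L u = c).card
        = if P (ω ^ ((c.val : ℤ))) then 2 ^ s - 1 else 0 := by
    intro c
    -- from membership in the fiber, we can transfer P
    have htrans : ∀ u : F, u ≠ 0 → L u = c → (P u ↔ P (ω ^ ((c.val : ℤ)))) := by
      intro u hu hc
      obtain ⟨n, hn⟩ := hω u hu
      have hLn := hL u hu n hn
      rw [hLn] at hc
      have hval : c.val = n % Mof s := by rw [← hc, ZMod.val_natCast]
      have hdvd : (Mof s : ℤ) ∣ (n : ℤ) - (c.val : ℤ) := by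
        rw [hval]
        have h1 := Nat.mod_add_div n (Mof s)
        refine ⟨(n / Mof s : ℕ), ?_⟩
        have h2 : ((n % Mof s : ℕ) : ℤ) + (Mof s : ℤ) * ((n / Mof s : ℕ) : ℤ) = (n : ℤ) := by
          exact_mod_cast h1
        linarith
      rw [hn, show (ω ^ n = ω ^ ((n : ℕ) : ℤ)) from (zpow_natCast ω n).symm]
      exact hP _ _ hdvd
    by_cases hc : P (ω ^ ((c.val : ℤ)))
    · rw [if_pos hc]
      have himg : (univ.filter fun u : F => u ≠ 0 ∧ P u).filter (fun u => L u = c)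
          = (Finset.range (2 ^ s - 1)).image (fun j => ω ^ (c.val + Mof s * j)) := by
        ext u
        simp only [Finset.mem_filter, Finset.mem_univ, true_and, Finset.mem_image,
          Finset.mem_range]
        constructor
        · rintro ⟨⟨hu, hPu⟩, hLu⟩
          obtain ⟨n, hn⟩ := hω u hu
          have hLn := hL u hu n hn
          rw [hLn] at hLu
          have hval : c.val = n % Mof s := by rw [← hLu, ZMod.val_natCast]
          refine ⟨(n / Mof s) % (2 ^ s - 1), Nat.mod_lt _ (by omega), ?_⟩
          have hdecomp : n = c.val + Mof s * ((n / Mof s) % (2 ^ s - 1))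
              + (Mof s * (2 ^ s - 1)) * ((n / Mof s) / (2 ^ s - 1)) := by
            have h1 := Nat.mod_add_div n (Mof s)
            have h2 := Nat.mod_add_div (n / Mof s) (2 ^ s - 1)
            calc n = n % Mof s + Mof s * (n / Mof s) := by linarith [h1]
            _ = c.val + Mof s * ((n / Mof s) % (2 ^ s - 1)
                + (2 ^ s - 1) * ((n / Mof s) / (2 ^ s - 1))) := by rw [← hval, h2]
            _ = _ := by ring
          have hpow : ω ^ n = ω ^ (c.val + Mof s * (n / Mof s % (2 ^ s - 1))) := by
            conv_lhs => rw [hdecomp]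
            rw [pow_add ω (c.val + Mof s * (n / Mof s % (2 ^ s - 1)))
                ((Mof s * (2 ^ s - 1)) * (n / Mof s / (2 ^ s - 1))), M_mul hs,
              pow_mul ω (2 ^ (3 * s) - 1) (n / Mof s / (2 ^ s - 1)),
              pow_q3_sub_one s hF ω hω0, one_pow, mul_one]
          rw [hn, hpow]
        · rintro ⟨j, hj, rfl⟩
          have hu : ω ^ (c.val + Mof s * j) ≠ 0 := pow_ne_zero _ hω0
          refine ⟨⟨hu, ?_⟩, ?_⟩
          · have := hP ((c.val + Mof s * j : ℕ) : ℤ) ((c.val : ℕ) : ℤ)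
              (by push_cast; exact ⟨j, by ring⟩)
            rw [zpow_natCast, zpow_natCast] at this
            rw [this]
            rw [zpow_natCast] at hc
            exact hc
          · rw [hL _ hu _ rfl]
            have hcast : ((c.val + Mof s * j : ℕ) : ZMod (Mof s))
                = ((c.val : ℕ) : ZMod (Mof s))
                  + ((Mof s : ℕ) : ZMod (Mof s)) * (j : ZMod (Mof s)) := by
              push_cast; ring
            rw [hcast, ZMod.natCast_self, zero_mul, add_zero, ZMod.natCast_val, ZMod.cast_id]
      rw [himg, Finset.card_image_of_injOn, Finset.card_range]
      intro j hj j' hj' hjj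
      simp only [Finset.coe_range, Set.mem_Iio] at hj hj'
      have he : ω ^ ((c.val + Mof s * j : ℕ) : ℤ) = ω ^ ((c.val + Mof s * j' : ℕ) : ℤ) := by
        rw [zpow_natCast, zpow_natCast]; exact hjj
      have hdvd := zpow_dvd_of_eq s ω hF hω hω0 _ _ he
      have hMQ : ((2 ^ (3 * s) - 1 : ℕ) : ℤ) = (Mof s : ℤ) * ((2 ^ s - 1 : ℕ) : ℤ) := by
        exact_mod_cast (M_mul hs).symm
      rw [hMQ] at hdvd
      have hsimp : ((c.val + Mof s * j : ℕ) : ℤ) - ((c.val + Mof s * j' : ℕ) : ℤ)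
          = (Mof s : ℤ) * ((j : ℤ) - (j' : ℤ)) := by push_cast; ring
      rw [hsimp] at hdvd
      have hdvd2 : ((2 ^ s - 1 : ℕ) : ℤ) ∣ ((j : ℤ) - (j' : ℤ)) := by
        have hM0 : (Mof s : ℤ) ≠ 0 := by exact_mod_cast hMpos.ne'
        exact (mul_dvd_mul_iff_left hM0).mp hdvd
      have : (j : ℤ) - (j' : ℤ) = 0 := by
        apply Int.eq_zero_of_abs_lt_dvd hdvd2
        rw [abs_sub_lt_iff]
        constructor <;> [skip; skip] <;> push_cast <;> omega
      omega
    · rw [if_neg hc]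
      rw [Finset.card_eq_zero]
      ext u
      simp only [Finset.mem_filter, Finset.mem_univ, true_and, Finset.notMem_empty,
        iff_false, not_and]
      rintro ⟨hu, hPu⟩ hLu
      exact hc ((htrans u hu hLu).mp hPu)
  calc ∑ c : ZMod (Mof s), ((univ.filter fun u : F => u ≠ 0 ∧ P u).filter fun u => L u = c).card
      = ∑ c : ZMod (Mof s), if P (ω ^ ((c.val : ℤ))) then 2 ^ s - 1 else 0 := by
        apply Finset.sum_congr rfl
        intro c _
        exact hfiber c
    _ = (2 ^ s - 1) * (univ.filter fun c : ZMod (Mof s) => P (ω ^ ((c.val : ℤ)))).card := by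
        rw [← Finset.sum_filter, Finset.sum_const, smul_eq_mul, mul_comm]

def Dfin (s : ℕ) (ω : F) : Finset (ZMod (Mof s)) :=
  univ.filter fun c => trFE s (ω ^ ((c.val : ℤ))) = 0

def rhoD {M : ℕ} [NeZero M] (D : Finset (ZMod M)) (x : ZMod M) : ℕ :=
  ((D ×ˢ D).filter fun p => p.1 + p.2 = x).card

lemma trQ (hs : 1 ≤ s) (hF : Fintype.card F = 2 ^ (3 * s)) (u : F) (hu : u ≠ 0) :
    trFE s (u ^ (2 ^ s + 1)) = 0 ↔ trFE s u⁻¹ = 0 := by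
  have hq : 2 ≤ 2 ^ s := two_le_q hs
  have hu3 : u ^ (2 ^ (3 * s) - 1) = 1 := pow_q3_sub_one s hF u hu
  have hl : (u ^ Mof s) ^ (2 ^ s) = u ^ Mof s := by
    rw [← pow_mul, show Mof s * 2 ^ s = Mof s + (2 ^ (3 * s) - 1) from ?_, pow_add, hu3, mul_one]
    have h1 := M_mul hs
    obtain ⟨k, hk⟩ : ∃ k, 2 ^ s = k + 1 := ⟨2 ^ s - 1, by omega⟩
    rw [hk, Nat.add_sub_cancel] at h1
    rw [hk, ← h1]
    ring
  have hsplit : u ^ (2 ^ s + 1) = u ^ (Mof s) * (u⁻¹) ^ (2 ^ (2 * s)) := by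
    have hMsum : Mof s = 2 ^ (2 * s) + (2 ^ s + 1) := by simp [Mof, add_assoc]
    rw [inv_pow, hMsum, pow_add u (2 ^ (2 * s)) (2 ^ s + 1), mul_comm (u ^ (2 ^ (2 * s))) _, mul_assoc,
      mul_inv_cancel₀ (pow_ne_zero _ hu), mul_one]
  have hfrob2 : trFE s ((u⁻¹) ^ (2 ^ (2 * s))) = trFE s u⁻¹ := by
    rw [show (2 : ℕ) ^ (2 * s) = 2 ^ s * 2 ^ s from by rw [← pow_add, two_mul],
      pow_mul, trFE_frob s hF, trFE_frob s hF]
  rw [hsplit, trFE_smul s _ _ hl, hfrob2, mul_eq_zero]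
  have hM0 : u ^ Mof s ≠ 0 := pow_ne_zero _ hu
  simp [hM0]

lemma mem_D_iff (hs : 1 ≤ s) (hF : Fintype.card F = 2 ^ (3 * s))
    (hω : ∀ x : F, x ≠ 0 → ∃ n : ℕ, x = ω ^ n) (hω0 : ω ≠ 0) (n : ℤ) :
    trFE s (ω ^ n) = 0 ↔ ((n : ZMod (Mof s)) ∈ Dfin s ω) := by
  have hdvd : (Mof s : ℤ) ∣ n - (((n : ZMod (Mof s)).val : ℕ) : ℤ) := by
    rw [← ZMod.intCast_zmod_eq_zero_iff_dvd]
    push_cast [ZMod.natCast_val, ZMod.cast_id] <;> ring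
  have h := trFE_omega_congr s ω hs hF hω hω0 n (((n : ZMod (Mof s)).val : ℕ) : ℤ) 1 hdvd
  simp only [mul_one] at h
  rw [h]
  simp [Dfin]

lemma mem_D_simp (c : ZMod (Mof s)) :
    c ∈ Dfin s ω ↔ trFE s (ω ^ ((c.val : ℤ))) = 0 := by simp [Dfin]

lemma castval (c : ZMod (Mof s)) : (((c.val : ℕ) : ℤ) : ZMod (Mof s)) = c := by
  push_cast [ZMod.natCast_val, ZMod.cast_id] <;> ring

lemma doubleD (hs : 1 ≤ s) (hF : Fintype.card F = 2 ^ (3 * s))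
    (hω : ∀ x : F, x ≠ 0 → ∃ n : ℕ, x = ω ^ n) (hω0 : ω ≠ 0) (d : ZMod (Mof s))
    (hd : d ∈ Dfin s ω) : d + d ∈ Dfin s ω := by
  have hd' : trFE s (ω ^ ((d.val : ℤ))) = 0 := (mem_D_simp s ω d).mp hd
  have h2 : trFE s (ω ^ ((d.val : ℤ) + (d.val : ℤ))) = 0 := by
    rw [zpow_add₀ hω0, ← pow_two, trFE_sq, hd']
    exact zero_pow (by norm_num)
  have h3 := (mem_D_iff s ω hs hF hω hω0 ((d.val : ℤ) + (d.val : ℤ))).mp h2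
  have hcast : ((((d.val : ℤ) + (d.val : ℤ)) : ℤ) : ZMod (Mof s)) = d + d := by
    push_cast [ZMod.natCast_val, ZMod.cast_id] <;> ring
  rwa [hcast] at h3

lemma card_D (hs : 1 ≤ s) (hF : Fintype.card F = 2 ^ (3 * s))
    (hω : ∀ x : F, x ≠ 0 → ∃ n : ℕ, x = ω ^ n) (hω0 : ω ≠ 0) :
    (Dfin s ω).card = 2 ^ s + 1 := by
  have hq := two_le_q hs
  have hcc := count_classes s ω hs hF hω hω0 (fun u => trFE s u = 0)
    (fun n m h => by
      have h1 := trFE_omega_congr s ω hs hF hω hω0 n m 1 h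
      simpa only [mul_one] using h1)
  have hL : (univ.filter fun u : F => u ≠ 0 ∧ trFE s u = 0).card = (2 ^ s) ^ 2 - 1 := by
    have heq : (univ.filter fun u : F => u ≠ 0 ∧ trFE s u = 0)
        = (univ.filter fun u : F => trFE s u = 0).erase 0 := by
      ext u
      simp [Finset.mem_erase, and_comm]
    rw [heq, Finset.card_erase_of_mem (by simp [trFE_zero]), cardK s hs hF]
  rw [hL] at hcc
  have hfac : (2 ^ s - 1) * (2 ^ s + 1) = (2 ^ s) ^ 2 - 1 := by
    obtain ⟨k, hk⟩ : ∃ k, 2 ^ s = k + 1 := ⟨2 ^ s - 1, by omega⟩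
    rw [hk, Nat.add_sub_cancel]
    ring_nf
    omega
  rw [← hfac] at hcc
  exact (Nat.eq_of_mul_eq_mul_left (by omega) hcc.symm)

lemma zpow_val_ne (c : ZMod (Mof s)) (hω0 : ω ≠ 0) : ω ^ ((c.val : ℤ)) ≠ 0 :=
  zpow_ne_zero _ hω0

lemma planarD (hs : 1 ≤ s) (hF : Fintype.card F = 2 ^ (3 * s))
    (hω : ∀ x : F, x ≠ 0 → ∃ n : ℕ, x = ω ^ n) (hω0 : ω ≠ 0) (v : ZMod (Mof s)) (hv : v ≠ 0) :
    (((Dfin s ω) ×ˢ (Dfin s ω)).filter fun p => p.1 - p.2 = v).card = 1 := by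
  classical
  have hq := two_le_q hs
  set z := ω ^ ((v.val : ℤ)) with hz
  have hz0 : z ≠ 0 := zpow_ne_zero _ hω0
  have hzE : z ∉ Esub s F := by
    intro hmem
    have h2 : z ^ (2 ^ s) = z := hmem
    have h1 : z ^ (2 ^ s - 1) = 1 := by
      have h3 : z ^ (2 ^ s - 1) * z = 1 * z := by
        rw [← pow_succ, show 2 ^ s - 1 + 1 = 2 ^ s from by omega, h2, one_mul]
      exact mul_right_cancel₀ hz0 h3
    have h3 : ω ^ ((v.val : ℤ) * ((2 ^ s - 1 : ℕ) : ℤ)) = 1 := by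
      rw [zpow_mul, ← hz, zpow_natCast, h1]
    have h4 := (zpow_one_iff s ω hF hω hω0 _).mp h3
    have hMQ : ((2 ^ (3 * s) - 1 : ℕ) : ℤ) = (Mof s : ℤ) * ((2 ^ s - 1 : ℕ) : ℤ) := by
      exact_mod_cast (M_mul hs).symm
    rw [hMQ] at h4
    have hq10 : ((2 ^ s - 1 : ℕ) : ℤ) ≠ 0 := by
      have h5 : (0 : ℕ) < 2 ^ s - 1 := by omega
      exact_mod_cast h5.ne'
    have h5 : (Mof s : ℤ) ∣ (v.val : ℤ) := (mul_dvd_mul_iff_right hq10).mp h4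
    have h6 : (Mof s) ∣ v.val := by exact_mod_cast h5
    have h7 : v.val = 0 := Nat.eq_zero_of_dvd_of_lt h6 (ZMod.val_lt v)
    exact hv ((ZMod.val_eq_zero v).mp h7)
  have hcc := count_classes s ω hs hF hω hω0
    (fun u => trFE s u = 0 ∧ trFE s (z * u) = 0)
    (fun n m h => by
      have h1 := trFE_omega_congr s ω hs hF hω hω0 n m 1 h
      simp only [mul_one] at h1
      have h2 := trFE_omega_congr s ω hs hF hω hω0 n m z h
      have h2' : (trFE s (z * ω ^ n) = 0) ↔ (trFE s (z * ω ^ m) = 0) := by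
        rw [mul_comm z (ω ^ n), mul_comm z (ω ^ m)]
        exact h2
      exact and_congr h1 h2')
  have hL : (univ.filter fun u : F => u ≠ 0 ∧ (trFE s u = 0 ∧ trFE s (z * u) = 0)).card
      = 2 ^ s - 1 := by
    have heq : (univ.filter fun u : F => u ≠ 0 ∧ (trFE s u = 0 ∧ trFE s (z * u) = 0))
        = (univ.filter fun u : F => trFE s u = 0 ∧ trFE s (z * u) = 0).erase 0 := by
      ext u
      simp [Finset.mem_erase, and_comm, and_assoc]
    rw [heq, Finset.card_erase_of_mem (by simp [trFE_zero]), card_inter s hs hF z hz0 hzE]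
  have hcc2 : (2:ℕ) ^ s - 1 = (2 ^ s - 1) * (univ.filter fun c : ZMod (Mof s) =>
      trFE s (ω ^ ((c.val : ℤ))) = 0 ∧ trFE s (z * ω ^ ((c.val : ℤ))) = 0).card := by
    rw [← hL]
    convert hcc using 4
  have hcount : (univ.filter fun c : ZMod (Mof s) =>
      trFE s (ω ^ ((c.val : ℤ))) = 0 ∧ trFE s (z * ω ^ ((c.val : ℤ))) = 0).card = 1 := by
    have h10 : (0 : ℕ) < 2 ^ s - 1 := by omega
    apply Nat.eq_of_mul_eq_mul_left h10
    rw [← hcc2, mul_one]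
  have memz : ∀ c : ZMod (Mof s), (trFE s (z * ω ^ ((c.val : ℤ))) = 0) ↔ (v + c) ∈ Dfin s ω := by
    intro c
    rw [hz, ← zpow_add₀ hω0, mem_D_iff s ω hs hF hω hω0 ((v.val : ℤ) + (c.val : ℤ))]
    have hcast : ((((v.val : ℤ) + (c.val : ℤ)) : ℤ) : ZMod (Mof s)) = v + c := by
      push_cast [ZMod.natCast_val, ZMod.cast_id] <;> ring
    rw [hcast]
  rw [← hcount]
  apply Finset.card_nbij' (fun p => p.2) (fun c => (c + v, c))
  · intro p hp
    simp only [Finset.mem_coe, Finset.mem_filter, Finset.mem_product] at hp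
    obtain ⟨⟨h1, h2⟩, h3⟩ := hp
    simp only [Finset.mem_coe, Finset.mem_filter, Finset.mem_univ, true_and]
    constructor
    · exact (mem_D_simp s ω p.2).mp h2
    · rw [memz]
      have : v + p.2 = p.1 := by rw [← h3]; ring
      rw [this]
      exact h1
  · intro c hc
    simp only [Finset.mem_coe, Finset.mem_filter, Finset.mem_univ, true_and] at hc
    simp only [Finset.mem_coe, Finset.mem_filter, Finset.mem_product]
    refine ⟨⟨?_, ?_⟩, by ring⟩
    · have := (memz c).mp hc.2
      rwa [show v + c = c + v from by ring] at this
    · exact (mem_D_simp s ω c).mpr hc.1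
  · intro p hp
    simp only [Finset.mem_coe, Finset.mem_filter, Finset.mem_product] at hp
    have : p.2 + v = p.1 := by rw [← hp.2]; ring
    exact Prod.ext this rfl
  · intro c _
    rfl

lemma card_Sa (hs : 1 ≤ s) (hF : Fintype.card F = 2 ^ (3 * s))
    (hω : ∀ x : F, x ≠ 0 → ∃ n : ℕ, x = ω ^ n) (hω0 : ω ≠ 0) (x : ZMod (Mof s)) :
    (Sa s ω ((x.val : ℤ))).ncard = (2 ^ s - 1) * rhoD (Dfin s ω) x := by
  classical
  have hq := two_le_q hs
  have hset : Sa s ω ((x.val : ℤ)) = ↑(univ.filter fun u : F =>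
      u ≠ 0 ∧ (trFE s (u ^ (2 ^ s + 1)) = 0 ∧ trFE s (ω ^ ((x.val : ℤ)) * u) = 0)) := by
    ext u
    simp [Sa]
  rw [hset, Set.ncard_coe_finset]
  have hcc := count_classes s ω hs hF hω hω0
    (fun u => trFE s (u ^ (2 ^ s + 1)) = 0 ∧ trFE s (ω ^ ((x.val : ℤ)) * u) = 0)
    (fun n m h => by
      have e1 := trQ s hs hF (ω ^ n) (zpow_ne_zero _ hω0)
      have e2 := trQ s hs hF (ω ^ m) (zpow_ne_zero _ hω0)
      have e3 : (trFE s ((ω ^ n)⁻¹) = 0) ↔ (trFE s ((ω ^ m)⁻¹) = 0) := by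
        rw [← zpow_neg, ← zpow_neg]
        have h4 := trFE_omega_congr s ω hs hF hω hω0 (-n) (-m) 1
          (by
            have : -n - -m = -(n - m) := by ring
            rw [this]
            exact Dvd.dvd.neg_right h)
        simpa only [mul_one] using h4
      have e4 := trFE_omega_congr s ω hs hF hω hω0 n m (ω ^ ((x.val : ℤ))) h
      have e4' : (trFE s (ω ^ ((x.val : ℤ)) * ω ^ n) = 0)
          ↔ (trFE s (ω ^ ((x.val : ℤ)) * ω ^ m) = 0) := by
        rw [mul_comm (ω ^ ((x.val : ℤ))) (ω ^ n), mul_comm (ω ^ ((x.val : ℤ))) (ω ^ m)]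
        exact e4
      exact and_congr (e1.trans (e3.trans e2.symm)) e4')
  have hcc2 : (univ.filter fun u : F =>
      u ≠ 0 ∧ (trFE s (u ^ (2 ^ s + 1)) = 0 ∧ trFE s (ω ^ ((x.val : ℤ)) * u) = 0)).card
      = (2 ^ s - 1) * (univ.filter fun c : ZMod (Mof s) =>
          trFE s ((ω ^ ((c.val : ℤ))) ^ (2 ^ s + 1)) = 0
            ∧ trFE s (ω ^ ((x.val : ℤ)) * ω ^ ((c.val : ℤ))) = 0).card := by
    convert hcc using 4
  rw [hcc2]
  congr 1
  have memneg : ∀ c : ZMod (Mof s),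
      (trFE s ((ω ^ ((c.val : ℤ))) ^ (2 ^ s + 1)) = 0) ↔ (-c) ∈ Dfin s ω := by
    intro c
    rw [trQ s hs hF _ (zpow_ne_zero _ hω0), ← zpow_neg,
      mem_D_iff s ω hs hF hω hω0 (-(c.val : ℤ))]
    have hcast : (((-(c.val : ℤ)) : ℤ) : ZMod (Mof s)) = -c := by
      push_cast [ZMod.natCast_val, ZMod.cast_id] <;> ring
    rw [hcast]
  have memx : ∀ c : ZMod (Mof s),
      (trFE s (ω ^ ((x.val : ℤ)) * ω ^ ((c.val : ℤ))) = 0) ↔ (x + c) ∈ Dfin s ω := by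
    intro c
    rw [← zpow_add₀ hω0, mem_D_iff s ω hs hF hω hω0 ((x.val : ℤ) + (c.val : ℤ))]
    have hcast : ((((x.val : ℤ) + (c.val : ℤ)) : ℤ) : ZMod (Mof s)) = x + c := by
      push_cast [ZMod.natCast_val, ZMod.cast_id] <;> ring
    rw [hcast]
  unfold rhoD
  apply Finset.card_nbij' (fun c => (x + c, -c)) (fun p => -p.2)
  · intro c hc
    simp only [Finset.mem_coe, Finset.mem_filter, Finset.mem_univ, true_and] at hc
    simp only [Finset.mem_coe, Finset.mem_filter, Finset.mem_product]
    refine ⟨⟨(memx c).mp hc.2, (memneg c).mp hc.1⟩, by ring⟩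
  · intro p hp
    simp only [Finset.mem_coe, Finset.mem_filter, Finset.mem_product] at hp
    simp only [Finset.mem_coe, Finset.mem_filter, Finset.mem_univ, true_and]
    constructor
    · rw [memneg]
      rw [neg_neg]
      exact hp.1.2
    · rw [memx]
      have : x + -p.2 = p.1 := by rw [← hp.2]; ring
      rw [this]
      exact hp.1.1
  · intro c _
    simp
  · intro p hp
    simp only [Finset.mem_coe, Finset.mem_filter, Finset.mem_product] at hp
    have h1 : x + -p.2 = p.1 := by rw [← hp.2]; ring
    exact Prod.ext h1 (neg_neg p.2)

end gen

section layer3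
variable {M : ℕ} [NeZero M]

def Rx (D : Finset (ZMod M)) (x : ZMod M) : Finset (ZMod M × ZMod M) :=
  (D ×ˢ D).filter fun p => p.1 + p.2 = x

lemma rhoD_eq (D : Finset (ZMod M)) (x : ZMod M) : rhoD D x = (Rx D x).card := rfl

lemma mem_Rx {D : Finset (ZMod M)} {x : ZMod M} {p : ZMod M × ZMod M} :
    p ∈ Rx D x ↔ (p.1 ∈ D ∧ p.2 ∈ D) ∧ p.1 + p.2 = x := by
  simp [Rx, Finset.mem_filter, Finset.mem_product]

variable (q : ℕ) (D : Finset (ZMod M))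

lemma delta_zero (hcard : D.card = q + 1) :
    ((D ×ˢ D).filter fun p => p.1 - p.2 = (0 : ZMod M)).card = q + 1 := by
  rw [← hcard]
  apply Finset.card_nbij' (fun p => p.1) (fun d => (d, d))
  · intro p hp
    simp only [Finset.mem_coe, Finset.mem_filter, Finset.mem_product] at hp
    exact hp.1.1
  · intro d hd
    simp only [Finset.mem_coe, Finset.mem_filter, Finset.mem_product]
    exact ⟨⟨hd, hd⟩, sub_self d⟩
  · intro p hp
    simp only [Finset.mem_coe, Finset.mem_filter, Finset.mem_product] at hp
    have h5 : p.1 = p.2 := sub_eq_zero.mp hp.2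
    show (p.1, p.1) = p
    rw [Prod.ext_iff]
    exact ⟨rfl, h5⟩
  · intro d _
    rfl

lemma delta_val (hcard : D.card = q + 1)
    (hplanar : ∀ v : ZMod M, v ≠ 0 → ((D ×ˢ D).filter fun p => p.1 - p.2 = v).card = 1)
    (v : ZMod M) :
    ((D ×ˢ D).filter fun p => p.1 - p.2 = v).card = if v = 0 then q + 1 else 1 := by
  by_cases hv : v = 0
  · rw [if_pos hv, hv]
    exact delta_zero q D hcard
  · rw [if_neg hv]
    exact hplanar v hv

lemma swap_mem
    (hplanar : ∀ v : ZMod M, v ≠ 0 → ((D ×ˢ D).filter fun p => p.1 - p.2 = v).card = 1)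
    {x : ZMod M} {p p' : ZMod M × ZMod M} (hp : p ∈ Rx D x) (hp' : p' ∈ Rx D x)
    (hne : p ≠ p') : p' = (p.2, p.1) ∧ p.1 ≠ p.2 := by
  rw [mem_Rx] at hp hp'
  obtain ⟨⟨hd, he⟩, hsum⟩ := hp
  obtain ⟨⟨hd', he'⟩, hsum'⟩ := hp'
  have hsum2 : p.1 + p.2 = p'.1 + p'.2 := by rw [hsum, hsum']
  by_cases hv : p.1 - p'.2 = 0
  · have h1 : p.1 = p'.2 := sub_eq_zero.mp hv
    have h2 : p'.1 = p.2 := by linear_combination h1 - hsum2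
    have hps : p' = (p.2, p.1) := Prod.ext_iff.mpr ⟨h2, h1.symm⟩
    refine ⟨hps, fun hdd => hne ?_⟩
    rw [hps]
    exact Prod.ext_iff.mpr ⟨hdd, hdd.symm⟩
  · exfalso
    have m1 : (p.1, p'.2) ∈ (D ×ˢ D).filter fun r => r.1 - r.2 = p.1 - p'.2 :=
      Finset.mem_filter.mpr ⟨Finset.mem_product.mpr ⟨hd, he'⟩, rfl⟩
    have m2 : (p'.1, p.2) ∈ (D ×ˢ D).filter fun r => r.1 - r.2 = p.1 - p'.2 :=
      Finset.mem_filter.mpr ⟨Finset.mem_product.mpr ⟨hd', he⟩, by linear_combination -hsum2⟩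
    obtain ⟨u, hu⟩ := Finset.card_eq_one.mp (hplanar _ hv)
    rw [hu, Finset.mem_singleton] at m1 m2
    have heq : (p.1, p'.2) = (p'.1, p.2) := m1.trans m2.symm
    simp only [Prod.mk.injEq] at heq
    obtain ⟨h1, h2⟩ := heq
    exact hne (Prod.ext_iff.mpr ⟨h1, by linear_combination hsum2 - h1⟩)

lemma rho_cases
    (hplanar : ∀ v : ZMod M, v ≠ 0 → ((D ×ˢ D).filter fun p => p.1 - p.2 = v).card = 1)
    (x : ZMod M) :
    (Rx D x = ∅ ∧ ¬∃ d ∈ D, x = d + d) ∨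
    (∃ d, d ∈ D ∧ x = d + d ∧ Rx D x = {(d, d)}) ∨
    (∃ d e, d ∈ D ∧ e ∈ D ∧ d ≠ e ∧ ¬(∃ c ∈ D, x = c + c) ∧ Rx D x = {(d, e), (e, d)}) := by
  rcases (Rx D x).eq_empty_or_nonempty with he | ⟨p, hp⟩
  · left
    refine ⟨he, ?_⟩
    rintro ⟨d, hd, rfl⟩
    have hmem : (d, d) ∈ Rx D (d + d) := mem_Rx.mpr ⟨⟨hd, hd⟩, rfl⟩
    rw [he] at hmem
    exact absurd hmem (Finset.notMem_empty _)
  · have hpm := mem_Rx.mp hp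
    by_cases hde : p.1 = p.2
    · right; left
      refine ⟨p.1, hpm.1.1, by rw [← hpm.2, ← hde], ?_⟩
      have hpp : p = (p.1, p.1) := Prod.ext_iff.mpr ⟨rfl, hde.symm⟩
      rw [← hpp]
      apply Finset.eq_singleton_iff_unique_mem.mpr
      refine ⟨hp, fun r hr => ?_⟩
      by_contra hrp
      have := swap_mem D hplanar hp hr (fun h => hrp h.symm)
      exact this.2 hde
    · right; right
      refine ⟨p.1, p.2, hpm.1.1, hpm.1.2, hde, ?_, ?_⟩
      · rintro ⟨c, hc, hxc⟩
        have hcc : (c, c) ∈ Rx D x := mem_Rx.mpr ⟨⟨hc, hc⟩, hxc.symm⟩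
        have hnecc : p ≠ (c, c) := by
          intro h
          exact hde (by rw [h])
        have hsw := (swap_mem D hplanar hp hcc hnecc).1
        simp only [Prod.mk.injEq] at hsw
        exact hde (hsw.2.symm.trans hsw.1)
      · ext r
        constructor
        · intro hr
          by_cases hrp : p = r
          · rw [← hrp]
            simp
          · have := (swap_mem D hplanar hp hr hrp).1
            rw [this]
            simp
        · intro hr
          simp only [Finset.mem_insert, Finset.mem_singleton] at hr
          rcases hr with rfl | rfl
          · exact hp
          · exact mem_Rx.mpr ⟨⟨hpm.1.2, hpm.1.1⟩, by rw [← hpm.2]; ring⟩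

lemma rho_val
    (hplanar : ∀ v : ZMod M, v ≠ 0 → ((D ×ˢ D).filter fun p => p.1 - p.2 = v).card = 1)
    (x : ZMod M) : rhoD D x = 0 ∨ rhoD D x = 1 ∨ rhoD D x = 2 := by
  rcases rho_cases D hplanar x with ⟨he, -⟩ | ⟨d, -, -, he⟩ | ⟨d, e, -, -, hde, -, he⟩
  · left; rw [rhoD_eq, he]; rfl
  · right; left; rw [rhoD_eq, he]; rfl
  · right; right
    rw [rhoD_eq, he, Finset.card_insert_of_notMem, Finset.card_singleton]
    simp only [Finset.mem_singleton, Prod.mk.injEq, not_and]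
    intro h
    exact fun _ => hde h

lemma rho_one_iff_dbl
    (hplanar : ∀ v : ZMod M, v ≠ 0 → ((D ×ˢ D).filter fun p => p.1 - p.2 = v).card = 1)
    (x : ZMod M) : rhoD D x = 1 ↔ ∃ d ∈ D, x = d + d := by
  rcases rho_cases D hplanar x with ⟨he, hnd⟩ | ⟨d, hd, hxd, he⟩ | ⟨d, e, -, -, hde, hnd, he⟩
  · rw [rhoD_eq, he]
    simpa using hnd
  · rw [rhoD_eq, he]
    simp only [Finset.card_singleton, true_iff]
    exact ⟨d, hd, hxd⟩
  · rw [rhoD_eq, he, Finset.card_insert_of_notMem, Finset.card_singleton]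
    · constructor
      · intro h; omega
      · intro h; exact absurd h hnd
    · simp only [Finset.mem_singleton, Prod.mk.injEq, not_and]
      intro h
      exact fun _ => hde h

lemma rho_one_iff_mem (hplanar : ∀ v : ZMod M, v ≠ 0 →
      ((D ×ˢ D).filter fun p => p.1 - p.2 = v).card = 1)
    (hdd : ∀ d ∈ D, d + d ∈ D) (h2 : IsUnit (2 : ZMod M)) (a : ZMod M) :
    rhoD D a = 1 ↔ a ∈ D := by
  rw [rho_one_iff_dbl D hplanar]
  have hinj : Set.InjOn (fun d : ZMod M => d + d) D := by
    intro u _ v _ huv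
    simp only at huv
    have h4 : (2 : ZMod M) * u = 2 * v := by rw [two_mul, two_mul]; exact huv
    exact h2.mul_left_cancel h4
  have himg : D.image (fun d => d + d) = D := by
    apply Finset.eq_of_subset_of_card_le
    · intro y hy
      simp only [Finset.mem_image] at hy
      obtain ⟨d, hd, rfl⟩ := hy
      exact hdd d hd
    · rw [Finset.card_image_of_injOn hinj]
  constructor
  · rintro ⟨d, hd, rfl⟩
    rw [← himg]
    exact Finset.mem_image.mpr ⟨d, hd, rfl⟩
  · intro ha
    rw [← himg] at ha
    obtain ⟨d, hd, hda⟩ := Finset.mem_image.mp ha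
    exact ⟨d, hd, hda.symm⟩

lemma delta_alt (hcard : D.card = q + 1)
    (hplanar : ∀ v : ZMod M, v ≠ 0 → ((D ×ˢ D).filter fun p => p.1 - p.2 = v).card = 1)
    (a : ZMod M) :
    (D.filter fun e => a + e ∈ D).card = if a = 0 then q + 1 else 1 := by
  rw [← delta_val q D hcard hplanar a]
  apply Finset.card_nbij (fun e => (a + e, e))
  · intro e he
    simp only [Finset.mem_coe, Finset.mem_filter] at he
    simp only [Finset.mem_coe, Finset.mem_filter, Finset.mem_product]
    exact ⟨⟨he.2, he.1⟩, by ring⟩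
  · intro e _ e' _ h
    simpa using congrArg Prod.snd h
  · intro p hp
    simp only [Finset.coe_filter, Set.mem_setOf_eq, Finset.mem_product,
      Finset.mem_filter] at hp
    obtain ⟨⟨h1, h2⟩, h3⟩ := hp
    refine ⟨p.2, ?_, ?_⟩
    · simp only [Finset.coe_filter, Set.mem_setOf_eq, Finset.mem_filter]
      have : a + p.2 = p.1 := by linear_combination -h3
      exact ⟨h2, by rw [this]; exact h1⟩
    · have : a + p.2 = p.1 := by linear_combination -h3
      exact Prod.ext_iff.mpr ⟨this, rfl⟩

lemma card_filter_congr' {α : Type*} {p q : α → Prop} {ip : DecidablePred p}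
    {iq : DecidablePred q} (s : Finset α) (h : ∀ a, p a ↔ q a) :
    (@Finset.filter α p ip s).card = (@Finset.filter α q iq s).card := by
  congr 1
  exact @Finset.filter_congr _ _ _ ip iq s (fun a _ => h a)

lemma sum_rho (hcard : D.card = q + 1) :
    ∑ x : ZMod M, rhoD D x = (q + 1) * (q + 1) := by
  have h := Finset.card_eq_sum_card_fiberwise
    (f := fun p : ZMod M × ZMod M => p.1 + p.2) (s := D ×ˢ D) (t := univ)
    (fun p _ => Finset.mem_univ _)
  rw [Finset.card_product, hcard] at h
  calc ∑ x : ZMod M, rhoD D x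
      = ∑ b : ZMod M, ((D ×ˢ D).filter fun a => (fun p : ZMod M × ZMod M => p.1 + p.2) a = b).card :=
        Finset.sum_congr rfl (fun x _ => card_filter_congr' _ (fun p => Iff.rfl))
    _ = (q + 1) * (q + 1) := h.symm

lemma Alem (hcard : D.card = q + 1)
    (hplanar : ∀ v : ZMod M, v ≠ 0 → ((D ×ˢ D).filter fun p => p.1 - p.2 = v).card = 1)
    (a : ZMod M) :
    ∑ j : ZMod M, rhoD D j * rhoD D (a + j)
      = (q + 1) * (q + 1) + q * (if a = 0 then q + 1 else 1) := by
  have hrho : ∀ j : ZMod M, rhoD D j = ∑ p ∈ D ×ˢ D, if p.1 + p.2 = j then 1 else 0 :=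
    fun j => Finset.card_filter _ _
  have step1 : ∑ j : ZMod M, rhoD D j * rhoD D (a + j)
      = ∑ p ∈ D ×ˢ D, rhoD D (a + (p.1 + p.2)) := by
    calc ∑ j : ZMod M, rhoD D j * rhoD D (a + j)
        = ∑ j : ZMod M, ∑ p ∈ D ×ˢ D,
            (if p.1 + p.2 = j then 1 else 0) * rhoD D (a + j) := by
          refine Finset.sum_congr rfl fun j _ => ?_
          rw [← Finset.sum_mul, ← hrho]
      _ = ∑ p ∈ D ×ˢ D, ∑ j : ZMod M,
            (if p.1 + p.2 = j then rhoD D (a + j) else 0) := by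
          rw [Finset.sum_comm]
          exact Finset.sum_congr rfl fun p _ => Finset.sum_congr rfl fun j _ => by
            rw [ite_mul, one_mul, zero_mul]
      _ = ∑ p ∈ D ×ˢ D, rhoD D (a + (p.1 + p.2)) := by
          refine Finset.sum_congr rfl fun p _ => ?_
          rw [Finset.sum_ite_eq]
          simp
  have hiff : ∀ d e d' e' : ZMod M, (d' + e' = a + (d + e)) ↔ (d' - d = a + e - e') := by
    intro d e d' e'
    constructor <;> intro h <;> linear_combination h
  have hdelta : ∀ w : ZMod M,
      (∑ d' ∈ D, ∑ d ∈ D, if d' - d = w then 1 else 0)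
        = ((D ×ˢ D).filter fun p => p.1 - p.2 = w).card := by
    intro w
    rw [Finset.card_filter, Finset.sum_product]
  have step2 : ∑ p ∈ D ×ˢ D, rhoD D (a + (p.1 + p.2))
      = ∑ e ∈ D, ∑ e' ∈ D, ((D ×ˢ D).filter fun p => p.1 - p.2 = a + e - e').card := by
    calc ∑ p ∈ D ×ˢ D, rhoD D (a + (p.1 + p.2))
        = ∑ d ∈ D, ∑ e ∈ D, ∑ d' ∈ D, ∑ e' ∈ D,
            if d' - d = a + e - e' then 1 else 0 := by
          rw [Finset.sum_product]
          refine Finset.sum_congr rfl fun d _ => Finset.sum_congr rfl fun e _ => ?_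
          rw [hrho, Finset.sum_product]
          simp only [hiff]
      _ = ∑ d ∈ D, ∑ e ∈ D, ∑ e' ∈ D, ∑ d' ∈ D,
            if d' - d = a + e - e' then 1 else 0 := by
          refine Finset.sum_congr rfl fun d _ => Finset.sum_congr rfl fun e _ => ?_
          rw [Finset.sum_comm]
      _ = ∑ e ∈ D, ∑ d ∈ D, ∑ e' ∈ D, ∑ d' ∈ D,
            if d' - d = a + e - e' then 1 else 0 := by
          rw [Finset.sum_comm]
      _ = ∑ e ∈ D, ∑ e' ∈ D, ∑ d ∈ D, ∑ d' ∈ D,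
            if d' - d = a + e - e' then 1 else 0 := by
          refine Finset.sum_congr rfl fun e _ => ?_
          rw [Finset.sum_comm]
      _ = ∑ e ∈ D, ∑ e' ∈ D, ∑ d' ∈ D, ∑ d ∈ D,
            if d' - d = a + e - e' then 1 else 0 := by
          refine Finset.sum_congr rfl fun e _ => Finset.sum_congr rfl fun e' _ => ?_
          rw [Finset.sum_comm]
      _ = _ := by
          refine Finset.sum_congr rfl fun e _ => Finset.sum_congr rfl fun e' _ => ?_
          rw [hdelta]
  have step3 : ∑ e ∈ D, ∑ e' ∈ D,
      ((D ×ˢ D).filter fun p => p.1 - p.2 = a + e - e').card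
      = (q + 1) * (q + 1) + q * (if a = 0 then q + 1 else 1) := by
    have hval : ∀ e e' : ZMod M,
        ((D ×ˢ D).filter fun p => p.1 - p.2 = a + e - e').card
          = 1 + (if a + e = e' then q else 0) := by
      intro e e'
      rw [delta_val q D hcard hplanar]
      simp only [sub_eq_zero]
      split_ifs <;> omega
    calc ∑ e ∈ D, ∑ e' ∈ D, ((D ×ˢ D).filter fun p => p.1 - p.2 = a + e - e').card
        = ∑ e ∈ D, ∑ e' ∈ D, (1 + (if a + e = e' then q else 0)) := by
          exact Finset.sum_congr rfl fun e _ => Finset.sum_congr rfl fun e' _ => hval e e'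
      _ = ∑ e ∈ D, ((q + 1) + (if a + e ∈ D then q else 0)) := by
          refine Finset.sum_congr rfl fun e _ => ?_
          rw [Finset.sum_add_distrib, Finset.sum_const, Finset.sum_ite_eq, hcard,
            smul_eq_mul, mul_one]
      _ = (q + 1) * (q + 1) + ∑ e ∈ D, (if a + e ∈ D then q else 0) := by
          rw [Finset.sum_add_distrib, Finset.sum_const, hcard, smul_eq_mul]
      _ = (q + 1) * (q + 1) + q * (if a = 0 then q + 1 else 1) := by
          congr 1
          rw [← Finset.sum_filter, Finset.sum_const, smul_eq_mul,
            delta_alt q D hcard hplanar a, mul_comm]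
  rw [step1, step2, step3]

lemma Blem (hcard : D.card = q + 1)
    (hplanar : ∀ v : ZMod M, v ≠ 0 → ((D ×ˢ D).filter fun p => p.1 - p.2 = v).card = 1)
    (a : ZMod M) :
    ∑ c ∈ D, rhoD D (a + c) = (q + 1) + q * (if a ∈ D then 1 else 0) := by
  have hrho : ∀ j : ZMod M, rhoD D j = ∑ p ∈ D ×ˢ D, if p.1 + p.2 = j then 1 else 0 :=
    fun j => Finset.card_filter _ _
  have hiff : ∀ c d' e' : ZMod M, (d' + e' = a + c) ↔ (d' - c = a - e') := by
    intro c d' e'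
    constructor <;> intro h <;> linear_combination h
  have hdelta : ∀ w : ZMod M,
      (∑ d' ∈ D, ∑ c ∈ D, if d' - c = w then 1 else 0)
        = ((D ×ˢ D).filter fun p => p.1 - p.2 = w).card := by
    intro w
    rw [Finset.card_filter, Finset.sum_product]
  calc ∑ c ∈ D, rhoD D (a + c)
      = ∑ c ∈ D, ∑ d' ∈ D, ∑ e' ∈ D, if d' - c = a - e' then 1 else 0 := by
        refine Finset.sum_congr rfl fun c _ => ?_
        rw [hrho, Finset.sum_product]
        simp only [hiff]
    _ = ∑ c ∈ D, ∑ e' ∈ D, ∑ d' ∈ D, if d' - c = a - e' then 1 else 0 := by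
        refine Finset.sum_congr rfl fun c _ => ?_
        rw [Finset.sum_comm]
    _ = ∑ e' ∈ D, ∑ c ∈ D, ∑ d' ∈ D, if d' - c = a - e' then 1 else 0 := by
        rw [Finset.sum_comm]
    _ = ∑ e' ∈ D, ∑ d' ∈ D, ∑ c ∈ D, if d' - c = a - e' then 1 else 0 := by
        refine Finset.sum_congr rfl fun e' _ => ?_
        rw [Finset.sum_comm]
    _ = ∑ e' ∈ D, ((D ×ˢ D).filter fun p => p.1 - p.2 = a - e').card := by
        refine Finset.sum_congr rfl fun e' _ => ?_
        rw [hdelta]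
    _ = ∑ e' ∈ D, (1 + if a = e' then q else 0) := by
        refine Finset.sum_congr rfl fun e' _ => ?_
        rw [delta_val q D hcard hplanar]
        simp only [sub_eq_zero]
        split_ifs <;> omega
    _ = (q + 1) + q * (if a ∈ D then 1 else 0) := by
        rw [Finset.sum_add_distrib, Finset.sum_const, Finset.sum_ite_eq, hcard,
          smul_eq_mul, mul_one]
        split_ifs <;> omega

lemma main3 (hq : 2 ≤ q) (hcard : D.card = q + 1)
    (hplanar : ∀ v : ZMod M, v ≠ 0 → ((D ×ˢ D).filter fun p => p.1 - p.2 = v).card = 1)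
    (hdd : ∀ d ∈ D, d + d ∈ D) (h2 : IsUnit (2 : ZMod M)) (a : ZMod M) :
    2 * (∑ j : ZMod M, Ind (rhoD D j = 2) *
        (Ind (rhoD D (a + j) = 2) - Ind (rhoD D (a + j) = 0)))
      = (q : ℤ) ^ 2 * Ind (a = 0) + q - q * Ind (a ∈ D) := by
  simp only [Ind_eq]
  have i1 : ∀ y : ZMod M, ((if rhoD D y = 2 then (1 : ℤ) else 0)
      - (if rhoD D y = 0 then 1 else 0)) = (rhoD D y : ℤ) - 1 := by
    intro y
    rcases rho_val D hplanar y with h | h | h <;> rw [h] <;> norm_num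
  have i2 : ∀ y : ZMod M, 2 * (if rhoD D y = 2 then (1 : ℤ) else 0)
      = (rhoD D y : ℤ) - (if y ∈ D then 1 else 0) := by
    intro y
    have hmem := rho_one_iff_mem D hplanar hdd h2 y
    rcases rho_val D hplanar y with h | h | h <;> rw [h] <;> rw [h] at hmem <;>
      simp only [hmem.symm] <;> norm_num
  have key : ∀ j : ZMod M, 2 * ((if rhoD D j = 2 then (1 : ℤ) else 0) *
      ((if rhoD D (a + j) = 2 then (1 : ℤ) else 0) - (if rhoD D (a + j) = 0 then 1 else 0)))
      = ((rhoD D j : ℤ) * (rhoD D (a + j) : ℤ))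
        - (if j ∈ D then (1 : ℤ) else 0) * (rhoD D (a + j) : ℤ)
        - (rhoD D j : ℤ) + (if j ∈ D then (1 : ℤ) else 0) := by
    intro j
    rw [i1 (a + j), show 2 * ((if rhoD D j = 2 then (1 : ℤ) else 0) * ((rhoD D (a + j) : ℤ) - 1))
        = (2 * (if rhoD D j = 2 then (1 : ℤ) else 0)) * ((rhoD D (a + j) : ℤ) - 1) from by ring,
      i2 j]
    ring
  rw [Finset.mul_sum]
  rw [Finset.sum_congr rfl fun j _ => key j]
  have hsplit : ∑ j : ZMod M, (((rhoD D j : ℤ) * (rhoD D (a + j) : ℤ))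
        - (if j ∈ D then (1 : ℤ) else 0) * (rhoD D (a + j) : ℤ)
        - (rhoD D j : ℤ) + (if j ∈ D then (1 : ℤ) else 0))
      = (∑ j : ZMod M, (rhoD D j : ℤ) * (rhoD D (a + j) : ℤ))
        - (∑ j : ZMod M, (if j ∈ D then (1 : ℤ) else 0) * (rhoD D (a + j) : ℤ))
        - (∑ j : ZMod M, (rhoD D j : ℤ))
        + (∑ j : ZMod M, (if j ∈ D then (1 : ℤ) else 0)) := by
    rw [Finset.sum_add_distrib, Finset.sum_sub_distrib, Finset.sum_sub_distrib]
  rw [hsplit]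
  have e1 : (∑ j : ZMod M, (rhoD D j : ℤ) * (rhoD D (a + j) : ℤ))
      = ((q : ℤ) + 1) * ((q : ℤ) + 1) + (q : ℤ) * (if a = 0 then (q : ℤ) + 1 else 1) := by
    have := Alem q D hcard hplanar a
    have hcast : (∑ j : ZMod M, (rhoD D j : ℤ) * (rhoD D (a + j) : ℤ))
        = ((∑ j : ZMod M, rhoD D j * rhoD D (a + j) : ℕ) : ℤ) := by
      push_cast
      rfl
    rw [hcast, this]
    push_cast
    split_ifs <;> ring
  have e2 : (∑ j : ZMod M, (if j ∈ D then (1 : ℤ) else 0) * (rhoD D (a + j) : ℤ))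
      = ((q : ℤ) + 1) + (q : ℤ) * (if a ∈ D then 1 else 0) := by
    have hB := Blem q D hcard hplanar a
    have h1 : (∑ j : ZMod M, (if j ∈ D then (1 : ℤ) else 0) * (rhoD D (a + j) : ℤ))
        = ∑ j ∈ univ.filter (fun j : ZMod M => j ∈ D), (rhoD D (a + j) : ℤ) := by
      rw [Finset.sum_filter]
      exact Finset.sum_congr rfl fun j _ => by rw [ite_mul, one_mul, zero_mul]
    have h2' : univ.filter (fun j : ZMod M => j ∈ D) = D := by
      ext j; simp
    rw [h1, h2']
    have hcast : (∑ j ∈ D, (rhoD D (a + j) : ℤ)) = ((∑ c ∈ D, rhoD D (a + c) : ℕ) : ℤ) := by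
      push_cast
      rfl
    rw [hcast, hB]
    push_cast
    split_ifs <;> ring
  have e3 : (∑ j : ZMod M, (rhoD D j : ℤ)) = ((q : ℤ) + 1) * ((q : ℤ) + 1) := by
    have hs := sum_rho q D hcard
    have hcast : (∑ j : ZMod M, (rhoD D j : ℤ)) = ((∑ j : ZMod M, rhoD D j : ℕ) : ℤ) := by
      push_cast
      rfl
    rw [hcast, hs]
    push_cast
    ring
  have e4 : (∑ j : ZMod M, (if j ∈ D then (1 : ℤ) else 0)) = (q : ℤ) + 1 := by
    have h1 : (∑ j : ZMod M, (if j ∈ D then (1 : ℤ) else 0))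
        = ∑ j ∈ univ.filter (fun j : ZMod M => j ∈ D), (1 : ℤ) := by
      rw [Finset.sum_filter]
    have h2' : univ.filter (fun j : ZMod M => j ∈ D) = D := by
      ext j; simp
    rw [h1, h2', Finset.sum_const, hcard, nsmul_eq_mul, mul_one]
    push_cast
    ring
  rw [e1, e2, e3, e4]
  split_ifs <;> ring

end layer3
end St8



open Finset in
theorem statement8 (s : ℕ) (hs : 1 ≤ s) (F : Type*) [Field F] [Fintype F]
    (hF : Fintype.card F = 2 ^ (3 * s)) (ω : F)
    (hω : ∀ x : F, x ≠ 0 → ∃ n : ℕ, x = ω ^ n) :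
    ∀ a : ZMod (Mof s),
      (({p : ZMod (Mof s) × ZMod (Mof s) | p.1 ∈ T2 s ω ∧ p.2 ∈ T2 s ω ∧ p.1 - p.2 = a}.ncard : ℤ) -
       ({p : ZMod (Mof s) × ZMod (Mof s) | p.1 ∈ T3 s ω ∧ p.2 ∈ T2 s ω ∧ p.1 - p.2 = a}.ncard : ℤ)) =
        2 ^ (2 * s - 1) * Ind (a = 0) + 2 ^ (s - 1) * (1 - Ind (a ∈ T1 s ω)) := by
  classical
  intro a
  haveI hchar : CharP F 2 := St8.charF s hF hs
  have hω0 : ω ≠ 0 := St8.omega_ne s ω hs hF hω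
  have hq : 2 ≤ 2 ^ s := St8.two_le_q hs
  have hq1 : (0 : ℕ) < 2 ^ s - 1 := by omega
  set D := St8.Dfin s ω with hD
  have hcard : D.card = 2 ^ s + 1 := St8.card_D s ω hs hF hω hω0
  have hplanar := St8.planarD s ω hs hF hω hω0
  have hdd : ∀ d ∈ D, d + d ∈ D := fun d hd => St8.doubleD s ω hs hF hω hω0 d hd
  have hodd := St8.M_odd hs
  have h2 : IsUnit (2 : ZMod (Mof s)) := by
    have hcop : Nat.Coprime 2 (Mof s) :=
      (Nat.Prime.coprime_iff_not_dvd Nat.prime_two).mpr (by omega)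
    have := (ZMod.isUnit_iff_coprime 2 (Mof s)).mpr hcop
    exact_mod_cast this
  have hSa := St8.card_Sa s ω hs hF hω hω0
  -- characterizations of the T-sets
  have hT1 : ∀ x : ZMod (Mof s), x ∈ T1 s ω ↔ St8.rhoD D x = 1 := by
    intro x
    have hmem : x ∈ T1 s ω ↔ (Sa s ω ((x.val : ℤ))).ncard = 2 ^ s - 1 := Iff.rfl
    rw [hmem, hSa x]
    constructor
    · intro h
      refine Nat.eq_of_mul_eq_mul_left hq1 ?_
      rw [mul_one]
      exact h
    · intro h
      rw [h, mul_one]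
  have hT2 : ∀ x : ZMod (Mof s), x ∈ T2 s ω ↔ St8.rhoD D x = 2 := by
    intro x
    have hmem : x ∈ T2 s ω ↔ (Sa s ω ((x.val : ℤ))).ncard = 2 * (2 ^ s - 1) := Iff.rfl
    rw [hmem, hSa x]
    constructor
    · intro h
      refine Nat.eq_of_mul_eq_mul_left hq1 ?_
      rw [h, mul_comm]
    · intro h
      rw [h, mul_comm]
  have hT3 : ∀ x : ZMod (Mof s), x ∈ T3 s ω ↔ St8.rhoD D x = 0 := by
    intro x
    have hmem : x ∈ T3 s ω ↔ (Sa s ω ((x.val : ℤ))).ncard = 0 := Iff.rfl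
    rw [hmem, hSa x]
    constructor
    · intro h
      rcases Nat.mul_eq_zero.mp h with h' | h'
      · omega
      · exact h'
    · intro h
      rw [h, mul_zero]
  -- sets of pairs as finsets
  have hsetN2 : {p : ZMod (Mof s) × ZMod (Mof s) | p.1 ∈ T2 s ω ∧ p.2 ∈ T2 s ω ∧ p.1 - p.2 = a}
      = ↑(univ.filter fun p : ZMod (Mof s) × ZMod (Mof s) =>
          St8.rhoD D p.1 = 2 ∧ St8.rhoD D p.2 = 2 ∧ p.1 - p.2 = a) := by
    ext p
    simp only [Set.mem_setOf_eq, Finset.coe_filter, Finset.mem_univ, true_and]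
    exact and_congr (hT2 p.1) (and_congr (hT2 p.2) Iff.rfl)
  have hsetN3 : {p : ZMod (Mof s) × ZMod (Mof s) | p.1 ∈ T3 s ω ∧ p.2 ∈ T2 s ω ∧ p.1 - p.2 = a}
      = ↑(univ.filter fun p : ZMod (Mof s) × ZMod (Mof s) =>
          St8.rhoD D p.1 = 0 ∧ St8.rhoD D p.2 = 2 ∧ p.1 - p.2 = a) := by
    ext p
    simp only [Set.mem_setOf_eq, Finset.coe_filter, Finset.mem_univ, true_and]
    exact and_congr (hT3 p.1) (and_congr (hT2 p.2) Iff.rfl)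
  -- pair counts as single-variable counts
  have hpairs : ∀ (k : ℕ),
      (univ.filter fun p : ZMod (Mof s) × ZMod (Mof s) =>
        St8.rhoD D p.1 = k ∧ St8.rhoD D p.2 = 2 ∧ p.1 - p.2 = a).card
      = (univ.filter fun j : ZMod (Mof s) =>
          St8.rhoD D (a + j) = k ∧ St8.rhoD D j = 2).card := by
    intro k
    apply Finset.card_nbij' (fun p => p.2) (fun j => (a + j, j))
    · intro p hp
      simp only [Finset.mem_coe, Finset.mem_filter, Finset.mem_univ, true_and] at hp ⊢
      obtain ⟨h1, h2', h3⟩ := hp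
      have hap : a + p.2 = p.1 := by linear_combination -h3
      rw [hap]
      exact ⟨h1, h2'⟩
    · intro j hj
      simp only [Finset.mem_coe, Finset.mem_filter, Finset.mem_univ, true_and] at hj ⊢
      exact ⟨hj.1, hj.2, by ring⟩
    · intro p hp
      simp only [Finset.mem_coe, Finset.mem_filter, Finset.mem_univ, true_and] at hp
      have hap : a + p.2 = p.1 := by linear_combination -hp.2.2
      exact Prod.ext_iff.mpr ⟨hap, rfl⟩
    · intro j _
      rfl
  -- counts as integer sums
  have hconv : ∀ (k : ℕ),
      (((univ.filter fun j : ZMod (Mof s) =>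
          St8.rhoD D (a + j) = k ∧ St8.rhoD D j = 2).card : ℕ) : ℤ)
        = ∑ j : ZMod (Mof s), Ind (St8.rhoD D j = 2)
            * Ind (St8.rhoD D (a + j) = k) := by
    intro k
    simp only [Finset.card_filter]
    push_cast
    refine Finset.sum_congr rfl fun j _ => ?_
    by_cases hA : St8.rhoD D (a + j) = k <;> by_cases hB : St8.rhoD D j = 2 <;>
      simp [hA, hB, St8.Ind_pos, St8.Ind_neg]
  -- main identity
  have hmain := St8.main3 (2 ^ s) D hq hcard hplanar hdd h2 a
  have hdist : (∑ j : ZMod (Mof s), Ind (St8.rhoD D j = 2) *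
        (Ind (St8.rhoD D (a + j) = 2) - Ind (St8.rhoD D (a + j) = 0)))
      = (∑ j : ZMod (Mof s), Ind (St8.rhoD D j = 2) * Ind (St8.rhoD D (a + j) = 2))
        - (∑ j : ZMod (Mof s), Ind (St8.rhoD D j = 2) * Ind (St8.rhoD D (a + j) = 0)) := by
    rw [← Finset.sum_sub_distrib]
    exact Finset.sum_congr rfl fun j _ => by ring
  rw [hdist] at hmain
  -- put the goal in the same form
  rw [hsetN2, hsetN3, Set.ncard_coe_finset, Set.ncard_coe_finset, hpairs 2, hpairs 0]
  have hiff : (a ∈ T1 s ω) ↔ a ∈ D :=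
    (hT1 a).trans (St8.rho_one_iff_mem D hplanar hdd h2 a)
  rw [show Ind (a ∈ T1 s ω) = Ind (a ∈ D) from congrArg Ind (propext hiff)]
  rw [hconv 2, hconv 0]
  -- finish with the main identity, multiplied by 2
  apply mul_left_cancel₀ (two_ne_zero' ℤ)
  rw [hmain]
  have hp1 : ((2 : ℤ) ^ s) ^ 2 = 2 * 2 ^ (2 * s - 1) := by
    rw [← pow_mul, show s * 2 = (2 * s - 1) + 1 from by omega, pow_succ]
    ring
  have hp2 : (2 : ℤ) ^ s = 2 * 2 ^ (s - 1) := by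
    conv_lhs => rw [show s = (s - 1) + 1 from by omega]
    rw [pow_succ]
    ring
  by_cases h0 : a = 0
  · rw [St8.Ind_pos h0]
    by_cases hd : a ∈ D
    · rw [St8.Ind_pos hd]; push_cast; rw [hp1, hp2]; ring
    · rw [St8.Ind_neg hd]; push_cast; rw [hp1, hp2]; ring
  · rw [St8.Ind_neg h0]
    by_cases hd : a ∈ D
    · rw [St8.Ind_pos hd]; push_cast; rw [hp1, hp2]; ring
    · rw [St8.Ind_neg hd]; push_cast; rw [hp1, hp2]; ring
end
end
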